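/- arXiv:2210.02700 — 16 statements merged into one kernel-verified Lean document; each statement's English description precedes it below -/
import Mathlib

section
/- Let M be a real p×q matrix, M⁺ a q×p generalized inverse of M (i.e. M M⁺ M = M and M⁺ M M⁺ = M⁺), and N a real r×q matrix. Then N (I_q − M⁺ M) = 0 if and only if the rank of the (r+p)×q stacked matrix [N; M] (rows of N on top of rows of M) equals the rank of M. -/
/-- For a real `p × q` matrix `M` with generalized inverse `M⁺`
(`M * M⁺ * M = M`, `M⁺ * M * M⁺ = M⁺`) and a real `r × q` matrix `N`,
`N (I_q − M⁺ M) = 0` iff `rank [N; M] = rank M`. -/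
theorem stmt0 {p q r : ℕ} (M : Matrix (Fin p) (Fin q) ℝ) (Mp : Matrix (Fin q) (Fin p) ℝ)
    (hMp1 : M * Mp * M = M) (hMp2 : Mp * M * Mp = Mp)
    (N : Matrix (Fin r) (Fin q) ℝ) :
    N * ((1 : Matrix (Fin q) (Fin q) ℝ) - Mp * M) = 0 ↔
      (Matrix.fromRows N M).rank = M.rank := by
  constructor
  · intro h
    have hN : N * Mp * M = N := by
      rw [Matrix.mul_sub, Matrix.mul_one, sub_eq_zero] at h
      rw [Matrix.mul_assoc]; exact h.symm
    refine le_antisymm ?_ ?_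
    · have hfr : Matrix.fromRows N M = Matrix.fromRows (N * Mp) 1 * M := by
        rw [Matrix.fromRows_mul, hN, Matrix.one_mul]
      rw [hfr]
      exact Matrix.rank_mul_le_right _ M
    · have hM : M = Matrix.fromCols (0 : Matrix (Fin p) (Fin r) ℝ)
          (1 : Matrix (Fin p) (Fin p) ℝ) * Matrix.fromRows N M := by
        rw [Matrix.fromCols_mul_fromRows, Matrix.zero_mul, Matrix.one_mul, zero_add]
      conv_lhs => rw [hM]
      exact Matrix.rank_mul_le_right _ _
  · intro h
    -- Work with transposes: column spaces
    set A : Matrix (Fin q) (Fin r ⊕ Fin p) ℝ := Matrix.fromCols N.transpose M.transpose with hA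
    have hAT : (Matrix.fromRows N M).transpose = A := Matrix.transpose_fromRows N M
    have hle : LinearMap.range M.transpose.mulVecLin ≤ LinearMap.range A.mulVecLin := by
      rintro x ⟨v, rfl⟩
      exact ⟨Sum.elim 0 v, by simp [hA, Matrix.fromCols_mulVec_sumElim, Matrix.mulVec_transpose]⟩
    have hrank : Matrix.rank A = Matrix.rank M.transpose := by
      rw [← hAT, Matrix.rank_transpose, Matrix.rank_transpose, h]
    have heq : LinearMap.range M.transpose.mulVecLin = LinearMap.range A.mulVecLin :=
      Submodule.eq_of_le_of_finrank_eq hle hrank.symm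
    ext i k
    -- row i of N is in the row space of M
    have hmem : (fun k => N i k) ∈ LinearMap.range M.transpose.mulVecLin := by
      rw [heq]
      refine ⟨Sum.elim (Pi.single i 1) 0, ?_⟩
      simp only [Matrix.mulVecLin_apply, hA, Matrix.fromCols_mulVec_sumElim,
        Matrix.mulVec_zero, add_zero, Matrix.mulVec_single]
      ext k
      simp [Matrix.transpose_apply]
    obtain ⟨v, hv⟩ := hmem
    have hrow : ∀ l, N i l = (Matrix.vecMul v M) l := by
      intro l
      rw [← Matrix.mulVec_transpose]
      exact congrFun hv.symm l
    have hM0 : M * (1 - Mp * M) = 0 := by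
      rw [Matrix.mul_sub, Matrix.mul_one, ← Matrix.mul_assoc, hMp1, sub_self]
    have key : (N * ((1 : Matrix (Fin q) (Fin q) ℝ) - Mp * M)) i k
        = (Matrix.vecMul (Matrix.vecMul v M) ((1 : Matrix (Fin q) (Fin q) ℝ) - Mp * M)) k := by
      rw [Matrix.mul_apply, Matrix.vecMul, dotProduct]
      exact Finset.sum_congr rfl fun l _ => by rw [hrow l]
    rw [key, Matrix.vecMul_vecMul, hM0, Matrix.vecMul_zero, Matrix.zero_apply]
    rfl
end

section
/- Let M be a real p×q matrix, M⁺ a q×p generalized inverse of M (i.e. M M⁺ M = M and M⁺ M M⁺ = M⁺), and N a real p×r matrix. Then (I_p − M M⁺) N = 0 if and only if the rank of the p×(r+q) augmented matrix [N M] (columns of N followed by columns of M) equals the rank of M. -/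
open scoped Matrix

/-- For a real `p × q` matrix `M` with generalized inverse `M⁺`
(`M * M⁺ * M = M`, `M⁺ * M * M⁺ = M⁺`) and a real `p × r` matrix `N`,
`(I_p − M M⁺) N = 0` iff `rank [N M] = rank M`. -/
theorem stmt1 {p q r : ℕ} (M : Matrix (Fin p) (Fin q) ℝ) (Mp : Matrix (Fin q) (Fin p) ℝ)
    (hMp1 : M * Mp * M = M) (hMp2 : Mp * M * Mp = Mp)
    (N : Matrix (Fin p) (Fin r) ℝ) :
    ((1 : Matrix (Fin p) (Fin p) ℝ) - M * Mp) * N = 0 ↔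
      (Matrix.fromCols N M).rank = M.rank := by
  constructor
  · intro h
    have hN : N = M * (Mp * N) := by
      have hh := h
      rw [Matrix.sub_mul, Matrix.one_mul, sub_eq_zero] at hh
      rw [← Matrix.mul_assoc, ← hh]
    apply le_antisymm
    · have : Matrix.fromCols N M = M * Matrix.fromCols (Mp * N) 1 := by
        rw [Matrix.mul_fromCols, Matrix.mul_one, ← hN]
      rw [this]
      exact Matrix.rank_mul_le_left _ _
    · have : M = Matrix.fromCols N M * Matrix.fromRows (0 : Matrix (Fin r) (Fin q) ℝ) (1 : Matrix (Fin q) (Fin q) ℝ) := by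
        rw [Matrix.fromCols_mul_fromRows, Matrix.mul_zero, Matrix.mul_one, zero_add]
      conv_lhs => rw [this]
      exact Matrix.rank_mul_le_left _ _
  · intro h
    have hle : LinearMap.range M.mulVecLin ≤ LinearMap.range (Matrix.fromCols N M).mulVecLin := by
      rintro v ⟨y, rfl⟩
      exact ⟨Sum.elim 0 y, by
        rw [Matrix.mulVecLin_apply, Matrix.fromCols_mulVec_sumElim,
          Matrix.mulVec_zero, zero_add, Matrix.mulVecLin_apply]⟩
    have heq : LinearMap.range M.mulVecLin
        = LinearMap.range (Matrix.fromCols N M).mulVecLin := by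
      apply Submodule.eq_of_le_of_finrank_le hle
      unfold Matrix.rank at h
      exact le_of_eq h
    have key : ∀ x : Fin r → ℝ, ((1 : Matrix (Fin p) (Fin p) ℝ) - M * Mp) *ᵥ (N *ᵥ x) = 0 := by
      intro x
      have hmem : N *ᵥ x ∈ LinearMap.range (Matrix.fromCols N M).mulVecLin :=
        ⟨Sum.elim x 0, by
          rw [Matrix.mulVecLin_apply, Matrix.fromCols_mulVec_sumElim,
            Matrix.mulVec_zero, add_zero]⟩
      rw [← heq] at hmem
      obtain ⟨y, hy⟩ := hmem
      rw [Matrix.mulVecLin_apply] at hy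
      rw [← hy, Matrix.sub_mulVec, Matrix.one_mulVec]
      simp [hMp1]
    ext i j
    have hk := key (Pi.single j 1)
    have h2 : (((1 : Matrix (Fin p) (Fin p) ℝ) - M * Mp) * N) *ᵥ Pi.single j 1 = 0 := by
      rw [← Matrix.mulVec_mulVec]; exact hk
    have h3 := congrFun h2 i
    simpa [Matrix.mulVec_single] using h3
end

section
/- With C̄ = (I_m − F F⁺) C, Ē = E (I_q − F⁺ F), and G = I_n − Ē (C̄ Ē)⁺ C̄, the following are equivalent: (1°) rank of the 2m×2q block matrix [[0, F],[F, C E]] equals rank F + rank of the (n+m)×q stacked matrix [E; F]; (2°) G Ē = 0. -/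
open Matrix Module

/-- finrank of a product of submodules. -/
lemma finrank_submodule_prod {R M N : Type*} [DivisionRing R] [AddCommGroup M] [AddCommGroup N]
    [Module R M] [Module R N] [FiniteDimensional R M] [FiniteDimensional R N]
    (p : Submodule R M) (s : Submodule R N) :
    Module.finrank R (p.prod s) = Module.finrank R p + Module.finrank R s := by
  have e : (p.prod s) ≃ₗ[R] p × s :=
    { toFun := fun x => (⟨x.1.1, x.2.1⟩, ⟨x.1.2, x.2.2⟩)
      map_add' := fun x y => rfl
      map_smul' := fun c x => rfl
      invFun := fun y => ⟨(y.1.1, y.2.1), ⟨y.1.2, y.2.2⟩⟩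
      left_inv := fun x => rfl
      right_inv := fun y => rfl }
  rw [e.finrank_eq, Module.finrank_prod]


/-- Lemma 1: With `C̄ = (I_m − F F⁺) C`, `Ē = E (I_q − F⁺ F)` and
`G = I_n − Ē (C̄ Ē)⁺ C̄`, the condition
`rank [[0, F],[F, C E]] = rank F + rank [E; F]` is equivalent to `G Ē = 0`. -/
theorem stmt2 {n m q : ℕ}
    (C : Matrix (Fin m) (Fin n) ℝ) (E : Matrix (Fin n) (Fin q) ℝ)
    (F : Matrix (Fin m) (Fin q) ℝ) (Fp : Matrix (Fin q) (Fin m) ℝ)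
    (hFp1 : F * Fp * F = F) (hFp2 : Fp * F * Fp = Fp)
    (Cbar : Matrix (Fin m) (Fin n) ℝ)
    (hCbar : Cbar = ((1 : Matrix (Fin m) (Fin m) ℝ) - F * Fp) * C)
    (Ebar : Matrix (Fin n) (Fin q) ℝ)
    (hEbar : Ebar = E * ((1 : Matrix (Fin q) (Fin q) ℝ) - Fp * F))
    (CEp : Matrix (Fin q) (Fin m) ℝ)
    (hCEp1 : (Cbar * Ebar) * CEp * (Cbar * Ebar) = Cbar * Ebar)
    (hCEp2 : CEp * (Cbar * Ebar) * CEp = CEp)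
    (G : Matrix (Fin n) (Fin n) ℝ)
    (hG : G = (1 : Matrix (Fin n) (Fin n) ℝ) - Ebar * CEp * Cbar) :
    (Matrix.fromBlocks (0 : Matrix (Fin m) (Fin q) ℝ) F F (C * E)).rank =
        F.rank + (Matrix.fromRows E F).rank ↔
      G * Ebar = 0 := by
  classical
  set KF := LinearMap.ker F.mulVecLin with hKF
  set KN := LinearMap.ker (Cbar * Ebar).mulVecLin with hKN
  set KE := LinearMap.ker Ebar.mulVecLin with hKE
  -- basic matrix identities
  have hEbarFpF : Ebar * (Fp * F) = 0 := by
    have h1 : Fp * F * (Fp * F) = Fp * F := by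
      rw [← Matrix.mul_assoc, hFp2]
    rw [hEbar, Matrix.mul_assoc, Matrix.sub_mul, Matrix.one_mul, h1, sub_self, Matrix.mul_zero]
  have hFFpCbar : F * Fp * Cbar = 0 := by
    rw [hCbar, ← Matrix.mul_assoc, Matrix.mul_sub, Matrix.mul_one, ← Matrix.mul_assoc, hFp1,
      sub_self, Matrix.zero_mul]
  -- helper: if F *ᵥ x = 0 then Ebar *ᵥ x = E *ᵥ x
  have hEbar_eq : ∀ x : Fin q → ℝ, F *ᵥ x = 0 → Ebar *ᵥ x = E *ᵥ x := by
    intro x hx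
    rw [hEbar, Matrix.mul_sub, Matrix.mul_one, Matrix.sub_mulVec, ← Matrix.mul_assoc,
      ← Matrix.mulVec_mulVec, hx, Matrix.mulVec_zero, sub_zero]
  -- membership characterizations
  have memKF : ∀ x, x ∈ KF ↔ F *ᵥ x = 0 := fun x => by
    simp [hKF, LinearMap.mem_ker, Matrix.mulVecLin_apply]
  have memKN : ∀ x, x ∈ KN ↔ (Cbar * Ebar) *ᵥ x = 0 := fun x => by
    simp [hKN, LinearMap.mem_ker, Matrix.mulVecLin_apply]
  have memKE : ∀ x, x ∈ KE ↔ Ebar *ᵥ x = 0 := fun x => by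
    simp [hKE, LinearMap.mem_ker, Matrix.mulVecLin_apply]
  -- Step 1: G * Ebar = 0 ↔ KN ≤ KE
  have hGE : G * Ebar = Ebar - Ebar * CEp * (Cbar * Ebar) := by
    rw [hG, Matrix.sub_mul, Matrix.one_mul, Matrix.mul_assoc (Ebar * CEp) Cbar Ebar]
  have iff₁ : G * Ebar = 0 ↔ KN ≤ KE := by
    constructor
    · intro h x hx
      have hEb : Ebar = Ebar * CEp * (Cbar * Ebar) := by
        exact sub_eq_zero.mp (hGE ▸ h)
      rw [memKE]
      rw [memKN] at hx
      conv_lhs => rw [hEb]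
      rw [← Matrix.mulVec_mulVec, hx, Matrix.mulVec_zero]
    · intro hle
      have hv : ∀ v : Fin q → ℝ, (Ebar - Ebar * CEp * (Cbar * Ebar)) *ᵥ v = 0 := by
        intro v
        have hI : (Cbar * Ebar) * (CEp * (Cbar * Ebar)) = Cbar * Ebar := by
          rw [← Matrix.mul_assoc]; exact hCEp1
        have hw : (Cbar * Ebar) *ᵥ (v - (CEp * (Cbar * Ebar)) *ᵥ v) = 0 := by
          rw [Matrix.mulVec_sub, Matrix.mulVec_mulVec, hI, sub_self]
        have hmem : (v - (CEp * (Cbar * Ebar)) *ᵥ v) ∈ KN := (memKN _).mpr hw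
        have hE0 : Ebar *ᵥ (v - (CEp * (Cbar * Ebar)) *ᵥ v) = 0 := (memKE _).mp (hle hmem)
        calc (Ebar - Ebar * CEp * (Cbar * Ebar)) *ᵥ v
            = Ebar *ᵥ (v - (CEp * (Cbar * Ebar)) *ᵥ v) := by
              simp [Matrix.mulVec_sub, Matrix.sub_mulVec, Matrix.mulVec_mulVec,
                Matrix.mul_assoc]
          _ = 0 := hE0
      rw [hGE]
      ext i j
      have := congrFun (hv (Pi.single j 1)) i
      simpa [Matrix.mulVec_single] using this
  -- KE ≤ KN
  have hKEKN : KE ≤ KN := by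
    intro x hx
    rw [memKE] at hx
    rw [memKN, ← Matrix.mulVec_mulVec, hx, Matrix.mulVec_zero]
  -- Step 2: from equality of the intersections to KN ≤ KE
  have hstep : KF ⊓ KN ≤ KF ⊓ KE → KN ≤ KE := by
    intro h x hx
    set z := x - (Fp * F) *ᵥ x with hz
    have hz1 : F *ᵥ z = 0 := by
      rw [hz, Matrix.mulVec_sub, Matrix.mulVec_mulVec, ← Matrix.mul_assoc, hFp1, sub_self]
    have hz2 : Ebar *ᵥ z = Ebar *ᵥ x := by
      rw [hz, Matrix.mulVec_sub, Matrix.mulVec_mulVec, hEbarFpF, Matrix.zero_mulVec, sub_zero]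
    have hz3 : (Cbar * Ebar) *ᵥ z = 0 := by
      rw [← Matrix.mulVec_mulVec, hz2, Matrix.mulVec_mulVec]
      exact (memKN x).mp hx
    have hzmem : z ∈ KF ⊓ KE :=
      h ⟨(memKF z).mpr hz1, (memKN z).mpr hz3⟩
    have : Ebar *ᵥ z = 0 := (memKE z).mp hzmem.2
    rw [memKE, ← hz2]
    exact this
  -- dimension bookkeeping
  have memPi : Module.finrank ℝ (Fin q → ℝ) = q := by
    rw [Module.finrank_pi, Fintype.card_fin]
  -- rank F + dim KF = q
  have hrankF : F.rank + Module.finrank ℝ KF = q := by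
    have h1 := LinearMap.finrank_range_add_finrank_ker F.mulVecLin
    rwa [memPi] at h1
  -- kernel of fromRows E F
  have hkerEF : LinearMap.ker (Matrix.fromRows E F).mulVecLin = KF ⊓ KE := by
    ext v
    simp only [LinearMap.mem_ker, Matrix.mulVecLin_apply, Submodule.mem_inf]
    rw [Matrix.fromRows_mulVec]
    constructor
    · intro hv
      have hEv : E *ᵥ v = 0 := funext fun i => congrFun hv (Sum.inl i)
      have hFv : F *ᵥ v = 0 := funext fun i => congrFun hv (Sum.inr i)
      exact ⟨(memKF v).mpr hFv, (memKE v).mpr (by rw [hEbar_eq v hFv, hEv])⟩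
    · rintro ⟨h1, h2⟩
      have hFv : F *ᵥ v = 0 := (memKF v).mp h1
      have hEv : E *ᵥ v = 0 := by rw [← hEbar_eq v hFv]; exact (memKE v).mp h2
      funext i
      cases i with
      | inl i => rw [hEv]; rfl
      | inr i => rw [hFv]; rfl
  have hrankEF : (Matrix.fromRows E F).rank + Module.finrank ℝ ↥(KF ⊓ KE) = q := by
    have h1 := LinearMap.finrank_range_add_finrank_ker (Matrix.fromRows E F).mulVecLin
    rwa [hkerEF, memPi] at h1
  -- the big block matrix
  set S : Matrix (Fin q ⊕ Fin q) (Fin q ⊕ Fin q) ℝ :=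
    Matrix.fromBlocks 1 (-(Fp * (C * E))) 0 1 with hS
  have hSdet : IsUnit S.det := by
    have : S.det = 1 := by
      rw [hS, Matrix.det_fromBlocks_zero₂₁]
      simp
    rw [this]
    exact isUnit_one
  have hrankMS : (Matrix.fromBlocks (0 : Matrix (Fin m) (Fin q) ℝ) F F (C * E)).rank =
      (Matrix.fromBlocks (0 : Matrix (Fin m) (Fin q) ℝ) F F (C * E) * S).rank :=
    (Matrix.rank_mul_eq_left_of_isUnit_det S _ hSdet).symm
  have hMS : Matrix.fromBlocks (0 : Matrix (Fin m) (Fin q) ℝ) F F (C * E) * S =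
      Matrix.fromBlocks (0 : Matrix (Fin m) (Fin q) ℝ) F F (Cbar * E) := by
    rw [hS, Matrix.fromBlocks_multiply]
    simp [hCbar, Matrix.sub_mul, Matrix.mul_assoc, neg_add_eq_sub]
  -- identities for the kernel computation
  have hFFpW : (F * Fp) * (Cbar * E) = 0 := by
    rw [← Matrix.mul_assoc, hFFpCbar, Matrix.zero_mul]
  have hWN : ∀ y : Fin q → ℝ, F *ᵥ y = 0 → (Cbar * E) *ᵥ y = (Cbar * Ebar) *ᵥ y := by
    intro y hy
    rw [← Matrix.mulVec_mulVec, ← Matrix.mulVec_mulVec, hEbar_eq y hy]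
  have hkerMS : LinearMap.ker (Matrix.fromBlocks (0 : Matrix (Fin m) (Fin q) ℝ) F F
        (Cbar * E)).mulVecLin
      = Submodule.comap
          ((LinearEquiv.sumArrowLequivProdArrow (Fin q) (Fin q) ℝ ℝ : _ ≃ₗ[ℝ] _) :
            ((Fin q ⊕ Fin q) → ℝ) →ₗ[ℝ] (Fin q → ℝ) × (Fin q → ℝ))
          (KF.prod (KF ⊓ KN)) := by
    ext v
    simp only [LinearMap.mem_ker, Matrix.mulVecLin_apply, Submodule.mem_comap,
      Submodule.mem_prod, LinearEquiv.coe_coe]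
    rw [Matrix.fromBlocks_mulVec]
    have hfst : (LinearEquiv.sumArrowLequivProdArrow (Fin q) (Fin q) ℝ ℝ v).1
        = v ∘ Sum.inl := rfl
    have hsnd : (LinearEquiv.sumArrowLequivProdArrow (Fin q) (Fin q) ℝ ℝ v).2
        = v ∘ Sum.inr := rfl
    rw [hfst, hsnd]
    constructor
    · intro hv
      have ha : (0 : Matrix (Fin m) (Fin q) ℝ) *ᵥ (v ∘ Sum.inl) + F *ᵥ (v ∘ Sum.inr) = 0 :=
        funext fun i => congrFun hv (Sum.inl i)
      have hb : F *ᵥ (v ∘ Sum.inl) + (Cbar * E) *ᵥ (v ∘ Sum.inr) = 0 :=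
        funext fun i => congrFun hv (Sum.inr i)
      rw [Matrix.zero_mulVec, zero_add] at ha
      have hc : (F * Fp) *ᵥ (F *ᵥ (v ∘ Sum.inl) + (Cbar * E) *ᵥ (v ∘ Sum.inr)) = 0 := by
        rw [hb, Matrix.mulVec_zero]
      rw [Matrix.mulVec_add, Matrix.mulVec_mulVec, Matrix.mulVec_mulVec, hFp1, hFFpW,
        Matrix.zero_mulVec, add_zero] at hc
      have hd : (Cbar * E) *ᵥ (v ∘ Sum.inr) = 0 := by
        rw [hc, zero_add] at hb
        exact hb
      refine ⟨(memKF _).mpr hc, (memKF _).mpr ha, (memKN _).mpr ?_⟩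
      rw [← hWN _ ha]
      exact hd
    · rintro ⟨h1, h2, h3⟩
      have hu : F *ᵥ (v ∘ Sum.inl) = 0 := (memKF _).mp h1
      have hy : F *ᵥ (v ∘ Sum.inr) = 0 := (memKF _).mp h2
      have hN : (Cbar * E) *ᵥ (v ∘ Sum.inr) = 0 := by
        rw [hWN _ hy]
        exact (memKN _).mp h3
      funext i
      cases i with
      | inl i => simp [Matrix.zero_mulVec, hy]
      | inr i => rw [Sum.elim_inr, hu, hN, add_zero]; rfl
  have hdimker : Module.finrank ℝ
      (LinearMap.ker (Matrix.fromBlocks (0 : Matrix (Fin m) (Fin q) ℝ) F F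
        (Cbar * E)).mulVecLin)
      = Module.finrank ℝ KF + Module.finrank ℝ ↥(KF ⊓ KN) := by
    rw [hkerMS, Submodule.comap_equiv_eq_map_symm, LinearEquiv.finrank_map_eq,
      finrank_submodule_prod]
  have hrankM : (Matrix.fromBlocks (0 : Matrix (Fin m) (Fin q) ℝ) F F (C * E)).rank
      + (Module.finrank ℝ KF + Module.finrank ℝ ↥(KF ⊓ KN)) = q + q := by
    rw [hrankMS, hMS, ← hdimker]
    have h1 := LinearMap.finrank_range_add_finrank_ker
      (Matrix.fromBlocks (0 : Matrix (Fin m) (Fin q) ℝ) F F (Cbar * E)).mulVecLin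
    rwa [Module.finrank_pi, Fintype.card_sum, Fintype.card_fin] at h1
  -- final bookkeeping
  have hPle : KF ⊓ KE ≤ KF ⊓ KN := inf_le_inf_left KF hKEKN
  have hcb : Module.finrank ℝ ↥(KF ⊓ KE) ≤ Module.finrank ℝ ↥(KF ⊓ KN) :=
    Submodule.finrank_mono hPle
  constructor
  · intro h1
    have hbc : Module.finrank ℝ ↥(KF ⊓ KE) = Module.finrank ℝ ↥(KF ⊓ KN) := by omega
    have hPeq : KF ⊓ KE = KF ⊓ KN :=
      Submodule.eq_of_le_of_finrank_eq hPle hbc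
    exact iff₁.mpr (hstep (le_of_eq hPeq.symm))
  · intro h2
    have hle : KN ≤ KE := iff₁.mp h2
    have : KF ⊓ KN ≤ KF ⊓ KE := inf_le_inf_left KF hle
    have hbc : Module.finrank ℝ ↥(KF ⊓ KE) = Module.finrank ℝ ↥(KF ⊓ KN) :=
      le_antisymm hcb (Submodule.finrank_mono this)
    omega
end

section
/- Assume G Ē = 0 (condition 1° of Assumption 1). Then the following are equivalent: (a) for every s ∈ ℂ, the complexified (n+m)×(n+q) block matrix [[A − s I_n, E],[C, F]] has rank n + rank [E; F]; (b) for every s ∈ ℂ, the complexified (n+m)×n stacked matrix [s I_n − G Ā; C̄] has rank n, where Ā = A − E F⁺ C (i.e. the pair (G Ā, C̄) is observable in the PBH sense). -/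
set_option linter.unusedSectionVars false

open Matrix Complex Module

variable {α β : Type*} [Fintype α] [Fintype β]

lemma mulVec_map_ofReal (B : Matrix α β ℝ) (x : β → ℝ) :
    (B.map Complex.ofReal).mulVec (fun i => (x i : ℂ)) = fun j => ((B.mulVec x j : ℝ) : ℂ) := by
  funext j
  simp [Matrix.mulVec, dotProduct, Matrix.map]

lemma re_mulVec (B : Matrix α β ℝ) (z : β → ℂ) (j : α) :
    ((B.map Complex.ofReal).mulVec z j).re = B.mulVec (fun i => (z i).re) j := by
  simp [Matrix.mulVec, dotProduct, Matrix.map, Complex.re_sum, Complex.mul_re]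

lemma im_mulVec (B : Matrix α β ℝ) (z : β → ℂ) (j : α) :
    ((B.map Complex.ofReal).mulVec z j).im = B.mulVec (fun i => (z i).im) j := by
  simp [Matrix.mulVec, dotProduct, Matrix.map, Complex.im_sum, Complex.mul_im]

lemma finrank_ker_map (B : Matrix α β ℝ) :
    finrank ℂ (LinearMap.ker (B.map Complex.ofReal).mulVecLin)
      = finrank ℝ (LinearMap.ker B.mulVecLin) := by
  set kR := LinearMap.ker B.mulVecLin with hkR
  set kC := LinearMap.ker (B.map Complex.ofReal).mulVecLin with hkC
  have hmemC : ∀ z : β → ℂ, z ∈ kC ↔ (B.map Complex.ofReal).mulVec z = 0 := by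
    intro z; rw [hkC, LinearMap.mem_ker, Matrix.mulVecLin_apply]
  have hmemR : ∀ x : β → ℝ, x ∈ kR ↔ B.mulVec x = 0 := by
    intro z; rw [hkR, LinearMap.mem_ker, Matrix.mulVecLin_apply]
  -- the real-linear map kC → kR × kR given by real and imaginary parts
  have hre : ∀ z ∈ kC, (fun i => (z i).re) ∈ kR := by
    intro z hz
    rw [hmemR]; funext j
    rw [Pi.zero_apply, ← re_mulVec, (hmemC z).mp hz]; rfl
  have him : ∀ z ∈ kC, (fun i => (z i).im) ∈ kR := by
    intro z hz
    rw [hmemR]; funext j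
    rw [Pi.zero_apply, ← im_mulVec, (hmemC z).mp hz]; rfl
  have hmk : ∀ x ∈ kR, ∀ y ∈ kR, (fun i => (x i : ℂ) + (y i : ℂ) * Complex.I) ∈ kC := by
    intro x hx y hy
    rw [hmemC]
    have : (fun i => (x i : ℂ) + (y i : ℂ) * Complex.I)
        = (fun i => (x i : ℂ)) + Complex.I • (fun i => (y i : ℂ)) := by
      funext i; simp [mul_comm]
    rw [this, Matrix.mulVec_add, Matrix.mulVec_smul, mulVec_map_ofReal, mulVec_map_ofReal,
      (hmemR x).mp hx, (hmemR y).mp hy]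
    funext j; simp
  have e1 : finrank ℝ kC ≤ finrank ℝ (kR × kR) := by
    refine LinearMap.finrank_le_finrank_of_injective
      (f := { toFun := fun z => (⟨fun i => ((z : β → ℂ) i).re, hre z z.2⟩,
                                 ⟨fun i => ((z : β → ℂ) i).im, him z z.2⟩)
              map_add' := by
                intro a b
                refine Prod.ext (Subtype.ext (funext fun i => ?_)) (Subtype.ext (funext fun i => ?_)) <;>
                  simp
              map_smul' := by
                intro c a
                refine Prod.ext (Subtype.ext (funext fun i => ?_)) (Subtype.ext (funext fun i => ?_)) <;>
                  simp }) ?_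
    intro a b hab
    have h1 : (fun i => ((a : β → ℂ) i).re) = (fun i => ((b : β → ℂ) i).re) :=
      congrArg (fun p => ((p.1 : kR) : β → ℝ)) hab
    have h2 : (fun i => ((a : β → ℂ) i).im) = (fun i => ((b : β → ℂ) i).im) :=
      congrArg (fun p => ((p.2 : kR) : β → ℝ)) hab
    refine Subtype.ext (funext fun i => Complex.ext ?_ ?_)
    · exact congrFun h1 i
    · exact congrFun h2 i
  have e2 : finrank ℝ (kR × kR) ≤ finrank ℝ kC := by
    refine LinearMap.finrank_le_finrank_of_injective
      (f := { toFun := fun p => (⟨fun i => ((p.1 : β → ℝ) i : ℂ) + ((p.2 : β → ℝ) i : ℂ) * Complex.I,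
                                 hmk _ p.1.2 _ p.2.2⟩ : kC)
              map_add' := by
                intro a b
                refine Subtype.ext (funext fun i => ?_)
                push_cast [Submodule.coe_add, Pi.add_apply]
                simp; ring
              map_smul' := by
                intro c a
                refine Subtype.ext (funext fun i => ?_)
                push_cast [Submodule.coe_smul, Pi.smul_apply]
                simp [Complex.real_smul]; ring }) ?_
    intro a b hab
    have h : ∀ i, ((a.1 : β → ℝ) i : ℂ) + ((a.2 : β → ℝ) i : ℂ) * Complex.I
        = ((b.1 : β → ℝ) i : ℂ) + ((b.2 : β → ℝ) i : ℂ) * Complex.I := fun i =>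
      congrFun (congrArg (fun z => ((z : kC) : β → ℂ)) hab) i
    have h1 : ∀ i, (a.1 : β → ℝ) i = (b.1 : β → ℝ) i := by
      intro i; have := congrArg Complex.re (h i); simpa using this
    have h2 : ∀ i, (a.2 : β → ℝ) i = (b.2 : β → ℝ) i := by
      intro i; have := congrArg Complex.im (h i); simpa using this
    ext i
    · exact h1 i
    · exact h2 i
  have hRC : finrank ℝ kC = finrank ℝ (kR × kR) := le_antisymm e1 e2
  have htower : finrank ℝ ℂ * finrank ℂ kC = finrank ℝ kC := Module.finrank_mul_finrank ℝ ℂ kC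
  rw [Complex.finrank_real_complex] at htower
  have hprod : finrank ℝ (kR × kR) = finrank ℝ kR + finrank ℝ kR := Module.finrank_prod
  omega

lemma rank_map_ofReal (B : Matrix α β ℝ) : (B.map Complex.ofReal).rank = B.rank := by
  have h1 := (B.map Complex.ofReal).mulVecLin.finrank_range_add_finrank_ker
  have h2 := B.mulVecLin.finrank_range_add_finrank_ker
  rw [Module.finrank_pi] at h1 h2
  have := finrank_ker_map B
  rw [Matrix.rank, Matrix.rank]
  omega

-- rank = number of columns iff trivial kernel
lemma rank_eq_card_iff_ker {K : Type*} [Field K] (M : Matrix α β K) :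
    M.rank = Fintype.card β ↔ ∀ v, M.mulVec v = 0 → v = 0 := by
  have h := M.mulVecLin.finrank_range_add_finrank_ker
  rw [Module.finrank_pi] at h
  rw [Matrix.rank]
  constructor
  · intro hr v hv
    have h0 : finrank K (LinearMap.ker M.mulVecLin) = 0 := by omega
    rw [Submodule.finrank_eq_zero] at h0
    have : v ∈ LinearMap.ker M.mulVecLin := by
      rw [LinearMap.mem_ker, Matrix.mulVecLin_apply]; exact hv
    rw [h0] at this
    simpa using this
  · intro hk
    have h0 : LinearMap.ker M.mulVecLin = ⊥ := by
      rw [eq_bot_iff]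
      intro v hv
      rw [LinearMap.mem_ker, Matrix.mulVecLin_apply] at hv
      simpa using hk v hv
    rw [h0, finrank_bot] at h
    omega

lemma sum_elim_eq_zero {n q : ℕ} {x : Fin n → ℂ} {v : Fin q → ℂ} :
    Sum.elim x v = 0 ↔ x = 0 ∧ v = 0 := by
  constructor
  · intro h
    constructor
    · funext i; exact congrFun h (Sum.inl i)
    · funext i; exact congrFun h (Sum.inr i)
  · rintro ⟨rfl, rfl⟩
    funext i; cases i <;> rfl

lemma rank_fromBlocks_iff {n m q : ℕ} (X : Matrix (Fin n) (Fin n) ℂ)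
    (E : Matrix (Fin n) (Fin q) ℂ) (C : Matrix (Fin m) (Fin n) ℂ) (F : Matrix (Fin m) (Fin q) ℂ) :
    (Matrix.fromBlocks X E C F).rank = n + (Matrix.fromRows E F).rank ↔
      ∀ (x : Fin n → ℂ) (v : Fin q → ℂ),
        X.mulVec x + E.mulVec v = 0 → C.mulVec x + F.mulVec v = 0 → x = 0 := by
  classical
  set f := (Matrix.fromBlocks X E C F).mulVecLin with hf
  set g := (Matrix.fromRows E F).mulVecLin with hg
  set ι : (Fin q → ℂ) →ₗ[ℂ] (Fin n ⊕ Fin q → ℂ) :=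
    { toFun := fun v => Sum.elim 0 v
      map_add' := by
        intro a b; funext i; cases i <;> simp
      map_smul' := by
        intro c a; funext i; cases i <;> simp } with hι
  have hιinj : Function.Injective ι := by
    intro a b hab
    funext i
    exact congrFun hab (Sum.inr i)
  have hsub : Submodule.map ι (LinearMap.ker g) ≤ LinearMap.ker f := by
    rintro w ⟨v, hv, rfl⟩
    simp only [SetLike.mem_coe, LinearMap.mem_ker, hg, Matrix.mulVecLin_apply,
      Matrix.fromRows_mulVec, sum_elim_eq_zero] at hv
    simp only [LinearMap.mem_ker, hf, Matrix.mulVecLin_apply]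
    show (Matrix.fromBlocks X E C F).mulVec (Sum.elim 0 v) = 0
    rw [Matrix.fromBlocks_mulVec]
    simp only [Sum.elim_comp_inl, Sum.elim_comp_inr, Matrix.mulVec_zero, hv.1, hv.2]
    simp
  have hfinmap : finrank ℂ (Submodule.map ι (LinearMap.ker g)) = finrank ℂ (LinearMap.ker g) :=
    (LinearEquiv.finrank_eq (Submodule.equivMapOfInjective ι hιinj (LinearMap.ker g))).symm
  have h1 := f.finrank_range_add_finrank_ker
  have h2 := g.finrank_range_add_finrank_ker
  rw [Module.finrank_pi, Fintype.card_sum, Fintype.card_fin, Fintype.card_fin] at h1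
  rw [Module.finrank_pi, Fintype.card_fin] at h2
  have hker_iff : LinearMap.ker f = Submodule.map ι (LinearMap.ker g) ↔
      (∀ (x : Fin n → ℂ) (v : Fin q → ℂ),
        X.mulVec x + E.mulVec v = 0 → C.mulVec x + F.mulVec v = 0 → x = 0) := by
    constructor
    · intro hk x v hxv1 hxv2
      have hw : Sum.elim x v ∈ LinearMap.ker f := by
        rw [LinearMap.mem_ker, hf, Matrix.mulVecLin_apply]
        show (Matrix.fromBlocks X E C F).mulVec (Sum.elim x v) = 0
        rw [Matrix.fromBlocks_mulVec]
        simp only [Sum.elim_comp_inl, Sum.elim_comp_inr, hxv1, hxv2]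
        funext i; cases i <;> rfl
      rw [hk] at hw
      obtain ⟨v', _, hv'⟩ := hw
      funext i
      have := congrFun hv' (Sum.inl i)
      exact this.symm
    · intro hp
      refine le_antisymm ?_ hsub
      intro w hw
      rw [LinearMap.mem_ker, hf, Matrix.mulVecLin_apply] at hw
      have hwe : w = Sum.elim (w ∘ Sum.inl) (w ∘ Sum.inr) := by
        funext i; cases i <;> rfl
      rw [hwe, Matrix.fromBlocks_mulVec] at hw
      simp only [Sum.elim_comp_inl, Sum.elim_comp_inr] at hw
      rw [sum_elim_eq_zero] at hw
      have hx0 : (w ∘ Sum.inl) = 0 := hp _ _ hw.1 hw.2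
      have hv : (w ∘ Sum.inr) ∈ LinearMap.ker g := by
        rw [LinearMap.mem_ker, hg, Matrix.mulVecLin_apply, Matrix.fromRows_mulVec,
          sum_elim_eq_zero]
        have h1' := hw.1
        have h2' := hw.2
        rw [hx0, Matrix.mulVec_zero, zero_add] at h1' h2'
        exact ⟨h1', h2'⟩
      refine ⟨w ∘ Sum.inr, hv, ?_⟩
      rw [hwe, hx0]
      rfl
  rw [Matrix.rank, Matrix.rank, ← hf, ← hg]
  constructor
  · intro hr
    rw [← hker_iff]
    refine (Submodule.eq_of_le_of_finrank_le hsub (by omega)).symm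
  · intro hp
    have hk := hker_iff.mpr hp
    rw [hk] at h1
    omega

lemma rank_fromRows_iff {n m : ℕ} (X : Matrix (Fin n) (Fin n) ℂ) (C : Matrix (Fin m) (Fin n) ℂ) :
    (Matrix.fromRows X C).rank = n ↔ ∀ x, X.mulVec x = 0 → C.mulVec x = 0 → x = 0 := by
  have h := rank_eq_card_iff_ker (Matrix.fromRows X C)
  rw [Fintype.card_fin] at h
  rw [h]
  constructor
  · intro h x h1 h2
    refine h x ?_
    rw [Matrix.fromRows_mulVec, h1, h2]
    funext i; cases i <;> rfl
  · intro h x hx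
    rw [Matrix.fromRows_mulVec, sum_elim_eq_zero] at hx
    exact h x hx.1 hx.2

/-- Lemma 2: Under `G Ē = 0`, the rank condition
`rank [[A − s Iₙ, E],[C, F]] = n + rank [E; F]` for all `s ∈ ℂ` is equivalent to
the PBH observability of `(G Ā, C̄)`, i.e. `rank [s Iₙ − G Ā; C̄] = n` for all `s ∈ ℂ`. -/
theorem stmt3 {n m q : ℕ}
    (A : Matrix (Fin n) (Fin n) ℝ) (C : Matrix (Fin m) (Fin n) ℝ)
    (E : Matrix (Fin n) (Fin q) ℝ) (F : Matrix (Fin m) (Fin q) ℝ)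
    (Fp : Matrix (Fin q) (Fin m) ℝ)
    (hFp1 : F * Fp * F = F) (hFp2 : Fp * F * Fp = Fp)
    (Cbar : Matrix (Fin m) (Fin n) ℝ)
    (hCbar : Cbar = ((1 : Matrix (Fin m) (Fin m) ℝ) - F * Fp) * C)
    (Ebar : Matrix (Fin n) (Fin q) ℝ)
    (hEbar : Ebar = E * ((1 : Matrix (Fin q) (Fin q) ℝ) - Fp * F))
    (CEp : Matrix (Fin q) (Fin m) ℝ)
    (hCEp1 : (Cbar * Ebar) * CEp * (Cbar * Ebar) = Cbar * Ebar)
    (hCEp2 : CEp * (Cbar * Ebar) * CEp = CEp)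
    (G : Matrix (Fin n) (Fin n) ℝ)
    (hG : G = (1 : Matrix (Fin n) (Fin n) ℝ) - Ebar * CEp * Cbar)
    (Abar : Matrix (Fin n) (Fin n) ℝ)
    (hAbar : Abar = A - E * Fp * C)
    (hGE : G * Ebar = 0) :
    (∀ s : ℂ,
        (Matrix.fromBlocks (A.map Complex.ofReal - s • (1 : Matrix (Fin n) (Fin n) ℂ))
            (E.map Complex.ofReal) (C.map Complex.ofReal) (F.map Complex.ofReal)).rank =
          n + (Matrix.fromRows E F).rank) ↔
      (∀ s : ℂ,
        (Matrix.fromRows (s • (1 : Matrix (Fin n) (Fin n) ℂ) - (G * Abar).map Complex.ofReal)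
            (Cbar.map Complex.ofReal)).rank = n) := by
  classical
  -- complexification helpers
  have mm : ∀ {a b c : Type} [Fintype a] [Fintype b] [Fintype c] [DecidableEq b]
      (X : Matrix a b ℝ) (Y : Matrix b c ℝ),
      (X * Y).map Complex.ofReal = X.map Complex.ofReal * Y.map Complex.ofReal := by
    intro a b c _ _ _ _ X Y
    exact Matrix.map_mul (f := Complex.ofRealHom)
  have msub : ∀ {a b : Type} (X Y : Matrix a b ℝ),
      (X - Y).map Complex.ofReal = X.map Complex.ofReal - Y.map Complex.ofReal := by
    intro a b X Y
    ext i j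
    simp [Matrix.map]
  have mone : ∀ {a : Type} [Fintype a] [DecidableEq a],
      ((1 : Matrix a a ℝ)).map Complex.ofReal = (1 : Matrix a a ℂ) := by
    intro a _ _
    exact Matrix.map_one _ Complex.ofReal_zero Complex.ofReal_one
  have mzero : ∀ {a b : Type}, ((0 : Matrix a b ℝ)).map Complex.ofReal = 0 := by
    intro a b; ext i j; simp [Matrix.map]
  set A' := A.map Complex.ofReal with hA'
  set C' := C.map Complex.ofReal with hC'
  set E' := E.map Complex.ofReal with hE'
  set F' := F.map Complex.ofReal with hF'
  set Fp' := Fp.map Complex.ofReal with hFp'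
  set Cb' := Cbar.map Complex.ofReal with hCb'd
  set Eb' := Ebar.map Complex.ofReal with hEb'd
  set CEp' := CEp.map Complex.ofReal with hCEp'd
  set G' := G.map Complex.ofReal with hG'd
  set Ab' := Abar.map Complex.ofReal with hAb'd
  -- complexified hypotheses
  have hFp1' : F' * Fp' * F' = F' := by
    rw [hF', hFp', ← mm, ← mm, hFp1]
  have hCb' : Cb' = (1 - F' * Fp') * C' := by
    rw [hCb'd, hCbar, mm, msub, mm, mone, hC', hF', hFp']
  have hEb' : Eb' = E' * (1 - Fp' * F') := by
    rw [hEb'd, hEbar, mm, msub, mm, mone, hE', hF', hFp']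
  have hG' : G' = 1 - Eb' * CEp' * Cb' := by
    rw [hG'd, hG, msub, mone, mm, mm, hEb'd, hCEp'd, hCb'd]
  have hAb' : Ab' = A' - E' * Fp' * C' := by
    rw [hAb'd, hAbar, msub, mm, mm, hA', hE', hFp', hC']
  have hGE' : G' * Eb' = 0 := by
    rw [hG'd, hEb'd, ← mm, hGE, mzero]
  have hGA' : (G * Abar).map Complex.ofReal = G' * Ab' := by
    rw [mm, hG'd, hAb'd]
  -- transfer the rank statements to kernel statements
  have hfr : (Matrix.fromRows E F).map Complex.ofReal = Matrix.fromRows E' F' := by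
    ext i j; cases i <;> rfl
  have hrEF : (Matrix.fromRows E F).rank = (Matrix.fromRows E' F').rank := by
    rw [← hfr, rank_map_ofReal]
  refine forall_congr' fun s => ?_
  rw [hrEF, rank_fromBlocks_iff, rank_fromRows_iff, hGA']
  -- the pointwise algebraic equivalence
  constructor
  · -- (a) ⟹ (b)
    intro hP x hx1 hx2
    set V : Matrix (Fin q) (Fin n) ℂ :=
      -((1 - Fp' * F') * (CEp' * (Cb' * Ab'))) - Fp' * C' with hV
    have key : F' * (1 - Fp' * F') = 0 := by
      rw [Matrix.mul_sub, Matrix.mul_one, ← Matrix.mul_assoc, hFp1', sub_self]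
    have id1 : A' - G' * Ab' + E' * V = 0 := by
      rw [hV, hG', hEb', hAb']
      simp only [Matrix.mul_sub, Matrix.sub_mul, Matrix.mul_neg, Matrix.neg_mul,
        Matrix.mul_one, Matrix.one_mul, Matrix.mul_assoc]
      abel
    have id2 : C' + F' * V = Cb' := by
      rw [hCb', hV, Matrix.mul_sub, Matrix.mul_neg,
        ← Matrix.mul_assoc F' (1 - Fp' * F') (CEp' * (Cb' * Ab')), key]
      simp only [Matrix.zero_mul, neg_zero, zero_sub, Matrix.sub_mul, Matrix.one_mul,
        Matrix.mul_assoc]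
      abel
    have hsx : s • x = (G' * Ab').mulVec x := by
      have := hx1
      rw [Matrix.sub_mulVec, Matrix.smul_mulVec, Matrix.one_mulVec, sub_eq_zero] at this
      exact this
    have h1 : (A' - s • 1).mulVec x + E'.mulVec (V.mulVec x) = 0 := by
      have step : (A' - s • (1 : Matrix (Fin n) (Fin n) ℂ)).mulVec x + E'.mulVec (V.mulVec x)
          = (A' - G' * Ab' + E' * V).mulVec x := by
        rw [Matrix.mulVec_mulVec, Matrix.add_mulVec, Matrix.sub_mulVec, Matrix.sub_mulVec,
          Matrix.smul_mulVec, Matrix.one_mulVec, hsx]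
      rw [step, id1, Matrix.zero_mulVec]
    have h2 : C'.mulVec x + F'.mulVec (V.mulVec x) = 0 := by
      have step : C'.mulVec x + F'.mulVec (V.mulVec x) = (C' + F' * V).mulVec x := by
        rw [Matrix.mulVec_mulVec, Matrix.add_mulVec]
      rw [step, id2, hx2]
    exact hP x (V.mulVec x) h1 h2
  · -- (b) ⟹ (a)
    intro hQ x v h1 h2
    have hCx : C'.mulVec x = -(F'.mulVec v) := eq_neg_of_add_eq_zero_left h2
    have hAx : A'.mulVec x = s • x - E'.mulVec v := by
      rw [Matrix.sub_mulVec, Matrix.smul_mulVec, Matrix.one_mulVec] at h1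
      have := eq_neg_of_add_eq_zero_left h1
      rw [sub_eq_iff_eq_add] at this
      rw [this]
      abel
    have hCbx : Cb'.mulVec x = 0 := by
      calc Cb'.mulVec x = ((1 - F' * Fp') * C').mulVec x := by rw [hCb']
        _ = C'.mulVec x - (F' * Fp').mulVec (C'.mulVec x) := by
            rw [Matrix.sub_mul, Matrix.one_mul, Matrix.sub_mulVec, Matrix.mulVec_mulVec]
        _ = -(F'.mulVec v) - (F' * Fp').mulVec (-(F'.mulVec v)) := by rw [hCx]
        _ = -(F'.mulVec v) + (F' * Fp' * F').mulVec v := by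
            rw [Matrix.mulVec_neg, sub_neg_eq_add, Matrix.mulVec_mulVec]
        _ = 0 := by rw [hFp1', neg_add_cancel]
    have hAbx : Ab'.mulVec x = s • x - Eb'.mulVec v := by
      have hEb'' : Eb' = E' - E' * Fp' * F' := by
        rw [hEb', Matrix.mul_sub, Matrix.mul_one, Matrix.mul_assoc]
      calc Ab'.mulVec x = A'.mulVec x - (E' * Fp').mulVec (C'.mulVec x) := by
            rw [hAb', Matrix.sub_mulVec, Matrix.mulVec_mulVec, Matrix.mul_assoc]
        _ = s • x - E'.mulVec v - (E' * Fp').mulVec (-(F'.mulVec v)) := by rw [hAx, hCx]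
        _ = s • x - E'.mulVec v + (E' * Fp' * F').mulVec v := by
            rw [Matrix.mulVec_neg, sub_neg_eq_add, Matrix.mulVec_mulVec]
        _ = s • x - (E' - E' * Fp' * F').mulVec v := by
            rw [Matrix.sub_mulVec]; abel
        _ = s • x - Eb'.mulVec v := by rw [← hEb'']
    have hGx : G'.mulVec x = x := by
      calc G'.mulVec x = x - (Eb' * CEp').mulVec (Cb'.mulVec x) := by
            rw [hG', Matrix.sub_mulVec, Matrix.one_mulVec, Matrix.mulVec_mulVec]
        _ = x := by rw [hCbx, Matrix.mulVec_zero, sub_zero]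
    have hGAx : (G' * Ab').mulVec x = s • x := by
      calc (G' * Ab').mulVec x = G'.mulVec (Ab'.mulVec x) := (Matrix.mulVec_mulVec _ _ _).symm
        _ = G'.mulVec (s • x) - G'.mulVec (Eb'.mulVec v) := by
            rw [hAbx, Matrix.mulVec_sub]
        _ = s • G'.mulVec x - (G' * Eb').mulVec v := by
            rw [Matrix.mulVec_smul, Matrix.mulVec_mulVec]
        _ = s • x := by rw [hGx, hGE', Matrix.zero_mulVec, sub_zero]
    refine hQ x ?_ hCbx
    rw [Matrix.sub_mulVec, Matrix.smul_mulVec, Matrix.one_mulVec, hGAx, sub_self]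
end

section
/- Let C ∈ ℝ^{m×n}, F ∈ ℝ^{m×q}, and let F⁺ be a generalized inverse of F. Then rank((I_m − F F⁺) C) = rank [C F] − rank F, where [C F] is the m×(n+q) matrix whose columns are those of C followed by those of F. -/
open Matrix LinearMap Submodule

set_option synthInstance.maxHeartbeats 400000 in
/-- finrank of image of a submodule -/
lemma finrank_map_add {k : ℕ} (f : (Fin k → ℝ) →ₗ[ℝ] (Fin k → ℝ)) (S : Submodule ℝ (Fin k → ℝ)) :
    Module.finrank ℝ (S.map f) + Module.finrank ℝ ↥(S ⊓ LinearMap.ker f) =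
      Module.finrank ℝ S := by
  have h := LinearMap.finrank_range_add_finrank_ker (f.domRestrict S)
  rw [LinearMap.range_domRestrict] at h
  have hker : LinearMap.ker (f.domRestrict S) = (S ⊓ LinearMap.ker f).comap S.subtype := by
    rw [LinearMap.ker_domRestrict, Submodule.comap_inf]
    simp [Submodule.comap_subtype_self]
  rw [hker] at h
  rw [← h]
  congr 1
  exact ((Submodule.comapSubtypeEquivOfLe
    (inf_le_left : S ⊓ LinearMap.ker f ≤ S)).finrank_eq).symm

/-- For `C ∈ ℝ^{m×n}`, `F ∈ ℝ^{m×q}` with generalized inverse `F⁺` of `F`,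
`rank((I_m − F F⁺) C) = rank [C F] − rank F`. -/
theorem stmt4 {m n q : ℕ}
    (C : Matrix (Fin m) (Fin n) ℝ) (F : Matrix (Fin m) (Fin q) ℝ)
    (Fp : Matrix (Fin q) (Fin m) ℝ)
    (hFp1 : F * Fp * F = F) (hFp2 : Fp * F * Fp = Fp) :
    (((1 : Matrix (Fin m) (Fin m) ℝ) - F * Fp) * C).rank =
      (Matrix.fromCols C F).rank - F.rank := by
  set f := ((1 : Matrix (Fin m) (Fin m) ℝ) - F * Fp).mulVecLin with hf
  set S := LinearMap.range C.mulVecLin with hS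
  set T := LinearMap.range F.mulVecLin with hT
  -- ker f = T
  have hker : LinearMap.ker f = T := by
    ext x
    simp only [hf, hT, LinearMap.mem_ker, Matrix.mulVecLin_apply, LinearMap.mem_range,
      Matrix.sub_mulVec, Matrix.one_mulVec, sub_eq_zero]
    constructor
    · intro h
      exact ⟨Fp *ᵥ x, by rw [Matrix.mulVec_mulVec]; exact h.symm⟩
    · rintro ⟨y, rfl⟩
      rw [Matrix.mulVec_mulVec, hFp1]
  -- range of fromColumns = S ⊔ T
  have hsup : LinearMap.range (Matrix.fromCols C F).mulVecLin = S ⊔ T := by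
    apply le_antisymm
    · rintro x ⟨v, rfl⟩
      have : v = Sum.elim (v ∘ Sum.inl) (v ∘ Sum.inr) := by ext (i|i) <;> rfl
      rw [Matrix.mulVecLin_apply, this, Matrix.fromCols_mulVec_sumElim]
      exact Submodule.add_mem_sup ⟨_, rfl⟩ ⟨_, rfl⟩
    · rw [sup_le_iff]
      constructor
      · rintro x ⟨v, rfl⟩
        exact ⟨Sum.elim v 0, by simp⟩
      · rintro x ⟨v, rfl⟩
        exact ⟨Sum.elim 0 v, by simp⟩
  -- rank of product matrix = finrank of map f S
  have hrank1 : (((1 : Matrix (Fin m) (Fin m) ℝ) - F * Fp) * C).rank =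
      Module.finrank ℝ (S.map f) := by
    rw [Matrix.rank, Matrix.mulVecLin_mul, LinearMap.range_comp]
  have h1 : Module.finrank ℝ (S.map f) + Module.finrank ℝ ↥(S ⊓ T) = Module.finrank ℝ S := by
    rw [← hker]; exact finrank_map_add f S
  have h2 : Module.finrank ℝ ↥(S ⊔ T) + Module.finrank ℝ ↥(S ⊓ T) =
      Module.finrank ℝ S + Module.finrank ℝ T :=
    Submodule.finrank_sup_add_finrank_inf_eq S T
  have hrank2 : (Matrix.fromCols C F).rank = Module.finrank ℝ ↥(S ⊔ T) := by
    rw [Matrix.rank, hsup]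
  have hrank3 : F.rank = Module.finrank ℝ T := rfl
  rw [hrank1, hrank2, hrank3]
  omega
end

section
/- Let E ∈ ℝ^{n×q}, F ∈ ℝ^{m×q}, and let F⁺ be a generalized inverse of F. Then rank(E (I_q − F⁺ F)) = rank [E; F] − rank F, where [E; F] is the (n+m)×q matrix whose rows are those of E followed by those of F. -/
/-- For `E ∈ ℝ^{n×q}`, `F ∈ ℝ^{m×q}` with generalized inverse `F⁺` of `F`,
`rank(E (I_q − F⁺ F)) = rank [E; F] − rank F`. -/
theorem stmt5 {m n q : ℕ}
    (E : Matrix (Fin n) (Fin q) ℝ) (F : Matrix (Fin m) (Fin q) ℝ)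
    (Fp : Matrix (Fin q) (Fin m) ℝ)
    (hFp1 : F * Fp * F = F) (hFp2 : Fp * F * Fp = Fp) :
    (E * ((1 : Matrix (Fin q) (Fin q) ℝ) - Fp * F)).rank =
      (Matrix.fromRows E F).rank - F.rank := by
  classical
  set f := E.mulVecLin with hf
  set g := F.mulVecLin with hg
  set P := ((1 : Matrix (Fin q) (Fin q) ℝ) - Fp * F) with hP
  -- range of P.mulVecLin is ker g
  have hrangeP : LinearMap.range P.mulVecLin = LinearMap.ker g := by
    apply le_antisymm
    · rintro _ ⟨x, rfl⟩
      simp only [LinearMap.mem_ker, hg, Matrix.mulVecLin_apply, hP]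
      rw [Matrix.mulVec_mulVec]
      have : F * (1 - Fp * F) = 0 := by
        rw [Matrix.mul_sub, Matrix.mul_one, ← Matrix.mul_assoc, hFp1, sub_self]
      rw [this, Matrix.zero_mulVec]
    · intro x hx
      refine ⟨x, ?_⟩
      simp only [LinearMap.mem_ker, hg, Matrix.mulVecLin_apply] at hx
      simp only [Matrix.mulVecLin_apply, hP, Matrix.sub_mulVec, Matrix.one_mulVec,
        ← Matrix.mulVec_mulVec, hx, Matrix.mulVec_zero, sub_zero]
  -- rank of E * P is dim of f '' ker g
  have hrank1 : (E * P).rank =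
      Module.finrank ℝ (Submodule.map f (LinearMap.ker g)) := by
    rw [Matrix.rank, Matrix.mulVecLin_mul, LinearMap.range_comp, hrangeP]
  -- rank nullity on f restricted to ker g
  have hdim1 : Module.finrank ℝ (Submodule.map f (LinearMap.ker g)) +
      Module.finrank ℝ (LinearMap.ker (f.domRestrict (LinearMap.ker g))) =
      Module.finrank ℝ (LinearMap.ker g) := by
    have := LinearMap.finrank_range_add_finrank_ker (f.domRestrict (LinearMap.ker g))
    rwa [LinearMap.range_domRestrict] at this
  have hker_dom : Module.finrank ℝ (LinearMap.ker (f.domRestrict (LinearMap.ker g))) =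
      Module.finrank ℝ (LinearMap.ker f ⊓ LinearMap.ker g : Submodule ℝ (Fin q → ℝ)) := by
    rw [LinearMap.ker_domRestrict]
    have : Submodule.comap (LinearMap.ker g).subtype (LinearMap.ker f) =
        Submodule.comap (LinearMap.ker g).subtype (LinearMap.ker f ⊓ LinearMap.ker g) := by
      ext y; simp
    rw [this]
    exact (Submodule.comapSubtypeEquivOfLe inf_le_right).finrank_eq
  -- kernel of fromRows
  have hkerFR : LinearMap.ker (Matrix.fromRows E F).mulVecLin =
      LinearMap.ker f ⊓ LinearMap.ker g := by
    ext x
    simp only [LinearMap.mem_ker, Matrix.mulVecLin_apply, Submodule.mem_inf,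
      Matrix.fromRows_mulVec, hf, hg]
    constructor
    · intro h
      constructor
      · ext i; exact congrFun h (Sum.inl i)
      · ext i; exact congrFun h (Sum.inr i)
    · rintro ⟨h1, h2⟩
      ext i
      cases i with
      | inl i => exact congrFun h1 i
      | inr i => exact congrFun h2 i
  have hFR : (Matrix.fromRows E F).rank +
      Module.finrank ℝ (LinearMap.ker f ⊓ LinearMap.ker g : Submodule ℝ (Fin q → ℝ)) = q := by
    have := LinearMap.finrank_range_add_finrank_ker (Matrix.fromRows E F).mulVecLin
    rw [hkerFR] at this
    simpa [Matrix.rank] using this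
  have hF : F.rank + Module.finrank ℝ (LinearMap.ker g) = q := by
    have := LinearMap.finrank_range_add_finrank_ker g
    simpa [Matrix.rank, hg] using this
  omega
end

section
/- Assume G Ē = 0. Then rank(C̄ Ē) = rank Ē. Moreover, if Ē = Ē₀ Ē₁ is any factorization in which Ē₀ ∈ ℝ^{n×r} has full column rank r = rank Ē, then C̄ Ē₀ has full column rank, i.e. rank(C̄ Ē₀) = rank Ē. -/
/-- Theorem 3: With `G = I_n − Ē (C̄ Ē)⁺ C̄` and assuming `G Ē = 0`, one has
`rank(C̄ Ē) = rank Ē`; moreover, for any factorization `Ē = Ē₀ Ē₁` where `Ē₀ ∈ ℝ^{n×r}` has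
full column rank `r = rank Ē`, the matrix `C̄ Ē₀` has full column rank,
i.e. `rank(C̄ Ē₀) = rank Ē`. -/
theorem stmt6 {m n q r : ℕ}
    (Cbar : Matrix (Fin m) (Fin n) ℝ) (Ebar : Matrix (Fin n) (Fin q) ℝ)
    (CEp : Matrix (Fin q) (Fin m) ℝ)
    (hCEp1 : (Cbar * Ebar) * CEp * (Cbar * Ebar) = Cbar * Ebar)
    (hCEp2 : CEp * (Cbar * Ebar) * CEp = CEp)
    (hGE : ((1 : Matrix (Fin n) (Fin n) ℝ) - Ebar * CEp * Cbar) * Ebar = 0) :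
    (Cbar * Ebar).rank = Ebar.rank ∧
      ∀ (E0 : Matrix (Fin n) (Fin r) ℝ) (E1 : Matrix (Fin r) (Fin q) ℝ),
        Ebar = E0 * E1 → E0.rank = r → r = Ebar.rank →
          (Cbar * E0).rank = Ebar.rank := by
  have hfac : Ebar = (Ebar * CEp) * (Cbar * Ebar) := by
    have h2 : Ebar = Ebar * CEp * Cbar * Ebar := by
      have h := hGE
      rw [Matrix.sub_mul, Matrix.one_mul, sub_eq_zero] at h
      exact h
    rw [Matrix.mul_assoc, Matrix.mul_assoc] at h2
    rw [← Matrix.mul_assoc] at h2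
    exact h2
  have hmain : (Cbar * Ebar).rank = Ebar.rank := by
    refine le_antisymm (Matrix.rank_mul_le_right _ _) ?_
    calc Ebar.rank = ((Ebar * CEp) * (Cbar * Ebar)).rank := by rw [← hfac]
      _ ≤ (Cbar * Ebar).rank := Matrix.rank_mul_le_right _ _
  refine ⟨hmain, fun E0 E1 hE hE0 hr => ?_⟩
  refine le_antisymm ?_ ?_
  · calc (Cbar * E0).rank ≤ E0.rank := Matrix.rank_mul_le_right _ _
      _ = Ebar.rank := by rw [hE0, hr]
  · calc Ebar.rank = (Cbar * Ebar).rank := hmain.symm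
      _ = ((Cbar * E0) * E1).rank := by rw [hE, ← Matrix.mul_assoc]
      _ ≤ (Cbar * E0).rank := Matrix.rank_mul_le_left _ _
end

section
/- Assume: (1°) G Ē = 0; (2°) for every s ∈ ℂ the complexified (n+m)×n stacked matrix [s I_n − G Ā; C̄] has rank n, where Ā = A − E F⁺ C; and rank C̄ < n. Then rank [C F] > rank [E; F], where [C F] is the m×(n+q) augmented matrix and [E; F] is the (n+m)×q stacked matrix. Equivalently, rank C̄ > rank Ē. -/
open Matrix Module

lemma aux_rank_add_le {K : Type*} [Field K] {m n : Type*} [Fintype m] [Fintype n]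
    (A B : Matrix m n K) : (A + B).rank ≤ A.rank + B.rank := by
  have h1 : LinearMap.range (A + B).mulVecLin ≤
      LinearMap.range A.mulVecLin ⊔ LinearMap.range B.mulVecLin := by
    rw [Matrix.mulVecLin_add]
    rintro x ⟨v, rfl⟩
    exact Submodule.add_mem_sup ⟨v, rfl⟩ ⟨v, rfl⟩
  calc (A + B).rank ≤ finrank K ↥(LinearMap.range A.mulVecLin ⊔ LinearMap.range B.mulVecLin) :=
        Submodule.finrank_mono h1
    _ ≤ A.rank + B.rank := Submodule.finrank_add_le_finrank_add_finrank _ _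

lemma aux_fromRows_add {K : Type*} [Semiring K] {m₁ m₂ n : Type*}
    (A A' : Matrix m₁ n K) (B B' : Matrix m₂ n K) :
    Matrix.fromRows A B + Matrix.fromRows A' B' = Matrix.fromRows (A + A') (B + B') := by
  ext i j; cases i <;> simp [Matrix.fromRows_apply_inl, Matrix.fromRows_apply_inr]

/-- Theorem 4: Under `G Ē = 0`, PBH observability of `(G Ā, C̄)` over `ℂ`,
and `rank C̄ < n`, one has `rank [C F] > rank [E; F]`, equivalently `rank C̄ > rank Ē`. -/
theorem stmt7 {n m q : ℕ}
    (A : Matrix (Fin n) (Fin n) ℝ) (C : Matrix (Fin m) (Fin n) ℝ)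
    (E : Matrix (Fin n) (Fin q) ℝ) (F : Matrix (Fin m) (Fin q) ℝ)
    (Fp : Matrix (Fin q) (Fin m) ℝ)
    (hFp1 : F * Fp * F = F) (hFp2 : Fp * F * Fp = Fp)
    (Cbar : Matrix (Fin m) (Fin n) ℝ)
    (hCbar : Cbar = ((1 : Matrix (Fin m) (Fin m) ℝ) - F * Fp) * C)
    (Ebar : Matrix (Fin n) (Fin q) ℝ)
    (hEbar : Ebar = E * ((1 : Matrix (Fin q) (Fin q) ℝ) - Fp * F))
    (CEp : Matrix (Fin q) (Fin m) ℝ)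
    (hCEp1 : (Cbar * Ebar) * CEp * (Cbar * Ebar) = Cbar * Ebar)
    (hCEp2 : CEp * (Cbar * Ebar) * CEp = CEp)
    (G : Matrix (Fin n) (Fin n) ℝ)
    (hG : G = (1 : Matrix (Fin n) (Fin n) ℝ) - Ebar * CEp * Cbar)
    (Abar : Matrix (Fin n) (Fin n) ℝ)
    (hAbar : Abar = A - E * Fp * C)
    (hGE : G * Ebar = 0)
    (hPBH : ∀ s : ℂ,
      (Matrix.fromRows (s • (1 : Matrix (Fin n) (Fin n) ℂ) - (G * Abar).map Complex.ofReal)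
          (Cbar.map Complex.ofReal)).rank = n)
    (hCrank : Cbar.rank < n) :
    (Matrix.fromCols C F).rank > (Matrix.fromRows E F).rank ∧
      Cbar.rank > Ebar.rank := by
  -- basic identities
  have hFFpFFp : F * Fp * (F * Fp) = F * Fp := by rw [← Matrix.mul_assoc, hFp1]
  have hidem : ((1 : Matrix (Fin m) (Fin m) ℝ) - F * Fp) * ((1 : Matrix (Fin m) (Fin m) ℝ) - F * Fp)
      = (1 : Matrix (Fin m) (Fin m) ℝ) - F * Fp := by
    rw [sub_mul, one_mul, mul_sub, mul_one, hFFpFFp, sub_self, sub_zero]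
  have hCbarInv : ((1 : Matrix (Fin m) (Fin m) ℝ) - F * Fp) * Cbar = Cbar := by
    rw [hCbar, ← Matrix.mul_assoc, hidem]
  have hFkill : ((1 : Matrix (Fin m) (Fin m) ℝ) - F * Fp) * F = 0 := by
    rw [Matrix.sub_mul, Matrix.one_mul, hFp1, sub_self]
  -- from G Ē = 0 : Ē = (Ē CEp)(C̄ Ē)
  have hE1 : (Ebar * CEp) * (Cbar * Ebar) = Ebar := by
    have h := hGE
    rw [hG, Matrix.sub_mul, Matrix.one_mul, sub_eq_zero] at h
    rw [Matrix.mul_assoc (Ebar * CEp) Cbar Ebar] at h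
    exact h.symm
  have hrE_le : Ebar.rank ≤ (Cbar * Ebar).rank := by
    conv_lhs => rw [← hE1]
    exact Matrix.rank_mul_le_right _ _
  have hCE_le : (Cbar * Ebar).rank ≤ Cbar.rank := Matrix.rank_mul_le_left _ _
  -- key strict inequality
  have key : Ebar.rank < Cbar.rank := by
    by_contra hcon
    push_neg at hcon
    have hEq : (Cbar * Ebar).rank = Cbar.rank :=
      le_antisymm hCE_le (hcon.trans hrE_le)
    have hle : LinearMap.range (Cbar * Ebar).mulVecLin ≤ LinearMap.range Cbar.mulVecLin := by
      rw [Matrix.mulVecLin_mul]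
      exact LinearMap.range_comp_le_range _ _
    have hrange : LinearMap.range (Cbar * Ebar).mulVecLin = LinearMap.range Cbar.mulVecLin :=
      Submodule.eq_of_le_of_finrank_le hle (le_of_eq hEq.symm)
    -- C̄ (Ē CEp C̄) = C̄, i.e. C̄ G = 0
    have hCG : Cbar * G = 0 := by
      have hcol : ∀ v : Fin n → ℝ, (Cbar * (Ebar * CEp * Cbar)) *ᵥ v = Cbar *ᵥ v := by
        intro v
        have hv : Cbar *ᵥ v ∈ LinearMap.range (Cbar * Ebar).mulVecLin := by
          rw [hrange]; exact ⟨v, rfl⟩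
        obtain ⟨u, hu⟩ := hv
        have hu' : (Cbar * Ebar) *ᵥ u = Cbar *ᵥ v := hu
        calc (Cbar * (Ebar * CEp * Cbar)) *ᵥ v
            = ((Cbar * Ebar * CEp) * Cbar) *ᵥ v := by
              rw [show Cbar * (Ebar * CEp * Cbar) = (Cbar * Ebar * CEp) * Cbar by
                simp only [Matrix.mul_assoc]]
          _ = (Cbar * Ebar * CEp) *ᵥ (Cbar *ᵥ v) := by rw [Matrix.mulVec_mulVec]
          _ = (Cbar * Ebar * CEp) *ᵥ ((Cbar * Ebar) *ᵥ u) := by rw [hu']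
          _ = ((Cbar * Ebar) * CEp * (Cbar * Ebar)) *ᵥ u := by
              rw [Matrix.mulVec_mulVec]
          _ = (Cbar * Ebar) *ᵥ u := by rw [hCEp1]
          _ = Cbar *ᵥ v := hu'
      have hzero : ∀ v : Fin n → ℝ, (Cbar * G) *ᵥ v = 0 := by
        intro v
        rw [hG, Matrix.mul_sub, Matrix.mul_one, Matrix.sub_mulVec, hcol v, sub_self]
      ext i j
      have h := congrFun (hzero (Pi.single j 1)) i
      simpa [Matrix.mulVec_single] using h
    -- complexify and use PBH
    set Cc : Matrix (Fin m) (Fin n) ℂ := Cbar.map Complex.ofReal with hCc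
    set Bc : Matrix (Fin n) (Fin n) ℂ := (G * Abar).map Complex.ofReal with hBc
    have hCBreal : Cbar * (G * Abar) = 0 := by rw [← Matrix.mul_assoc, hCG, Matrix.zero_mul]
    have hCB : Cc * Bc = 0 := by
      have h1 : (Cbar * (G * Abar)).map (Complex.ofRealHom : ℝ →+* ℂ) =
          Cbar.map (Complex.ofRealHom : ℝ →+* ℂ) * (G * Abar).map (Complex.ofRealHom : ℝ →+* ℂ) :=
        Matrix.map_mul
      rw [hCBreal] at h1
      have h0 : ((0 : Matrix (Fin m) (Fin n) ℝ)).map (Complex.ofRealHom : ℝ →+* ℂ) = 0 :=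
        Matrix.map_zero _ (map_zero _)
      rw [h0] at h1
      exact h1.symm
    -- real kernel vector
    have hkerR : LinearMap.ker Cbar.mulVecLin ≠ ⊥ := by
      intro hbot
      have h2 := LinearMap.finrank_range_add_finrank_ker Cbar.mulVecLin
      rw [hbot, finrank_bot, add_zero, Module.finrank_fin_fun] at h2
      exact absurd h2 (Nat.ne_of_lt hCrank)
    obtain ⟨v, hvmem, hv0⟩ := Submodule.exists_mem_ne_zero_of_ne_bot hkerR
    have hvC : Cbar *ᵥ v = 0 := hvmem
    set w : Fin n → ℂ := fun i => (v i : ℂ) with hwdef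
    have hw : Cc *ᵥ w = 0 := by
      funext i
      have h := congrFun hvC i
      simp only [Matrix.mulVec, dotProduct, Pi.zero_apply] at h ⊢
      have : ∑ j, Cc i j * w j = ((∑ j, Cbar i j * v j : ℝ) : ℂ) := by
        push_cast [hCc, hwdef, Matrix.map_apply]
        rfl
      rw [this, h, Complex.ofReal_zero]
    have hw0 : w ≠ 0 := by
      intro hc
      apply hv0
      funext i
      have h := congrFun hc i
      simp only [hwdef, Pi.zero_apply] at h ⊢
      exact_mod_cast h
    -- kernel of Cc as an invariant subspace
    set K : Submodule ℂ (Fin n → ℂ) := LinearMap.ker Cc.mulVecLin with hK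
    have hwK : w ∈ K := hw
    haveI : Nontrivial K := nontrivial_of_ne ⟨w, hwK⟩ 0 (by
      intro hc
      exact hw0 (by simpa using congrArg Subtype.val hc))
    have hmap : ∀ x ∈ K, Bc.mulVecLin x ∈ K := by
      intro x _
      show Cc *ᵥ (Bc *ᵥ x) = 0
      rw [Matrix.mulVec_mulVec, hCB, Matrix.zero_mulVec]
    set f : K →ₗ[ℂ] K := (Bc.mulVecLin).restrict hmap with hf
    obtain ⟨s, hs⟩ := Module.End.exists_eigenvalue f
    obtain ⟨⟨x, hxK⟩, hxe⟩ := hs.exists_hasEigenvector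
    have hx0 : x ≠ 0 := by
      intro hc
      exact hxe.right (by simpa [Subtype.ext_iff] using hc)
    have hBx : Bc *ᵥ x = s • x := by
      have := hxe.apply_eq_smul
      have h2 := congrArg Subtype.val this
      simpa [hf, LinearMap.restrict_apply] using h2
    have hCx : Cc *ᵥ x = 0 := hxK
    -- x is in the kernel of the PBH matrix
    set P : Matrix (Fin n ⊕ Fin m) (Fin n) ℂ :=
      Matrix.fromRows (s • (1 : Matrix (Fin n) (Fin n) ℂ) - Bc) Cc with hP
    have hPx : P *ᵥ x = 0 := by
      rw [hP, Matrix.fromRows_mulVec, Matrix.sub_mulVec, Matrix.smul_mulVec,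
        Matrix.one_mulVec, hBx, sub_self]
      funext i
      cases i <;> simp [hCx]
    have hrkP : P.rank = n := hPBH s
    have h2 := LinearMap.finrank_range_add_finrank_ker P.mulVecLin
    rw [Module.finrank_fin_fun] at h2
    have hkerP : finrank ℂ (LinearMap.ker P.mulVecLin) = 0 := by
      have : P.rank = finrank ℂ (LinearMap.range P.mulVecLin) := rfl
      omega
    have hbotP : LinearMap.ker P.mulVecLin = ⊥ := Submodule.finrank_eq_zero.mp hkerP
    have : x ∈ LinearMap.ker P.mulVecLin := hPx
    rw [hbotP] at this
    exact hx0 (by simpa using this)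
  refine ⟨?_, key⟩
  -- rank [E; F] ≤ rank Ē + rank F
  have hEsplit : Matrix.fromRows E F =
      Matrix.fromRows Ebar (0 : Matrix (Fin m) (Fin q) ℝ) + Matrix.fromRows (E * Fp * F) F := by
    have hEsum : Ebar + E * Fp * F = E := by
      rw [hEbar, Matrix.mul_sub, Matrix.mul_one, Matrix.mul_assoc]
      abel
    rw [aux_fromRows_add, zero_add, hEsum]
  have hr1 : (Matrix.fromRows Ebar (0 : Matrix (Fin m) (Fin q) ℝ)).rank ≤ Ebar.rank := by
    have : Matrix.fromRows Ebar (0 : Matrix (Fin m) (Fin q) ℝ) =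
        Matrix.fromRows (1 : Matrix (Fin n) (Fin n) ℝ) (0 : Matrix (Fin m) (Fin n) ℝ) * Ebar := by
      rw [Matrix.fromRows_mul, Matrix.one_mul, Matrix.zero_mul]
    rw [this]
    exact Matrix.rank_mul_le_right _ _
  have hr2 : (Matrix.fromRows (E * Fp * F) F).rank ≤ F.rank := by
    have : Matrix.fromRows (E * Fp * F) F =
        Matrix.fromRows (E * Fp) (1 : Matrix (Fin m) (Fin m) ℝ) * F := by
      rw [Matrix.fromRows_mul, Matrix.one_mul]
    rw [this]
    exact Matrix.rank_mul_le_right _ _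
  have hEF_le : (Matrix.fromRows E F).rank ≤ Ebar.rank + F.rank := by
    calc (Matrix.fromRows E F).rank
        ≤ (Matrix.fromRows Ebar (0 : Matrix (Fin m) (Fin q) ℝ)).rank +
            (Matrix.fromRows (E * Fp * F) F).rank := by rw [hEsplit]; exact aux_rank_add_le _ _
      _ ≤ Ebar.rank + F.rank := add_le_add hr1 hr2
  -- rank [C F] ≥ rank C̄ + rank F
  have hsub1 : LinearMap.range Cbar.mulVecLin ⊔ LinearMap.range F.mulVecLin ≤
      LinearMap.range (Matrix.fromCols C F).mulVecLin := by
    apply sup_le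
    · rintro x ⟨v, rfl⟩
      refine ⟨Sum.elim v ((-(Fp * C)) *ᵥ v), ?_⟩
      show (Matrix.fromCols C F) *ᵥ (Sum.elim v ((-(Fp * C)) *ᵥ v)) = Cbar *ᵥ v
      rw [Matrix.fromCols_mulVec_sumElim, Matrix.mulVec_mulVec, ← Matrix.add_mulVec]
      congr 1
      rw [hCbar, Matrix.sub_mul, Matrix.one_mul, Matrix.mul_neg, ← Matrix.mul_assoc]
      abel
    · rintro x ⟨v, rfl⟩
      refine ⟨Sum.elim 0 v, ?_⟩
      show (Matrix.fromCols C F) *ᵥ (Sum.elim 0 v) = F *ᵥ v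
      rw [Matrix.fromCols_mulVec_sumElim, Matrix.mulVec_zero, zero_add]
  have hdisj : LinearMap.range Cbar.mulVecLin ⊓ LinearMap.range F.mulVecLin = ⊥ := by
    rw [eq_bot_iff]
    rintro x ⟨⟨u, hu⟩, ⟨wv, hwv⟩⟩
    have hu' : Cbar *ᵥ u = x := hu
    have hwv' : F *ᵥ wv = x := hwv
    have h1 : ((1 : Matrix (Fin m) (Fin m) ℝ) - F * Fp) *ᵥ x = x := by
      rw [← hu', Matrix.mulVec_mulVec, hCbarInv]
    have h2 : ((1 : Matrix (Fin m) (Fin m) ℝ) - F * Fp) *ᵥ x = 0 := by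
      rw [← hwv', Matrix.mulVec_mulVec, hFkill, Matrix.zero_mulVec]
    have : x = 0 := by rw [← h1, h2]
    simp [this]
  have hsum : finrank ℝ ↥(LinearMap.range Cbar.mulVecLin ⊔ LinearMap.range F.mulVecLin) =
      Cbar.rank + F.rank := by
    have h := Submodule.finrank_sup_add_finrank_inf_eq
      (LinearMap.range Cbar.mulVecLin) (LinearMap.range F.mulVecLin)
    rw [hdisj, finrank_bot, add_zero] at h
    exact h
  have hCF_ge : Cbar.rank + F.rank ≤ (Matrix.fromCols C F).rank := by
    rw [← hsum]
    exact Submodule.finrank_mono hsub1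
  have : (Matrix.fromRows E F).rank < (Matrix.fromCols C F).rank := by
    calc (Matrix.fromRows E F).rank ≤ Ebar.rank + F.rank := hEF_le
      _ < Cbar.rank + F.rank := by omega
      _ ≤ (Matrix.fromCols C F).rank := hCF_ge
  exact this
end

section
/- Let Z be an n×n complex matrix and C an m×n complex matrix such that C Z = 0 and for every s ∈ ℂ the (n+m)×n stacked matrix [s I_n − Z; C] has rank n. Then Z = 0 and rank C = n. -/
open Matrix Polynomial Module

section aux
variable {n m : ℕ} (Z : Matrix (Fin n) (Fin n) ℂ) (C : Matrix (Fin m) (Fin n) ℂ)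

/-- From full column rank of the stacked matrix: joint kernel is trivial. -/
lemma aux_key
    (hPBH : ∀ s : ℂ,
      (Matrix.fromRows (s • (1 : Matrix (Fin n) (Fin n) ℂ) - Z) C).rank = n)
    (s : ℂ) (v : Fin n → ℂ) (h1 : s • v - Z *ᵥ v = 0) (h2 : C *ᵥ v = 0) : v = 0 := by
  set M := Matrix.fromRows (s • (1 : Matrix (Fin n) (Fin n) ℂ) - Z) C with hM
  have hr : M.rank = n := hPBH s
  have hrn := LinearMap.finrank_range_add_finrank_ker M.mulVecLin
  rw [show Module.finrank ℂ (Fin n → ℂ) = n from Module.finrank_fin_fun ℂ] at hrn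
  have hrank : Module.finrank ℂ (LinearMap.range M.mulVecLin) = n := hr
  have hker : LinearMap.ker M.mulVecLin = ⊥ := by
    have h0 : Module.finrank ℂ (LinearMap.ker M.mulVecLin) = 0 := by omega
    exact Submodule.finrank_eq_zero.mp h0
  have hv : M.mulVecLin v = 0 := by
    rw [Matrix.mulVecLin_apply, hM, Matrix.fromRows_mulVec]
    have : (s • (1 : Matrix (Fin n) (Fin n) ℂ) - Z) *ᵥ v = 0 := by
      rw [Matrix.sub_mulVec, Matrix.smul_mulVec, Matrix.one_mulVec]
      exact h1
    rw [this, h2]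
    ext (i | j) <;> rfl
  have := hker ▸ LinearMap.mem_ker.mpr hv
  simpa using this
end aux

/-- If `Z ∈ ℂ^{n×n}` and `C ∈ ℂ^{m×n}` satisfy `C Z = 0` and
`rank [s Iₙ − Z; C] = n` for every `s ∈ ℂ`, then `Z = 0` and `rank C = n`. -/
theorem stmt8 {n m : ℕ}
    (Z : Matrix (Fin n) (Fin n) ℂ) (C : Matrix (Fin m) (Fin n) ℂ)
    (hCZ : C * Z = 0)
    (hPBH : ∀ s : ℂ,
      (Matrix.fromRows (s • (1 : Matrix (Fin n) (Fin n) ℂ) - Z) C).rank = n) :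
    Z = 0 ∧ C.rank = n := by
  have key := aux_key Z C hPBH
  -- C kills the range of Z
  have hCrange : ∀ w : Fin n → ℂ, C *ᵥ (Z *ᵥ w) = 0 := by
    intro w
    rw [Matrix.mulVec_mulVec, hCZ, Matrix.zero_mulVec]
  set φ : Module.End ℂ (Fin n → ℂ) := Z.mulVecLin with hφ
  -- every root of the minimal polynomial of φ is zero
  have hroot : ∀ μ : ℂ, (minpoly ℂ φ).IsRoot μ → μ = 0 := by
    intro μ hμ
    by_contra hμ0
    have hev : φ.HasEigenvalue μ := Module.End.hasEigenvalue_iff_isRoot.mpr hμ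
    obtain ⟨v, hv⟩ := hev.exists_hasEigenvector
    have hv0 : v ≠ 0 := hv.2
    have hZv : Z *ᵥ v = μ • v := hv.apply_eq_smul
    have hCv : C *ᵥ v = 0 := by
      have : v = μ⁻¹ • (Z *ᵥ v) := by rw [hZv, smul_smul, inv_mul_cancel₀ hμ0, one_smul]
      rw [this, Matrix.mulVec_smul, hCrange, smul_zero]
    have : v = 0 := key μ v (by rw [hZv, sub_self]) hCv
    exact hv0 this
  -- hence the minimal polynomial is a power of X, so φ is nilpotent
  have hint : IsIntegral ℂ φ := Algebra.IsIntegral.isIntegral φ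
  have hmon : (minpoly ℂ φ).Monic := minpoly.monic hint
  have hsplit : (minpoly ℂ φ).Splits := IsAlgClosed.splits _
  have hminp : minpoly ℂ φ = X ^ (minpoly ℂ φ).natDegree := by
    have h1 := hsplit.eq_prod_roots_of_monic hmon
    have h2 : (minpoly ℂ φ).roots.map (fun a => X - Polynomial.C a)
        = (minpoly ℂ φ).roots.map (fun _ => (X : ℂ[X])) := by
      apply Multiset.map_congr rfl
      intro r hr
      rw [hroot r ((Polynomial.mem_roots (hmon.ne_zero)).mp hr), map_zero, sub_zero]
    have h3 : Multiset.card (minpoly ℂ φ).roots = (minpoly ℂ φ).natDegree :=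
      (Polynomial.splits_iff_card_roots).mp hsplit
    conv_lhs => rw [h1, h2, Multiset.map_const', Multiset.prod_replicate]
    rw [h3]
  have hnil : φ ^ (minpoly ℂ φ).natDegree = 0 := by
    have h := minpoly.aeval ℂ φ
    rwa [hminp, map_pow, Polynomial.aeval_X] at h
  -- descent: pointwise vanishing of a power implies Z = 0
  have hdesc : ∀ k : ℕ, (∀ v, (φ ^ (k + 1)) v = 0) → ∀ v, Z *ᵥ v = 0 := by
    intro k
    induction k with
    | zero =>
      intro h v
      have := h v
      rwa [pow_one] at this
    | succ k ih =>
      intro h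
      apply ih
      intro v
      set x := (φ ^ (k + 1)) v with hx
      have hZx : Z *ᵥ x = 0 := by
        have h2 : (φ ^ (k + 1 + 1)) v = φ ((φ ^ (k + 1)) v) := by
          rw [pow_succ']; rfl
        have := h v
        rw [h2, ← hx] at this
        exact this
      have hCx : C *ᵥ x = 0 := by
        have hx' : x = Z *ᵥ ((φ ^ k) v) := by
          rw [hx, pow_succ']; rfl
        rw [hx', hCrange]
      exact key 0 x (by simpa using hZx) hCx
  have hZ0 : Z = 0 := by
    have hv := hdesc (minpoly ℂ φ).natDegree (by
      intro v
      rw [pow_succ, Module.End.mul_apply, hnil]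
      simp)
    ext i j
    have := congrFun (hv (Pi.single j 1)) i
    simpa [Matrix.mulVec_single] using this
  refine ⟨hZ0, ?_⟩
  -- rank of C
  have hkerC : LinearMap.ker C.mulVecLin = ⊥ := by
    rw [eq_bot_iff]
    intro v hv
    have hCv : C *ᵥ v = 0 := hv
    have : v = 0 := key 0 v (by simp [hZ0]) hCv
    simpa using this
  have hrn := LinearMap.finrank_range_add_finrank_ker C.mulVecLin
  rw [show Module.finrank ℂ (Fin n → ℂ) = n from Module.finrank_fin_fun ℂ,
    hkerC, finrank_bot, add_zero] at hrn
  exact hrn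
end

section
/- Let n > m ≥ 1, let T₁, T₂ ∈ ℝ^{(n−m)×n} and C ∈ ℝ^{m×n} be such that both stacked n×n matrices [T₁; C] and [T₂; C] are invertible, and let S₁ ∈ ℝ^{n×(n−m)} satisfy T₁ S₁ = I_{n−m} and C S₁ = 0 (i.e. S₁ consists of the first n−m columns of [T₁; C]⁻¹). Then the (n−m)×(n−m) matrix T₂ S₁ is invertible. -/
/-- Let `n > m ≥ 1`, `T₁, T₂ ∈ ℝ^{(n−m)×n}`, `C ∈ ℝ^{m×n}` with both stacked
matrices `[T₁; C]` and `[T₂; C]` invertible, and let `S₁ ∈ ℝ^{n×(n−m)}` satisfy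
`T₁ S₁ = I` and `C S₁ = 0` (so that `S₁` consists of the first `n−m` columns of
`[T₁; C]⁻¹`).  Then `T₂ S₁` is invertible. -/
theorem stmt9 {n m : ℕ} (hm : 1 ≤ m) (hmn : m < n)
    (T1 T2 : Matrix (Fin (n - m)) (Fin n) ℝ) (C : Matrix (Fin m) (Fin n) ℝ)
    (hinv1 : ∃ V1 : Matrix (Fin n) (Fin (n - m) ⊕ Fin m) ℝ,
      Matrix.fromRows T1 C * V1 = 1 ∧ V1 * Matrix.fromRows T1 C = 1)
    (hinv2 : ∃ V2 : Matrix (Fin n) (Fin (n - m) ⊕ Fin m) ℝ,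
      Matrix.fromRows T2 C * V2 = 1 ∧ V2 * Matrix.fromRows T2 C = 1)
    (S1 : Matrix (Fin n) (Fin (n - m)) ℝ)
    (hS1a : T1 * S1 = 1) (hS1b : C * S1 = 0) :
    IsUnit (T2 * S1) := by
  obtain ⟨V2, hV2a, hV2b⟩ := hinv2
  rw [Matrix.isUnit_iff_isUnit_det, isUnit_iff_ne_zero]
  intro hdet
  obtain ⟨v, hv, hmv⟩ := (Matrix.exists_mulVec_eq_zero_iff).mpr hdet
  have h1 : S1.mulVec v = 0 := by
    have hT2 : T2.mulVec (S1.mulVec v) = 0 := by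
      rw [Matrix.mulVec_mulVec, hmv]
    have hC : C.mulVec (S1.mulVec v) = 0 := by
      rw [Matrix.mulVec_mulVec, hS1b, Matrix.zero_mulVec]
    have hfr : (Matrix.fromRows T2 C).mulVec (S1.mulVec v) = 0 := by
      funext i
      cases i with
      | inl i => simpa using congrFun hT2 i
      | inr i => simpa using congrFun hC i
    calc S1.mulVec v = (V2 * Matrix.fromRows T2 C).mulVec (S1.mulVec v) := by
          rw [hV2b, Matrix.one_mulVec]
      _ = V2.mulVec ((Matrix.fromRows T2 C).mulVec (S1.mulVec v)) := by
          simp only [Matrix.mulVec_mulVec, Matrix.mul_assoc]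
      _ = 0 := by rw [hfr, Matrix.mulVec_zero]
  apply hv
  calc v = (T1 * S1).mulVec v := by rw [hS1a, Matrix.one_mulVec]
    _ = T1.mulVec (S1.mulVec v) := by rw [Matrix.mulVec_mulVec]
    _ = 0 := by rw [h1, Matrix.mulVec_zero]
end

section
/- Let M₁ ∈ ℝ^{k₁×k₁}, M₂ ∈ ℝ^{k₂×k₂}, K ∈ ℝ^{k₂×k₁}, and σ ∈ ℝ be such that every complex eigenvalue μ of M₂ satisfies Re μ < σ and every complex eigenvalue ν of M₁ satisfies Re ν > σ. Then exp(τ M₂) · K · exp(−τ M₁) tends to the zero matrix as τ → +∞. -/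
open Filter Topology NormedSpace Polynomial

noncomputable section

namespace Stmt11Aux

section Aux

attribute [local instance]
  Matrix.linftyOpNormedAddCommGroup Matrix.linftyOpNormedRing
  Matrix.linftyOpNormedAlgebra Matrix.linftyOpNormedSpace

variable {n : ℕ}


lemma charpoly_eval (A : Matrix (Fin n) (Fin n) ℂ) (μ : ℂ) :
    A.charpoly.eval μ = (algebraMap ℂ (Matrix (Fin n) (Fin n) ℂ) μ - A).det := by
  rw [Matrix.charpoly, _root_.eval_det, Matrix.matPolyEquiv_charmatrix]
  simp [Matrix.scalar, Matrix.algebraMap_eq_diagonal]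

lemma mem_spectrum_iff_root (A : Matrix (Fin n) (Fin n) ℂ) (μ : ℂ) :
    μ ∈ spectrum ℂ A ↔ A.charpoly.IsRoot μ := by
  rw [spectrum.mem_iff, Matrix.isUnit_iff_isUnit_det, isUnit_iff_ne_zero, not_not,
    Polynomial.IsRoot, charpoly_eval]

lemma mulVec_exp_eigen (A : Matrix (Fin n) (Fin n) ℂ) {μ : ℂ} {v : Fin n → ℂ}
    (hv : A.mulVec v = μ • v) :
    (exp A).mulVec v = Complex.exp μ • v := by
  have hpow : ∀ k : ℕ, (A ^ k).mulVec v = μ ^ k • v := by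
    intro k
    induction k with
    | zero => simp
    | succ k ih =>
      rw [pow_succ', ← Matrix.mulVec_mulVec, ih, Matrix.mulVec_smul, hv, smul_smul, ← pow_succ]
  let L : Matrix (Fin n) (Fin n) ℂ →ₗ[ℂ] (Fin n → ℂ) :=
    { toFun := fun M => M.mulVec v
      map_add' := fun M N => Matrix.add_mulVec M N v
      map_smul' := fun c M => Matrix.smul_mulVec c M v }
  have hL : Continuous L := L.continuous_of_finiteDimensional
  have hs : Summable fun k : ℕ => (Nat.factorial k : ℂ)⁻¹ • A ^ k := expSeries_summable' A
  have h1 : (exp A).mulVec v = ∑' k : ℕ, ((Nat.factorial k : ℂ)⁻¹ • A ^ k).mulVec v := by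
    rw [exp_eq_tsum ℂ]
    exact (hs.hasSum.map L hL).tsum_eq.symm
  have h2 : ∀ k : ℕ, ((Nat.factorial k : ℂ)⁻¹ • A ^ k).mulVec v = ((Nat.factorial k : ℂ)⁻¹ * μ ^ k) • v := by
    intro k
    rw [Matrix.smul_mulVec, hpow, smul_smul]
  rw [h1]
  simp_rw [h2]
  have hsμ : Summable fun k : ℕ => (Nat.factorial k : ℂ)⁻¹ * μ ^ k := by
    simpa [smul_eq_mul] using expSeries_summable' (𝕂 := ℂ) (𝔸 := ℂ) μ
  rw [Summable.tsum_smul_const hsμ]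
  congr 1
  rw [Complex.exp_eq_exp_ℂ, exp_eq_tsum ℂ]
  simp [smul_eq_mul]

lemma spectrum_exp_subset (A : Matrix (Fin n) (Fin n) ℂ) {μ : ℂ}
    (hμ : μ ∈ spectrum ℂ (exp A)) : ∃ z ∈ spectrum ℂ A, μ = Complex.exp z := by
  classical
  have hμ' : μ ∈ spectrum ℂ (Matrix.toLinAlgEquiv' (exp A)) := by
    rwa [AlgEquiv.spectrum_eq]
  have hev : Module.End.HasEigenvalue (Matrix.toLinAlgEquiv' (exp A) : Module.End ℂ (Fin n → ℂ)) μ :=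
    Module.End.HasEigenvalue.of_mem_spectrum hμ'
  set E := Module.End.eigenspace (Matrix.toLinAlgEquiv' (exp A) : Module.End ℂ (Fin n → ℂ)) μ with hE
  have hEbot : E ≠ ⊥ := hev
  haveI : Nontrivial E := Submodule.nontrivial_iff_ne_bot.mpr hEbot
  have hcomm : exp A * A = A * exp A := (((Commute.refl A).exp_left).symm : Commute A (exp A)).eq.symm
  have hinv : ∀ x ∈ E, (Matrix.toLinAlgEquiv' A) x ∈ E := by
    intro x hx
    rw [hE, Module.End.mem_eigenspace_iff] at hx ⊢
    have : (Matrix.toLinAlgEquiv' (exp A)) ((Matrix.toLinAlgEquiv' A) x)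
        = (Matrix.toLinAlgEquiv' A) ((Matrix.toLinAlgEquiv' (exp A)) x) := by
      have := congrArg (fun M => Matrix.toLinAlgEquiv' M x) hcomm
      simpa [map_mul] using this
    rw [this, hx, map_smul]
  let f : E →ₗ[ℂ] E := (Matrix.toLinAlgEquiv' A : Module.End ℂ (Fin n → ℂ)).restrict hinv
  obtain ⟨z, hz⟩ := Module.End.exists_eigenvalue f
  obtain ⟨w, hw⟩ := hz.exists_hasEigenvector
  have hwmem : (w : Fin n → ℂ) ∈ E := w.2
  have hw0 : (w : Fin n → ℂ) ≠ 0 := fun h => hw.right (Subtype.ext h)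
  have hfw : (Matrix.toLinAlgEquiv' A) (w : Fin n → ℂ) = z • (w : Fin n → ℂ) := by
    have := Module.End.mem_eigenspace_iff.mp hw.left
    have := congrArg (Subtype.val) this
    simpa [f, LinearMap.restrict_apply] using this
  have hvec : A.mulVec (w : Fin n → ℂ) = z • (w : Fin n → ℂ) := by
    simpa [Matrix.toLinAlgEquiv'_apply] using hfw
  refine ⟨z, ?_, ?_⟩
  · rw [← AlgEquiv.spectrum_eq Matrix.toLinAlgEquiv' A,
      ← Module.End.hasEigenvalue_iff_mem_spectrum]
    exact Module.End.hasEigenvalue_of_hasEigenvector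
      ⟨Module.End.mem_eigenspace_iff.mpr hfw, hw0⟩
  · have h1 : (Matrix.toLinAlgEquiv' (exp A)) (w : Fin n → ℂ) = μ • (w : Fin n → ℂ) :=
      Module.End.mem_eigenspace_iff.mp hwmem
    have h2 : (exp A).mulVec (w : Fin n → ℂ) = Complex.exp z • (w : Fin n → ℂ) :=
      mulVec_exp_eigen A hvec
    have h3 : μ • (w : Fin n → ℂ) = Complex.exp z • (w : Fin n → ℂ) := by
      rw [← h1]
      simpa [Matrix.toLinAlgEquiv'_apply] using h2
    exact smul_left_injective ℂ hw0 h3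

/-- powers of `exp A` tend to zero when the spectrum has negative real parts -/
lemma tendsto_pow_exp_zero (A : Matrix (Fin n) (Fin n) ℂ)
    (h : ∀ z ∈ spectrum ℂ A, z.re < 0) :
    Tendsto (fun m : ℕ => exp A ^ m) atTop (𝓝 0) := by
  rcases subsingleton_or_nontrivial (Matrix (Fin n) (Fin n) ℂ) with hs | hs
  · have : ∀ m : ℕ, exp A ^ m = 0 := fun m => Subsingleton.elim _ _
    simpa [this] using tendsto_const_nhds
  set B := exp A with hB
  have hρ : spectralRadius ℂ B < (1 : NNReal) := by
    apply spectrum.spectralRadius_lt_of_forall_lt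
    intro z hz
    obtain ⟨w, hw, rfl⟩ := spectrum_exp_subset A hz
    have : ‖Complex.exp w‖ < 1 := by
      rw [Complex.norm_exp]
      exact Real.exp_lt_one_iff.mpr (h w hw)
    rwa [← NNReal.coe_lt_coe, coe_nnnorm, NNReal.coe_one]
  have hρ1 : spectralRadius ℂ B < 1 := by simpa using hρ
  obtain ⟨c, hc1, hc2⟩ := exists_between hρ1
  have hgel := spectrum.pow_nnnorm_pow_one_div_tendsto_nhds_spectralRadius B
  have hev : ∀ᶠ m : ℕ in atTop, ((‖B ^ m‖₊ : ENNReal)) ^ (1 / (m : ℝ)) < c :=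
    hgel.eventually_lt_const hc1
  -- convert to ℝ bound eventually: ‖B^m‖ ≤ (c.toNNReal)^m
  have hcne : c ≠ ⊤ := (hc2.trans_le le_top).ne
  set r : NNReal := c.toNNReal with hr
  have hrc : (r : ENNReal) = c := ENNReal.coe_toNNReal hcne
  have hrlt1 : (r : ℝ) < 1 := by
    have : (r : ENNReal) < 1 := hrc ▸ hc2
    exact_mod_cast this
  have hbound : ∀ᶠ m : ℕ in atTop, ‖B ^ m‖ ≤ (r : ℝ) ^ m := by
    filter_upwards [hev, Filter.eventually_ge_atTop 1] with m hm hm1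
    have hm0 : (m : ℝ) ≠ 0 := by positivity
    have h1 : ((‖B ^ m‖₊ : ENNReal)) ≤ c ^ (m : ℕ) := by
      have h2 : (((‖B ^ m‖₊ : ENNReal)) ^ (1 / (m : ℝ))) ^ (m : ℝ) ≤ c ^ (m : ℝ) := by
        exact ENNReal.rpow_le_rpow hm.le (by positivity)
      rwa [← ENNReal.rpow_mul, one_div, inv_mul_cancel₀ hm0, ENNReal.rpow_one,
        ENNReal.rpow_natCast c m] at h2
    rw [← hrc, ← ENNReal.coe_pow, ENNReal.coe_le_coe] at h1
    calc ‖B ^ m‖ = ((‖B ^ m‖₊ : ℝ)) := rfl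
      _ ≤ ((r ^ m : NNReal) : ℝ) := by exact_mod_cast h1
      _ = (r : ℝ) ^ m := by push_cast; ring
  have hpow : Tendsto (fun m : ℕ => (r : ℝ) ^ m) atTop (𝓝 0) :=
    tendsto_pow_atTop_nhds_zero_of_lt_one r.coe_nonneg hrlt1
  have hnorm : Tendsto (fun m : ℕ => ‖B ^ m‖) atTop (𝓝 0) :=
    squeeze_zero' (Filter.Eventually.of_forall fun m => norm_nonneg _) hbound hpow
  exact tendsto_zero_iff_norm_tendsto_zero.mpr hnorm

/-- main decay for complex matrices with real parameter -/
lemma tendsto_exp_smul_zero (A : Matrix (Fin n) (Fin n) ℂ)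
    (h : ∀ z ∈ spectrum ℂ A, z.re < 0) :
    Tendsto (fun τ : ℝ => exp (τ • A)) atTop (𝓝 0) := by
  have key := tendsto_pow_exp_zero A h
  have keynorm : Tendsto (fun m : ℕ => ‖exp A ^ m‖) atTop (𝓝 0) :=
    tendsto_zero_iff_norm_tendsto_zero.mp key
  -- bound on s ∈ [0,1]
  have hcont : Continuous fun s : ℝ => exp (s • A) :=
    exp_continuous.comp (continuous_id.smul continuous_const)
  obtain ⟨C, hC⟩ :=
    (isCompact_Icc (a := (0:ℝ)) (b := 1)).exists_bound_of_continuousOn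
      (hcont.continuousOn (s := Set.Icc 0 1))
  have hC0 : 0 ≤ C := le_trans (norm_nonneg _) (hC 0 ⟨le_refl _, zero_le_one⟩)
  have hsplit : ∀ τ : ℝ, 0 ≤ τ →
      ‖exp (τ • A)‖ ≤ ‖exp A ^ ⌊τ⌋₊‖ * C := by
    intro τ hτ
    have hdecomp : τ • A = ((⌊τ⌋₊ : ℕ) • A) + (τ - (⌊τ⌋₊ : ℝ)) • A := by
      rw [← Nat.cast_smul_eq_nsmul ℝ, ← add_smul]
      ring_nf
    have hcomm : Commute ((⌊τ⌋₊ : ℕ) • A) ((τ - (⌊τ⌋₊ : ℝ)) • A) := by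
      apply Commute.smul_left
      apply Commute.smul_right
      exact Commute.refl A
    have hmul : exp (τ • A) = exp A ^ ⌊τ⌋₊ * exp ((τ - (⌊τ⌋₊ : ℝ)) • A) := by
      rw [hdecomp]
      exact (exp_add_of_commute hcomm).trans (congrArg (· * _) (exp_nsmul _ _))
    rw [hmul]
    have hmem : τ - (⌊τ⌋₊ : ℝ) ∈ Set.Icc (0:ℝ) 1 := by
      constructor
      · linarith [Nat.floor_le hτ]
      · linarith [Nat.lt_floor_add_one τ]
    calc ‖exp A ^ ⌊τ⌋₊ * exp ((τ - (⌊τ⌋₊ : ℝ)) • A)‖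
        ≤ ‖exp A ^ ⌊τ⌋₊‖ * ‖exp ((τ - (⌊τ⌋₊ : ℝ)) • A)‖ := norm_mul_le _ _
      _ ≤ ‖exp A ^ ⌊τ⌋₊‖ * C := by
          exact mul_le_mul_of_nonneg_left (hC _ hmem) (norm_nonneg _)
  have hg : Tendsto (fun τ : ℝ => ‖exp A ^ ⌊τ⌋₊‖ * C) atTop (𝓝 0) := by
    have := (keynorm.comp (tendsto_nat_floor_atTop (α := ℝ))).mul_const C
    simpa using this
  have : Tendsto (fun τ : ℝ => ‖exp (τ • A)‖) atTop (𝓝 0) := by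
    apply squeeze_zero' (Filter.Eventually.of_forall fun τ => norm_nonneg _) _ hg
    filter_upwards [Filter.eventually_ge_atTop (0:ℝ)] with τ hτ
    exact hsplit τ hτ
  exact tendsto_zero_iff_norm_tendsto_zero.mpr this

lemma norm_map_ofReal (U : Matrix (Fin n) (Fin n) ℝ) :
    ‖U.map (algebraMap ℝ ℂ)‖ = ‖U‖ := by
  rw [Matrix.linfty_opNorm_def, Matrix.linfty_opNorm_def]
  simp [Matrix.map_apply]

lemma map_exp_ofReal (A : Matrix (Fin n) (Fin n) ℝ) :
    (exp A).map (algebraMap ℝ ℂ) = exp (A.map (algebraMap ℝ ℂ)) := by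
  have hcont : Continuous ((algebraMap ℝ ℂ).mapMatrix :
      Matrix (Fin n) (Fin n) ℝ →+* Matrix (Fin n) (Fin n) ℂ) := by
    simpa [RingHom.mapMatrix] using
      (continuous_id.matrix_map (Complex.continuous_ofReal) :
        Continuous fun M : Matrix (Fin n) (Fin n) ℝ => M.map (algebraMap ℝ ℂ))
  have h1 := map_exp ((algebraMap ℝ ℂ).mapMatrix :
      Matrix (Fin n) (Fin n) ℝ →+* Matrix (Fin n) (Fin n) ℂ) hcont A
  rw [RingHom.mapMatrix_apply] at h1
  exact h1

lemma tendsto_exp_smul_zero_real (A : Matrix (Fin n) (Fin n) ℝ)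
    (h : ∀ z ∈ spectrum ℂ (A.map (algebraMap ℝ ℂ)), z.re < 0) :
    Tendsto (fun τ : ℝ => exp (τ • A)) atTop (𝓝 0) := by
  have hc := tendsto_exp_smul_zero (A.map (algebraMap ℝ ℂ)) h
  have hcn := tendsto_zero_iff_norm_tendsto_zero.mp hc
  apply tendsto_zero_iff_norm_tendsto_zero.mpr
  convert hcn using 2 with τ
  rw [← norm_map_ofReal, map_exp_ofReal]
  have : (τ • A).map (algebraMap ℝ ℂ) = τ • A.map (algebraMap ℝ ℂ) := by
    ext i j
    simp [Matrix.map_apply, Complex.real_smul]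
  rw [this]

lemma spectrum_re_lt_of_roots {M : Matrix (Fin n) (Fin n) ℝ} {σ : ℝ}
    (hM : ∀ μ ∈ (M.charpoly.map (algebraMap ℝ ℂ)).roots, μ.re < σ) :
    ∀ z ∈ spectrum ℂ ((M - σ • 1).map (algebraMap ℝ ℂ)), z.re < 0 := by
  intro z hz
  have hmap : (M - σ • 1).map (algebraMap ℝ ℂ)
      = M.map (algebraMap ℝ ℂ) - algebraMap ℂ (Matrix (Fin n) (Fin n) ℂ) (σ : ℂ) := by
    ext i j
    rcases eq_or_ne i j with rfl | hij
    · simp [Matrix.map_apply, Matrix.algebraMap_eq_diagonal, Matrix.diagonal_apply]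
    · simp [Matrix.map_apply, Matrix.algebraMap_eq_diagonal, Matrix.diagonal_apply, hij,
        Matrix.one_apply_ne hij]
  rw [hmap, ← spectrum.sub_singleton_eq] at hz
  obtain ⟨w, hw, y, hy, rfl⟩ := hz
  rw [Set.mem_singleton_iff] at hy
  subst hy
  have hroot : w ∈ (M.charpoly.map (algebraMap ℝ ℂ)).roots := by
    rw [Polynomial.mem_roots', ← Matrix.charpoly_map]
    exact ⟨(Matrix.charpoly_map M (algebraMap ℝ ℂ)) ▸
        ((M.charpoly_monic.map (algebraMap ℝ ℂ)).ne_zero),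
      (mem_spectrum_iff_root _ _).mp hw⟩
  have := hM w hroot
  simp only [Complex.sub_re, Complex.ofReal_re]
  linarith
lemma spectrum_re_lt_of_roots' {M : Matrix (Fin n) (Fin n) ℝ} {σ : ℝ}
    (hM : ∀ μ ∈ (M.charpoly.map (algebraMap ℝ ℂ)).roots, σ < μ.re) :
    ∀ z ∈ spectrum ℂ ((σ • 1 - M).map (algebraMap ℝ ℂ)), z.re < 0 := by
  intro z hz
  have hmap : (σ • 1 - M).map (algebraMap ℝ ℂ)
      = algebraMap ℂ (Matrix (Fin n) (Fin n) ℂ) (σ : ℂ) - M.map (algebraMap ℝ ℂ) := by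
    ext i j
    rcases eq_or_ne i j with rfl | hij
    · simp [Matrix.map_apply, Matrix.algebraMap_eq_diagonal, Matrix.diagonal_apply]
    · simp [Matrix.map_apply, Matrix.algebraMap_eq_diagonal, Matrix.diagonal_apply, hij,
        Matrix.one_apply_ne hij]
  rw [hmap, ← spectrum.singleton_sub_eq] at hz
  obtain ⟨y, hy, w, hw, rfl⟩ := hz
  rw [Set.mem_singleton_iff] at hy
  subst hy
  have hroot : w ∈ (M.charpoly.map (algebraMap ℝ ℂ)).roots := by
    rw [Polynomial.mem_roots', ← Matrix.charpoly_map]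
    exact ⟨(Matrix.charpoly_map M (algebraMap ℝ ℂ)) ▸
        ((M.charpoly_monic.map (algebraMap ℝ ℂ)).ne_zero),
      (mem_spectrum_iff_root _ _).mp hw⟩
  have := hM w hroot
  simp only [Complex.sub_re, Complex.ofReal_re]
  linarith

lemma exp_algebraMap_eq (c : ℝ) :
    exp (algebraMap ℝ (Matrix (Fin n) (Fin n) ℝ) c)
      = Real.exp c • (1 : Matrix (Fin n) (Fin n) ℝ) := by
  rw [show exp (algebraMap ℝ (Matrix (Fin n) (Fin n) ℝ) c) = algebraMap ℝ _ (exp c) from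
      (algebraMap_exp_comm c).symm, ← Real.exp_eq_exp_ℝ, Algebra.algebraMap_eq_smul_one]

end Aux

end Stmt11Aux

end

open Stmt11Aux in
/-- If every complex eigenvalue `μ` of `M₂` satisfies `Re μ < σ` and every
complex eigenvalue `ν` of `M₁` satisfies `Re ν > σ`, then
`exp(τ M₂) · K · exp(−τ M₁) → 0` as `τ → +∞`. -/
theorem stmt11 {k1 k2 : ℕ}
    (M1 : Matrix (Fin k1) (Fin k1) ℝ) (M2 : Matrix (Fin k2) (Fin k2) ℝ)
    (K : Matrix (Fin k2) (Fin k1) ℝ) (σ : ℝ)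
    (hM2 : ∀ μ ∈ (M2.charpoly.map (algebraMap ℝ ℂ)).roots, μ.re < σ)
    (hM1 : ∀ ν ∈ (M1.charpoly.map (algebraMap ℝ ℂ)).roots, σ < ν.re) :
    Filter.Tendsto
      (fun τ : ℝ => NormedSpace.exp (τ • M2) * K * NormedSpace.exp (-(τ • M1)))
      Filter.atTop (nhds 0) := by
  set A2 := M2 - σ • 1 with hA2
  set A1 := σ • 1 - M1 with hA1
  have decay2 := tendsto_exp_smul_zero_real A2 (spectrum_re_lt_of_roots hM2)
  have decay1 := tendsto_exp_smul_zero_real A1 (spectrum_re_lt_of_roots' hM1)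
  have hfun : ∀ τ : ℝ, exp (τ • M2) * K * exp (-(τ • M1))
      = exp (τ • A2) * K * exp (τ • A1) := by
    intro τ
    have e2 : exp (τ • M2) = Real.exp (τ * σ) • exp (τ • A2) := by
      have hd : τ • M2 = τ • A2 + algebraMap ℝ (Matrix (Fin k2) (Fin k2) ℝ) (τ * σ) := by
        rw [Algebra.algebraMap_eq_smul_one, hA2, smul_sub, smul_smul]
        abel
      rw [hd, Matrix.exp_add_of_commute _ _ (Commute.symm (Algebra.commute_algebraMap_left _ _)),
        exp_algebraMap_eq, mul_smul_comm, mul_one]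
    have e1 : exp (-(τ • M1)) = Real.exp (-(τ * σ)) • exp (τ • A1) := by
      have hd : -(τ • M1) = τ • A1 + algebraMap ℝ (Matrix (Fin k1) (Fin k1) ℝ) (-(τ * σ)) := by
        rw [Algebra.algebraMap_eq_smul_one, hA1, smul_sub, smul_smul]
        module
      rw [hd, Matrix.exp_add_of_commute _ _ (Commute.symm (Algebra.commute_algebraMap_left _ _)),
        exp_algebraMap_eq, mul_smul_comm, mul_one]
    rw [e2, e1, Matrix.smul_mul, Matrix.smul_mul, Matrix.mul_smul, smul_smul,
      ← Real.exp_add, add_neg_cancel, Real.exp_zero, one_smul]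
  have hcont : Continuous fun p : Matrix (Fin k2) (Fin k2) ℝ × Matrix (Fin k1) (Fin k1) ℝ =>
      p.1 * K * p.2 :=
    (continuous_fst.matrix_mul continuous_const).matrix_mul continuous_snd
  have hprod : Filter.Tendsto (fun τ : ℝ => (exp (τ • A2), exp (τ • A1)))
      Filter.atTop (nhds (0, 0)) := decay2.prodMk_nhds decay1
  have := (hcont.tendsto (0, 0)).comp hprod
  simp only [Function.comp_def, Matrix.zero_mul, Matrix.mul_zero] at this
  simpa only [hfun] using this
end

section
/- Let A ∈ ℝ^{n×n}, B ∈ ℝ^{n×p}, C ∈ ℝ^{m×n}, D ∈ ℝ^{m×p}, and let M ∈ ℝ^{k×k}, H ∈ ℝ^{k×m}, T ∈ ℝ^{k×n} satisfy the Sylvester equation T A − M T = H C. Let x : ℝ → ℝⁿ, u : ℝ → ℝᵖ, v : ℝ → ℝᵏ be such that for every t: x has derivative A x(t) + B u(t) at t, and v has derivative M v(t) + H (C x(t) + D u(t)) + (T B − H D) u(t) at t. Then the error e(t) := v(t) − T x(t) satisfies e(t) = exp((t − s) M) e(s) for all real s ≤ t. -/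
open NormedSpace Matrix
attribute [local instance] Matrix.linftyOpNormedRing Matrix.linftyOpNormedAlgebra

/-- If `T A − M T = H C` (Sylvester equation), `x` solves
`ẋ = A x + B u` and `v` solves `v̇ = M v + H (C x + D u) + (T B − H D) u`, then the
error `e(t) = v(t) − T x(t)` satisfies `e(t) = exp((t − s) M) e(s)` for all `s ≤ t`. -/
theorem stmt12 {n p m k : ℕ}
    (A : Matrix (Fin n) (Fin n) ℝ) (B : Matrix (Fin n) (Fin p) ℝ)
    (C : Matrix (Fin m) (Fin n) ℝ) (D : Matrix (Fin m) (Fin p) ℝ)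
    (M : Matrix (Fin k) (Fin k) ℝ) (H : Matrix (Fin k) (Fin m) ℝ)
    (T : Matrix (Fin k) (Fin n) ℝ)
    (hSyl : T * A - M * T = H * C)
    (x : ℝ → Fin n → ℝ) (u : ℝ → Fin p → ℝ) (v : ℝ → Fin k → ℝ)
    (hx : ∀ t : ℝ, HasDerivAt x (A.mulVec (x t) + B.mulVec (u t)) t)
    (hv : ∀ t : ℝ, HasDerivAt v
      (M.mulVec (v t) + H.mulVec (C.mulVec (x t) + D.mulVec (u t)) +
        (T * B - H * D).mulVec (u t)) t) :
    ∀ s t : ℝ, s ≤ t →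
      v t - T.mulVec (x t) =
        (NormedSpace.exp ((t - s) • M)).mulVec (v s - T.mulVec (x s)) := by
  intro s t _
  set e : ℝ → Fin k → ℝ := fun t => v t - T.mulVec (x t) with he_def
  -- e has derivative M e
  have hTA : T * A = H * C + M * T := by rw [← hSyl]; abel
  have he : ∀ t : ℝ, HasDerivAt e (M.mulVec (e t)) t := by
    intro t
    have hTx : HasDerivAt (fun t => T.mulVec (x t))
        (T.mulVec (A.mulVec (x t) + B.mulVec (u t))) t := by
      have := ((Matrix.mulVecLin T).toContinuousLinearMap).hasFDerivAt.comp_hasDerivAt t (hx t)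
      simpa [Function.comp_def] using this
    have h := (hv t).sub hTx
    refine h.congr_deriv (Eq.symm ?_)
    simp only [Matrix.mulVec_add, Matrix.mulVec_sub, Matrix.sub_mulVec,
      Matrix.mulVec_mulVec, he_def, ← hTA]
    simp [Matrix.add_mulVec, hTA]
    abel
  -- the CLM from matrices to endomorphisms
  let Ψ : Matrix (Fin k) (Fin k) ℝ →L[ℝ] ((Fin k → ℝ) →L[ℝ] (Fin k → ℝ)) :=
    LinearMap.toContinuousLinearMap
      (LinearMap.toContinuousLinearMap.toLinearMap.comp Matrix.toLin'.toLinearMap)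
  have hΨ : ∀ (N : Matrix (Fin k) (Fin k) ℝ) (w : Fin k → ℝ), Ψ N w = N.mulVec w := by
    intro N w; simp [Ψ]
  -- g t = exp ((s - t) • M) ⬝ e t is constant
  set g : ℝ → Fin k → ℝ := fun t => (exp ((s - t) • M)).mulVec (e t) with hg_def
  have hg : ∀ t : ℝ, HasDerivAt g 0 t := by
    intro t
    have hE : HasDerivAt (fun t : ℝ => exp ((s - t) • M))
        (-(M * exp ((s - t) • M))) t := by
      have h1 := hasDerivAt_exp_smul_const' (𝕂 := ℝ) M (s - t)
      have h2 : HasDerivAt (fun r : ℝ => s - r) (-1) t := by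
        simpa using (hasDerivAt_id t).const_sub s
      have := h1.scomp t h2
      simp only [Function.comp_def, mul_neg, mul_one, neg_smul, one_smul] at this; exact this
    have hEc : HasDerivAt (fun t : ℝ => Ψ (exp ((s - t) • M)))
        (Ψ (-(M * exp ((s - t) • M)))) t :=
      Ψ.hasFDerivAt.comp_hasDerivAt t hE
    have hcomb := hEc.clm_apply (he t)
    have hcomm : exp ((s - t) • M) * M = M * exp ((s - t) • M) :=
      (Commute.smul_left (Commute.refl M) (s - t)).exp_left
    have : Ψ (-(M * exp ((s - t) • M))) (e t)
        + Ψ (exp ((s - t) • M)) (M.mulVec (e t)) = 0 := by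
      simp only [map_neg, ContinuousLinearMap.neg_apply, hΨ, Matrix.neg_mulVec, Matrix.mulVec_mulVec, hcomm]
      simp
    rw [this] at hcomb
    have hgeq : g = fun t => Ψ (exp ((s - t) • M)) (e t) := by
      funext r; simp [g, hΨ]
    rw [hgeq]
    exact hcomb
  have hconst : g t = g s :=
    is_const_of_fderiv_eq_zero (𝕜 := ℝ) (fun r => (hg r).differentiableAt)
      (fun r => by
        ext y
        have := (hg r).hasFDerivAt.fderiv
        simp [this]) t s
  have hgs : g s = e s := by simp [g]
  have hgt : g t = (exp ((s - t) • M)).mulVec (e t) := rfl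
  have key : (exp ((s - t) • M)).mulVec (e t) = e s := by
    rw [← hgt, hconst, hgs]
  have hinv : exp ((t - s) • M) * exp ((s - t) • M) = 1 := by
    rw [← Matrix.exp_add_of_commute]
    · norm_num [← add_smul]
    · exact (Commute.refl M).smul_left _ |>.smul_right _
  calc e t = ((exp ((t - s) • M)) * exp ((s - t) • M)).mulVec (e t) := by
        rw [hinv, Matrix.one_mulVec]
    _ = (exp ((t - s) • M)).mulVec (e s) := by
        rw [← Matrix.mulVec_mulVec, key]
end

section
/- Let M₁, M₂ ∈ ℝ^{k×k} and σ < 0 be such that every complex eigenvalue of M₂ has real part < σ and every complex eigenvalue of M₁ has real part in (σ, 0), and let K ∈ ℝ^{k×k} be invertible. Then the set { τ ∈ (0, ∞) : det(K − exp(τ M₂) · K · exp(−τ M₁)) = 0 } has Lebesgue measure zero. -/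
open NormedSpace Polynomial Filter Matrix
open scoped ENNReal NNReal Topology

namespace Stmt14Aux

attribute [local instance] Matrix.linftyOpNormedAddCommGroup Matrix.linftyOpNormedRing
  Matrix.linftyOpNormedAlgebra Matrix.linftyOpNormedSpace

variable {k : ℕ}

/-- charpoly eval. -/
lemma eval_charpoly (N : Matrix (Fin k) (Fin k) ℂ) (μ : ℂ) :
    N.charpoly.eval μ = (Matrix.scalar (Fin k) μ - N).det := by
  rw [Matrix.charpoly, eval_det, Matrix.matPolyEquiv_charmatrix]
  simp

lemma mem_spectrum_iff_det (N : Matrix (Fin k) (Fin k) ℂ) (μ : ℂ) :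
    μ ∈ spectrum ℂ N ↔ (Matrix.scalar (Fin k) μ - N).det = 0 := by
  rw [spectrum.mem_iff, Matrix.isUnit_iff_isUnit_det, isUnit_iff_ne_zero, not_not]
  have h : (algebraMap ℂ (Matrix (Fin k) (Fin k) ℂ)) μ = Matrix.scalar (Fin k) μ := by
    ext i j
    simp [Matrix.algebraMap_matrix_apply, Matrix.scalar_apply, Matrix.diagonal_apply]
  rw [h]

lemma mem_spectrum_iff_root (N : Matrix (Fin k) (Fin k) ℂ) (μ : ℂ) :
    μ ∈ spectrum ℂ N ↔ N.charpoly.IsRoot μ := by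
  rw [mem_spectrum_iff_det, IsRoot, eval_charpoly]

lemma exists_eigenvector {N : Matrix (Fin k) (Fin k) ℂ} {μ : ℂ}
    (h : μ ∈ spectrum ℂ N) : ∃ v : Fin k → ℂ, v ≠ 0 ∧ N.mulVec v = μ • v := by
  rw [mem_spectrum_iff_det] at h
  obtain ⟨v, hv, hv0⟩ := Matrix.exists_mulVec_eq_zero_iff.mpr h
  refine ⟨v, hv, ?_⟩
  have := hv0
  rw [Matrix.sub_mulVec] at this
  have hs : (Matrix.scalar (Fin k) μ).mulVec v = μ • v := by
    ext i
    simp [Matrix.mulVec_diagonal, Matrix.scalar_apply]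
  rw [hs] at this
  linear_combination (norm := module) -this

lemma pow_mulVec {N : Matrix (Fin k) (Fin k) ℂ} {μ : ℂ} {v : Fin k → ℂ}
    (h : N.mulVec v = μ • v) (n : ℕ) : (N ^ n).mulVec v = μ ^ n • v := by
  induction n with
  | zero => simp [Matrix.one_mulVec]
  | succ n ih =>
      rw [pow_succ, ← Matrix.mulVec_mulVec, h, Matrix.mulVec_smul, ih, smul_smul, pow_succ]
      ring_nf

lemma aeval_mulVec {N : Matrix (Fin k) (Fin k) ℂ} {μ : ℂ} {v : Fin k → ℂ}
    (h : N.mulVec v = μ • v) (p : ℂ[X]) :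
    (Polynomial.aeval N p).mulVec v = p.eval μ • v := by
  induction p using Polynomial.induction_on' with
  | add p q hp hq => rw [map_add, Matrix.add_mulVec, hp, hq, eval_add, add_smul]
  | monomial n a =>
      rw [aeval_monomial, eval_monomial]
      rw [← Matrix.mulVec_mulVec, pow_mulVec h n]
      have halg : (algebraMap ℂ (Matrix (Fin k) (Fin k) ℂ)) a = a • (1 : Matrix (Fin k) (Fin k) ℂ) :=
        Algebra.algebraMap_eq_smul_one a
      rw [halg, Matrix.mulVec_smul, Matrix.smul_mulVec, Matrix.one_mulVec, smul_smul,
        mul_comm]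

lemma exp_mem_adjoin (N : Matrix (Fin k) (Fin k) ℂ) :
    exp N ∈ Algebra.adjoin ℂ ({N} : Set (Matrix (Fin k) (Fin k) ℂ)) := by
  have hclosed : IsClosed ((Subalgebra.toSubmodule (Algebra.adjoin ℂ
      ({N} : Set (Matrix (Fin k) (Fin k) ℂ)))) : Set (Matrix (Fin k) (Fin k) ℂ)) :=
    Submodule.closed_of_finiteDimensional _
  have hsum := (NormedSpace.exp_series_hasSum_exp' (𝕂 := ℂ) N).tendsto_sum_nat
  have hmem : ∀ n : ℕ, (∑ i ∈ Finset.range n, (i.factorial : ℂ)⁻¹ • N ^ i) ∈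
      Algebra.adjoin ℂ ({N} : Set (Matrix (Fin k) (Fin k) ℂ)) := fun n =>
    Subalgebra.sum_mem _ fun i _ => Subalgebra.smul_mem _
      (Subalgebra.pow_mem _ (Algebra.self_mem_adjoin_singleton ℂ N) i) _
  exact hclosed.mem_of_tendsto hsum (Filter.Eventually.of_forall hmem)

lemma exists_poly_exp (N : Matrix (Fin k) (Fin k) ℂ) :
    ∃ p : ℂ[X], exp N = Polynomial.aeval N p := by
  have := exp_mem_adjoin N
  rw [Algebra.adjoin_singleton_eq_range_aeval] at this
  obtain ⟨p, hp⟩ := this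
  exact ⟨p, hp.symm⟩

lemma exp_mulVec {N : Matrix (Fin k) (Fin k) ℂ} {μ : ℂ} {v : Fin k → ℂ}
    (h : N.mulVec v = μ • v) : (exp N).mulVec v = Complex.exp μ • v := by
  classical
  let L : Matrix (Fin k) (Fin k) ℂ →ₗ[ℂ] (Fin k → ℂ) :=
    { toFun := fun X => X.mulVec v
      map_add' := fun X Y => Matrix.add_mulVec X Y v
      map_smul' := fun c X => Matrix.smul_mulVec c X v }
  have hL : Continuous L := L.continuous_of_finiteDimensional
  have hsum := (NormedSpace.exp_series_hasSum_exp' (𝕂 := ℂ) N).map L.toAddMonoidHom hL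
  have h1 : ∀ n : ℕ, L ((n.factorial : ℂ)⁻¹ • N ^ n) = ((n.factorial : ℂ)⁻¹ * μ ^ n) • v := by
    intro n
    show ((n.factorial : ℂ)⁻¹ • N ^ n).mulVec v = _
    rw [Matrix.smul_mulVec, pow_mulVec h n, smul_smul]
  have h2 : HasSum (fun n : ℕ => ((n.factorial : ℂ)⁻¹ * μ ^ n) • v) (Complex.exp μ • v) := by
    have := (NormedSpace.exp_series_hasSum_exp' (𝕂 := ℂ) μ).smul_const v
    simpa [smul_eq_mul, Complex.exp_eq_exp_ℂ] using this
  have h3 : HasSum (fun n : ℕ => L ((n.factorial : ℂ)⁻¹ • N ^ n)) (L (exp N)) := hsum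
  simp_rw [h1] at h3
  exact h3.unique h2

lemma spectrum_exp_subset [Nonempty (Fin k)] (N : Matrix (Fin k) (Fin k) ℂ) :
    spectrum ℂ (exp N) ⊆ (fun μ => Complex.exp μ) '' spectrum ℂ N := by
  obtain ⟨p, hp⟩ := exists_poly_exp N
  intro c hc
  rw [hp, spectrum.map_polynomial_aeval] at hc
  obtain ⟨μ, hμ, hcμ⟩ := hc
  refine ⟨μ, hμ, ?_⟩
  obtain ⟨v, hv, hvec⟩ := exists_eigenvector hμ
  have h1 : (exp N).mulVec v = Complex.exp μ • v := exp_mulVec hvec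
  have h2 : (exp N).mulVec v = p.eval μ • v := by rw [hp]; exact aeval_mulVec hvec p
  obtain ⟨i, hi⟩ := Function.ne_iff.mp hv
  have hij := congrFun (h1.symm.trans h2) i
  simp only [Pi.smul_apply, smul_eq_mul] at hij
  have h4 : Complex.exp μ = p.eval μ := mul_right_cancel₀ (by simpa using hi) hij
  exact (hcμ.symm.trans h4.symm).symm

lemma spectralRadius_exp_le [Nonempty (Fin k)] {N : Matrix (Fin k) (Fin k) ℂ} {s : ℝ}
    (h : ∀ μ ∈ spectrum ℂ N, μ.re ≤ s) :
    spectralRadius ℂ (exp N) ≤ ENNReal.ofReal (Real.exp s) := by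
  rw [spectralRadius]
  refine iSup₂_le fun c hc => ?_
  obtain ⟨μ, hμ, rfl⟩ := spectrum_exp_subset N hc
  have hnorm : ‖Complex.exp μ‖ = Real.exp μ.re := by
    rw [Complex.norm_exp]
  calc ((‖Complex.exp μ‖₊ : ℝ≥0) : ℝ≥0∞) = ENNReal.ofReal ‖Complex.exp μ‖ :=
        (ofReal_norm _).symm
    _ ≤ ENNReal.ofReal (Real.exp s) := by
        refine ENNReal.ofReal_le_ofReal ?_
        rw [hnorm]
        exact Real.exp_le_exp.2 (h μ hμ)

lemma eventually_norm_pow_le {A : Matrix (Fin k) (Fin k) ℂ} {c : ℝ}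
    (hc : 0 < c) (h : spectralRadius ℂ A < ENNReal.ofReal c) :
    ∀ᶠ n : ℕ in atTop, ‖A ^ n‖ ≤ c ^ n := by
  have hg := spectrum.pow_nnnorm_pow_one_div_tendsto_nhds_spectralRadius A
  have hev : ∀ᶠ n : ℕ in atTop, ((‖A ^ n‖₊ : ℝ≥0∞) ^ (1 / (n : ℝ) : ℝ)) < ENNReal.ofReal c :=
    hg.eventually_lt_const h
  filter_upwards [hev, eventually_ge_atTop 1] with n hn hn1
  have hn0 : (n : ℝ) ≠ 0 := Nat.cast_ne_zero.mpr (by omega)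
  have h1 : ((‖A ^ n‖₊ : ℝ≥0∞)) = (((‖A ^ n‖₊ : ℝ≥0∞)) ^ (1 / (n : ℝ))) ^ (n : ℝ) := by
    rw [← ENNReal.rpow_mul, one_div, inv_mul_cancel₀ hn0, ENNReal.rpow_one]
  have h2 : ((‖A ^ n‖₊ : ℝ≥0∞)) ≤ (ENNReal.ofReal c) ^ (n : ℝ) := by
    rw [h1]
    exact ENNReal.rpow_le_rpow hn.le (Nat.cast_nonneg n)
  have h3 : (ENNReal.ofReal c) ^ (n : ℝ) = ENNReal.ofReal (c ^ n) := by
    rw [ENNReal.rpow_natCast, ENNReal.ofReal_pow hc.le]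
  rw [h3, show ((‖A ^ n‖₊ : ℝ≥0∞)) = ENNReal.ofReal ‖A ^ n‖ from (ofReal_norm _).symm] at h2
  exact (ENNReal.ofReal_le_ofReal_iff (pow_nonneg hc.le n)).mp h2

section Bridge

variable [Nonempty (Fin k)]

lemma exists_nat_det_ne_zero (M1 M2 K : Matrix (Fin k) (Fin k) ℝ) (σ : ℝ)
    (hM2 : ∀ μ ∈ (M2.charpoly.map (algebraMap ℝ ℂ)).roots, μ.re < σ)
    (hM1 : ∀ ν ∈ (M1.charpoly.map (algebraMap ℝ ℂ)).roots, σ < ν.re ∧ ν.re < 0)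
    (hK : IsUnit K) :
    ∃ t : ℝ, (K - exp (t • M2) * K * exp (-(t • M1))).det ≠ 0 := by
  classical
  set φ : Matrix (Fin k) (Fin k) ℝ →+* Matrix (Fin k) (Fin k) ℂ :=
    (algebraMap ℝ ℂ).mapMatrix with hφ
  have hφc : Continuous φ := by
    have hcoe : ⇑φ = fun X : Matrix (Fin k) (Fin k) ℝ => X.map (algebraMap ℝ ℂ) := by
      funext X
      rfl
    rw [hcoe]
    exact Continuous.matrix_map continuous_id (continuous_algebraMap ℝ ℂ)
  -- spectrum subset of roots
  have hspec : ∀ (M : Matrix (Fin k) (Fin k) ℝ) (μ : ℂ), μ ∈ spectrum ℂ (φ M) →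
      μ ∈ (M.charpoly.map (algebraMap ℝ ℂ)).roots := by
    intro M μ hμ
    rw [mem_spectrum_iff_root] at hμ
    rw [Polynomial.mem_roots ((M.charpoly_monic.map (algebraMap ℝ ℂ)).ne_zero)]
    rw [← Matrix.charpoly_map]
    exact hμ
  -- max of real parts on spectrum of φ M2
  have hfin2 : (spectrum ℂ (φ M2)).Finite := by
    refine Set.Finite.subset ((M2.charpoly.map (algebraMap ℝ ℂ)).roots.toFinset.finite_toSet) ?_
    intro μ hμ
    simpa using hspec M2 μ hμ
  have hne2 : (spectrum ℂ (φ M2)).Nonempty := spectrum.nonempty _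
  obtain ⟨μ₀, hμ₀, hμ₀max⟩ := Set.exists_max_image (spectrum ℂ (φ M2)) Complex.re hfin2 hne2
  have hs2σ : μ₀.re < σ := hM2 μ₀ (hspec M2 μ₀ hμ₀)
  -- min of real parts on spectrum of φ M1, via spectrum of -φ M1
  have hfinM1 : (spectrum ℂ (φ M1)).Finite := by
    refine Set.Finite.subset ((M1.charpoly.map (algebraMap ℝ ℂ)).roots.toFinset.finite_toSet) ?_
    intro μ hμ
    simpa using hspec M1 μ hμ
  have hfin1 : (spectrum ℂ (-φ M1)).Finite := by
    rw [← spectrum.neg_eq]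
    exact hfinM1.preimage (Set.injOn_of_injective neg_injective)
  have hne1 : (spectrum ℂ (-φ M1)).Nonempty := spectrum.nonempty _
  obtain ⟨ν₀, hν₀, hν₀max⟩ := Set.exists_max_image (spectrum ℂ (-φ M1)) Complex.re hfin1 hne1
  have hν₀σ : ν₀.re < -σ := by
    have : -ν₀ ∈ spectrum ℂ (φ M1) := by
      have h1 : ν₀ ∈ -spectrum ℂ (φ M1) := by rw [spectrum.neg_eq]; exact hν₀
      simpa using h1
    have := (hM1 (-ν₀) (hspec M1 (-ν₀) this)).1
    simp only [Complex.neg_re] at this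
    linarith
  -- exponents
  set a : ℝ := (μ₀.re + σ) / 2 with ha
  set b : ℝ := (ν₀.re + (-σ)) / 2 with hb
  have hab : a + b < 0 := by rw [ha, hb]; linarith
  have hA : ∀ᶠ n : ℕ in atTop, ‖(exp (φ M2)) ^ n‖ ≤ (Real.exp a) ^ n := by
    refine eventually_norm_pow_le (Real.exp_pos a) ?_
    refine lt_of_le_of_lt (spectralRadius_exp_le fun μ hμ => hμ₀max μ hμ) ?_
    rw [ENNReal.ofReal_lt_ofReal_iff (Real.exp_pos a)]
    exact Real.exp_lt_exp.2 (by rw [ha]; linarith)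
  have hB : ∀ᶠ n : ℕ in atTop, ‖(exp (-φ M1)) ^ n‖ ≤ (Real.exp b) ^ n := by
    refine eventually_norm_pow_le (Real.exp_pos b) ?_
    refine lt_of_le_of_lt (spectralRadius_exp_le fun μ hμ => hν₀max μ hμ) ?_
    rw [ENNReal.ofReal_lt_ofReal_iff (Real.exp_pos b)]
    exact Real.exp_lt_exp.2 (by rw [hb]; linarith)
  -- convergence of the conjugated product to 0
  have htend : Tendsto (fun n : ℕ =>
      (exp (φ M2)) ^ n * φ K * (exp (-φ M1)) ^ n) atTop (𝓝 0) := by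
    have hbound : ∀ᶠ n : ℕ in atTop,
        ‖(exp (φ M2)) ^ n * φ K * (exp (-φ M1)) ^ n‖ ≤
          ‖φ K‖ * (Real.exp (a + b)) ^ n := by
      filter_upwards [hA, hB] with n h1 h2
      calc ‖(exp (φ M2)) ^ n * φ K * (exp (-φ M1)) ^ n‖
          ≤ ‖(exp (φ M2)) ^ n * φ K‖ * ‖(exp (-φ M1)) ^ n‖ := norm_mul_le _ _
        _ ≤ ‖(exp (φ M2)) ^ n‖ * ‖φ K‖ * ‖(exp (-φ M1)) ^ n‖ := by
            gcongr; exact norm_mul_le _ _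
        _ ≤ (Real.exp a) ^ n * ‖φ K‖ * (Real.exp b) ^ n := by
            have h3 : ‖(exp (φ M2)) ^ n‖ * ‖φ K‖ ≤ (Real.exp a) ^ n * ‖φ K‖ :=
              mul_le_mul_of_nonneg_right h1 (norm_nonneg _)
            exact mul_le_mul h3 h2 (norm_nonneg _) (by positivity)
        _ = ‖φ K‖ * (Real.exp (a + b)) ^ n := by
            rw [Real.exp_add, mul_pow]; ring
    refine squeeze_zero_norm' hbound ?_
    have h01 : Real.exp (a + b) < 1 := Real.exp_lt_one_iff.mpr hab
    have := (tendsto_pow_atTop_nhds_zero_of_lt_one (Real.exp_pos _).le h01).const_mul ‖φ K‖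
    simpa using this
  -- determinant converges to det (φ K) ≠ 0
  have hdet : Tendsto (fun n : ℕ =>
      (φ K - (exp (φ M2)) ^ n * φ K * (exp (-φ M1)) ^ n).det) atTop (𝓝 ((φ K).det)) := by
    have h2 : Tendsto (fun n : ℕ =>
        φ K - (exp (φ M2)) ^ n * φ K * (exp (-φ M1)) ^ n) atTop (𝓝 (φ K)) := by
      have := (tendsto_const_nhds :
        Tendsto (fun _ : ℕ => φ K) atTop (𝓝 (φ K))).sub htend
      simpa using this
    exact ((Continuous.matrix_det (continuous_id)).tendsto _).comp h2
  have hKdet : ((φ K).det) ≠ 0 := by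
    have h1 : IsUnit K.det := Matrix.isUnit_iff_isUnit_det K |>.mp hK
    have h2 : (φ K).det = (algebraMap ℝ ℂ) K.det := (RingHom.map_det _ K).symm
    rw [h2]
    simpa using h1.ne_zero
  obtain ⟨n, hn⟩ := (hdet.eventually_ne hKdet).exists
  refine ⟨(n : ℝ), fun hcontra => hn ?_⟩
  -- transfer the vanishing determinant through φ
  have hsmul2 : (n : ℝ) • M2 = n • M2 := Nat.cast_smul_eq_nsmul ℝ n M2
  have hsmul1 : -((n : ℝ) • M1) = n • (-M1) := by
    rw [Nat.cast_smul_eq_nsmul ℝ n M1, ← smul_neg]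
  have hexp2 : φ (exp ((n : ℝ) • M2)) = (exp (φ M2)) ^ n := by
    rw [hsmul2, Matrix.exp_nsmul, map_pow]
    congr 1
    exact map_exp φ hφc M2
  have hexp1 : φ (exp (-((n : ℝ) • M1))) = (exp (-φ M1)) ^ n := by
    rw [hsmul1, Matrix.exp_nsmul, map_pow]
    congr 1
    exact (map_exp φ hφc (-M1)).trans (by rw [map_neg]; rfl)
  have hmap : φ (K - exp ((n : ℝ) • M2) * K * exp (-((n : ℝ) • M1))) =
      φ K - (exp (φ M2)) ^ n * φ K * (exp (-φ M1)) ^ n := by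
    rw [map_sub, _root_.map_mul, _root_.map_mul, hexp2, hexp1]
  have := congrArg Matrix.det hmap
  rw [← RingHom.map_det] at this
  rw [← this, hcontra, map_zero]

end Bridge

lemma analyticAt_det (X : Matrix (Fin k) (Fin k) ℝ) :
    AnalyticAt ℝ (fun M : Matrix (Fin k) (Fin k) ℝ => M.det) X := by
  classical
  have hdet : (fun M : Matrix (Fin k) (Fin k) ℝ => M.det) =
      fun M => ∑ σ : Equiv.Perm (Fin k), ((Equiv.Perm.sign σ : ℤ) : ℝ) * ∏ i, M (σ i) i := by
    funext M
    rw [Matrix.det_apply']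
  rw [hdet]
  refine Finset.analyticAt_fun_sum _ fun σ _ => ?_
  refine (analyticAt_const).mul ?_
  refine Finset.analyticAt_fun_prod _ fun i _ => ?_
  let L : Matrix (Fin k) (Fin k) ℝ →ₗ[ℝ] ℝ :=
    { toFun := fun M => M (σ i) i
      map_add' := fun _ _ => rfl
      map_smul' := fun _ _ => rfl }
  have hL : Continuous L := L.continuous_of_finiteDimensional
  exact (⟨L, hL⟩ : Matrix (Fin k) (Fin k) ℝ →L[ℝ] ℝ).analyticAt X

lemma analyticOnNhd_f (M1 M2 K : Matrix (Fin k) (Fin k) ℝ) :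
    AnalyticOnNhd ℝ
      (fun τ : ℝ => (K - exp (τ • M2) * K * exp (-(τ • M1))).det) Set.univ := by
  intro τ _
  have h1 : AnalyticAt ℝ (fun τ : ℝ => τ • M2) τ := (analyticAt_id).smul analyticAt_const
  have h1' : AnalyticAt ℝ (fun τ : ℝ => τ • M1) τ := (analyticAt_id).smul analyticAt_const
  have he1 : AnalyticAt ℝ (fun τ : ℝ => exp (τ • M2)) τ :=
    (NormedSpace.exp_analytic _).comp h1
  have he2 : AnalyticAt ℝ (fun τ : ℝ => exp (-(τ • M1))) τ :=
    (NormedSpace.exp_analytic _).comp h1'.neg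
  have hg : AnalyticAt ℝ (fun τ : ℝ => K - exp (τ • M2) * K * exp (-(τ • M1))) τ :=
    analyticAt_const.sub ((he1.mul analyticAt_const).mul he2)
  exact (analyticAt_det _).comp hg

end Stmt14Aux

namespace Stmt14Aux

lemma countable_zeros {f : ℝ → ℝ} (hf : AnalyticOnNhd ℝ f Set.univ) {t₀ : ℝ} (h0 : f t₀ ≠ 0) :
    Set.Countable {τ : ℝ | f τ = 0} := by
  have hiso : ∀ x : ℝ, ∀ᶠ z in nhdsWithin x {x}ᶜ, f z ≠ 0 := by
    intro x
    rcases (hf x trivial).eventually_eq_zero_or_eventually_ne_zero with h | h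
    · exfalso
      apply h0
      have heq : Set.EqOn f 0 Set.univ :=
        hf.eqOn_zero_of_preconnected_of_eventuallyEq_zero isPreconnected_univ (Set.mem_univ x) h
      simpa using heq (Set.mem_univ t₀)
    · exact h
  have hdisc : DiscreteTopology {τ : ℝ | f τ = 0} := by
    rw [discreteTopology_subtype_iff]
    intro x hx
    rw [inf_principal_eq_bot]
    filter_upwards [hiso x] with z hz
    exact hz
  haveI := hdisc
  haveI : TopologicalSpace.SeparableSpace {τ : ℝ | f τ = 0} :=
    TopologicalSpace.SecondCountableTopology.to_separableSpace
  have : Countable {τ : ℝ | f τ = 0} :=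
    TopologicalSpace.separableSpace_iff_countable.mp inferInstance
  exact Set.countable_coe_iff.mp this

end Stmt14Aux


/-- If every complex eigenvalue of `M₂` has real part `< σ`, every complex
eigenvalue of `M₁` has real part in `(σ, 0)` (with `σ < 0`), and `K` is invertible, then
`{τ ∈ (0,∞) : det(K − exp(τM₂) K exp(−τM₁)) = 0}` has Lebesgue measure zero. -/
theorem stmt14 {k : ℕ} (M1 M2 K : Matrix (Fin k) (Fin k) ℝ) (σ : ℝ) (hσ : σ < 0)
    (hM2 : ∀ μ ∈ (M2.charpoly.map (algebraMap ℝ ℂ)).roots, μ.re < σ)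
    (hM1 : ∀ ν ∈ (M1.charpoly.map (algebraMap ℝ ℂ)).roots, σ < ν.re ∧ ν.re < 0)
    (hK : IsUnit K) :
    MeasureTheory.volume
      {τ : ℝ | τ ∈ Set.Ioi (0 : ℝ) ∧
        (K - NormedSpace.exp (τ • M2) * K * NormedSpace.exp (-(τ • M1))).det = 0} = 0 := by
  rcases isEmpty_or_nonempty (Fin k) with hk | hk
  · have hset : {τ : ℝ | τ ∈ Set.Ioi (0 : ℝ) ∧
        (K - NormedSpace.exp (τ • M2) * K * NormedSpace.exp (-(τ • M1))).det = 0} = ∅ := by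
      ext τ
      simp [Matrix.det_isEmpty]
    rw [hset]
    exact MeasureTheory.measure_empty
  · obtain ⟨t₀, ht₀⟩ := Stmt14Aux.exists_nat_det_ne_zero M1 M2 K σ hM2 hM1 hK
    refine MeasureTheory.measure_mono_null (fun τ hτ => hτ.2) ?_
    exact (Stmt14Aux.countable_zeros (Stmt14Aux.analyticOnNhd_f M1 M2 K) ht₀).measure_zero _
end

section
/- Fix τ > 0. Let A ∈ ℝ^{n×n}, B ∈ ℝ^{n×p}, C ∈ ℝ^{m×n}, D ∈ ℝ^{m×p} with n > m. For i = 1, 2 let M_i ∈ ℝ^{(n−m)×(n−m)}, M̄_i ∈ ℝ^{m×m}, H_i ∈ ℝ^{(n−m)×m}, and T_i ∈ ℝ^{(n−m)×n} satisfy T_i A − M_i T_i = H_i C with [T_i; C] invertible; set U_i = [T_i; C]⁻¹ and M̂_i = diag(M_i, M̄_i) (n×n block-diagonal). Assume the 2n×2n matrix W = [[I_n, U₁ exp(τ M̂₁) U₁⁻¹],[I_n, U₂ exp(τ M̂₂) U₂⁻¹]] is invertible and set D_c = [I_n 0] W⁻¹. Let x : ℝ → ℝⁿ, u : ℝ → ℝᵖ,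 v₁, v₂ : ℝ → ℝ^{n−m} satisfy, for all t ≥ 0: x has derivative A x(t) + B u(t) at t, and v_i has derivative M_i v_i(t) + H_i y(t) + (T_i B − H_i D) u(t) at t, where y(t) := C x(t) + D u(t). Define φ(t) = (v₁(t); y(t) − D u(t); v₂(t); y(t) − D u(t)) ∈ ℝ^{2n} and x̂(t) = D_c · diag(U₁, U₂) · (φ(t) − exp(τ M̂) φ(t − τ)) where M̂ = diag(M̂₁, M̂₂). Then x̂(t) = x(t) for every t ≥ τ. -/
open Matrix

section AuxST16

open NormedSpace

private lemma st16_hasDerivAt_mulVec {ι κ : Type*} [Fintype ι] [Fintype κ]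
    (M : Matrix ι κ ℝ) {f : ℝ → κ → ℝ} {f' : κ → ℝ} {t : ℝ}
    (hf : HasDerivAt f f' t) : HasDerivAt (fun s => M.mulVec (f s)) (M.mulVec f') t := by
  refine hasDerivAt_pi.mpr fun i => ?_
  simpa [Matrix.mulVec, dotProduct] using
    HasDerivAt.fun_sum (fun j _ => ((hasDerivAt_pi.mp hf j).const_mul (M i j)))

private lemma st16_exp_submatrix {ι κ : Type*} [Fintype ι] [DecidableEq ι] [Fintype κ]
    [DecidableEq κ] (f : ι ≃ κ) (M : Matrix κ κ ℝ) :
    exp (M.submatrix f f) = (exp M).submatrix f f := by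
  letI : SeminormedRing (Matrix ι ι ℝ) := Matrix.linftyOpSemiNormedRing
  letI : NormedRing (Matrix ι ι ℝ) := Matrix.linftyOpNormedRing
  letI : NormedAlgebra ℝ (Matrix ι ι ℝ) := Matrix.linftyOpNormedAlgebra
  letI : SeminormedRing (Matrix κ κ ℝ) := Matrix.linftyOpSemiNormedRing
  letI : NormedRing (Matrix κ κ ℝ) := Matrix.linftyOpNormedRing
  letI : NormedAlgebra ℝ (Matrix κ κ ℝ) := Matrix.linftyOpNormedAlgebra
  letI : NormedAlgebra ℚ (Matrix ι ι ℝ) := NormedAlgebra.restrictScalars ℚ ℝ _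
  letI : NormedAlgebra ℚ (Matrix κ κ ℝ) := NormedAlgebra.restrictScalars ℚ ℝ _
  have hc : Continuous (Matrix.reindexAlgEquiv ℝ ℝ f.symm) := by
    show Continuous fun M : Matrix κ κ ℝ => Matrix.reindex f.symm f.symm M
    simp only [Matrix.reindex_apply]
    exact continuous_id.matrix_submatrix _ _
  have := map_exp (Matrix.reindexAlgEquiv ℝ ℝ f.symm) hc M
  simp only [Matrix.reindexAlgEquiv_apply, Matrix.reindex_apply] at this
  exact this.symm

private lemma st16_exp_fromBlocks {q : Type*} [Fintype q] [DecidableEq q]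
    (P Q : Matrix q q ℝ) :
    exp (fromBlocks P 0 0 Q) = fromBlocks (exp P) 0 0 (exp Q) := by
  classical
  let eq : q ⊕ q ≃ q × Bool := (Equiv.boolProdEquivSum q).symm.trans (Equiv.prodComm Bool q)
  have key : ∀ (X Y : Matrix q q ℝ),
      fromBlocks X 0 0 Y = (blockDiagonal fun b => cond b Y X).submatrix eq eq := by
    intro X Y
    ext (i | i) (j | j) <;>
      simp [eq, blockDiagonal_apply, Equiv.boolProdEquivSum, fromBlocks]
  have hpi : (exp fun b => cond b Q P) = fun b => cond b (exp Q) (exp P) := by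
    letI : SeminormedRing (Matrix q q ℝ) := Matrix.linftyOpSemiNormedRing
    letI : NormedRing (Matrix q q ℝ) := Matrix.linftyOpNormedRing
    letI : NormedAlgebra ℝ (Matrix q q ℝ) := Matrix.linftyOpNormedAlgebra
    letI : NormedAlgebra ℚ (Matrix q q ℝ) := NormedAlgebra.restrictScalars ℚ ℝ _
    funext b
    refine (Pi.coe_exp _ b).trans ?_
    cases b <;> rfl
  rw [key, st16_exp_submatrix, Matrix.exp_blockDiagonal, hpi, key (exp P) (exp Q)]

private lemma st16_ode_solution {ι : Type*} [Fintype ι] [DecidableEq ι] (M : Matrix ι ι ℝ)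
    {f : ℝ → ι → ℝ} {s t : ℝ} (hst : s ≤ t)
    (hf : ∀ r : ℝ, s ≤ r → r ≤ t → HasDerivAt f (M.mulVec (f r)) r) :
    f t = (exp ((t - s) • M)).mulVec (f s) := by
  letI : SeminormedRing (Matrix ι ι ℝ) := Matrix.linftyOpSemiNormedRing
  letI : NormedRing (Matrix ι ι ℝ) := Matrix.linftyOpNormedRing
  letI : NormedAlgebra ℝ (Matrix ι ι ℝ) := Matrix.linftyOpNormedAlgebra
  set E : ℝ → Matrix ι ι ℝ := fun r => exp ((t - r) • M) with hE_def
  have hE : ∀ r : ℝ, HasDerivAt E (-(M * E r)) r := by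
    intro r
    have h1 := hasDerivAt_exp_smul_const' (𝕂 := ℝ) M (t - r)
    have h2 : HasDerivAt (fun r : ℝ => t - r) (-1) r := (hasDerivAt_id r).const_sub t
    have h3 := h1.scomp r h2
    simp only [neg_one_smul] at h3
    exact h3
  set g : ℝ → ι → ℝ := fun r => (E r).mulVec (f r) with hg_def
  have hg : ∀ r : ℝ, s ≤ r → r ≤ t → HasDerivAt g (0 : ι → ℝ) r := by
    intro r hr1 hr2
    have hf' := hf r hr1 hr2
    refine hasDerivAt_pi.mpr fun i => ?_
    have hcomp : ∀ j : ι, HasDerivAt (fun r => E r i j * f r j)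
        ((-(M * E r)) i j * f r j + E r i j * (M.mulVec (f r) j)) r := by
      intro j
      have hEij : HasDerivAt (fun r => E r i j) ((-(M * E r)) i j) r := by
        let L : Matrix ι ι ℝ →ₗ[ℝ] ℝ :=
          (LinearMap.proj j).comp (LinearMap.proj (R := ℝ) (φ := fun _ : ι => ι → ℝ) i)
        exact (LinearMap.toContinuousLinearMap L).hasFDerivAt.comp_hasDerivAt r (hE r)
      exact hEij.mul (hasDerivAt_pi.mp hf' j)
    have hsum := HasDerivAt.fun_sum (fun j (_ : j ∈ Finset.univ) => hcomp j)
    have hzero : (∑ j : ι, ((-(M * E r)) i j * f r j + E r i j * (M.mulVec (f r) j))) = 0 := by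
      have hcomm : M * E r = E r * M := (((Commute.refl M).smul_right (t - r)).exp_right).eq
      have e1 : (∑ j : ι, (-(M * E r)) i j * f r j) = (-(M * E r)).mulVec (f r) i := rfl
      have e2 : (∑ j : ι, E r i j * (M.mulVec (f r) j)) = (E r).mulVec (M.mulVec (f r)) i := rfl
      rw [Finset.sum_add_distrib, e1, e2, Matrix.mulVec_mulVec, hcomm, Matrix.neg_mulVec]
      simp
    rw [hzero] at hsum
    have : (fun r => ∑ j : ι, E r i j * f r j) = fun r => g r i := rfl
    rw [this] at hsum
    simpa using hsum
  have hconst := constant_of_has_deriv_right_zero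
    (f := g) (a := s) (b := t)
    (fun r hr => ((hg r hr.1 hr.2).continuousAt).continuousWithinAt)
    (fun r hr => (hg r hr.1 hr.2.le).hasDerivWithinAt) t (Set.right_mem_Icc.mpr hst)
  have hgt : g t = f t := by
    simp [hg_def, hE_def, sub_self, exp_zero, Matrix.one_mulVec]
  have hgs : g s = (exp ((t - s) • M)).mulVec (f s) := rfl
  rw [hgt, hgs] at hconst
  exact hconst


private lemma st16_block_mulVec {n m : ℕ}
    (M1 : Matrix (Fin (n - m)) (Fin (n - m)) ℝ) (Mb1 : Matrix (Fin m) (Fin m) ℝ)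
    (e : Fin (n - m) ⊕ Fin m ≃ Fin n)
    (w1 : Fin (n - m) → ℝ) :
    ((fromBlocks M1 0 0 Mb1).submatrix e.symm e.symm).mulVec
        ((Sum.elim w1 (0 : Fin m → ℝ)) ∘ e.symm)
      = (Sum.elim (M1.mulVec w1) (0 : Fin m → ℝ)) ∘ e.symm := by
  rw [Matrix.submatrix_mulVec_equiv]
  have h : ((Sum.elim w1 (0 : Fin m → ℝ) ∘ ⇑e.symm) ∘ ⇑e.symm.symm) = Sum.elim w1 0 := by
    funext k; simp
  rw [h, Matrix.fromBlocks_mulVec]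
  simp

private lemma st16_rows_mulVec {n m : ℕ}
    (T1 : Matrix (Fin (n - m)) (Fin n) ℝ) (C : Matrix (Fin m) (Fin n) ℝ)
    (e : Fin (n - m) ⊕ Fin m ≃ Fin n) (v : Fin n → ℝ) :
    ((fromRows T1 C).submatrix e.symm id).mulVec v
      = (Sum.elim (T1.mulVec v) (C.mulVec v)) ∘ e.symm := by
  funext k
  show ((fromRows T1 C) (e.symm k)) ⬝ᵥ v = _
  rcases hk : e.symm k with i | i <;>
    simp [hk, Matrix.mulVec, Matrix.fromRows_apply_inl, Matrix.fromRows_apply_inr, dotProduct]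

end AuxST16

/-- Theorem 2: the minimal-order appointed-time observer
`x̂(t) = D_c · diag(U₁,U₂) · (φ(t) − exp(τ M̂) φ(t−τ))` satisfies `x̂(t) = x(t)` for all
`t ≥ τ`, where `φ = (v₁; y − Du; v₂; y − Du)`, the `vᵢ` are the minimal-order observer
states, `Uᵢ = [Tᵢ; C]⁻¹`, `M̂ᵢ = diag(Mᵢ, M̄ᵢ)` and `D_c = [Iₙ 0] W⁻¹` for the assumed
invertible matrix `W = [[Iₙ, U₁ exp(τM̂₁) U₁⁻¹],[Iₙ, U₂ exp(τM̂₂) U₂⁻¹]]`. -/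
theorem stmt16 {n m p : ℕ} (hmn : m < n) (τ : ℝ) (hτ : 0 < τ)
    (A : Matrix (Fin n) (Fin n) ℝ) (B : Matrix (Fin n) (Fin p) ℝ)
    (C : Matrix (Fin m) (Fin n) ℝ) (D : Matrix (Fin m) (Fin p) ℝ)
    (M1 M2 : Matrix (Fin (n - m)) (Fin (n - m)) ℝ)
    (Mb1 Mb2 : Matrix (Fin m) (Fin m) ℝ)
    (H1 H2 : Matrix (Fin (n - m)) (Fin m) ℝ)
    (T1 T2 : Matrix (Fin (n - m)) (Fin n) ℝ)
    (hSyl1 : T1 * A - M1 * T1 = H1 * C)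
    (hSyl2 : T2 * A - M2 * T2 = H2 * C)
    (e : Fin (n - m) ⊕ Fin m ≃ Fin n)
    (he : e = finSumFinEquiv.trans (finCongr (by omega)))
    (TC1 TC2 : Matrix (Fin n) (Fin n) ℝ)
    (hTC1 : TC1 = (fromRows T1 C).submatrix e.symm id)
    (hTC2 : TC2 = (fromRows T2 C).submatrix e.symm id)
    (hTC1inv : IsUnit TC1) (hTC2inv : IsUnit TC2)
    (U1 U2 : Matrix (Fin n) (Fin n) ℝ)
    (hU1 : U1 = TC1⁻¹) (hU2 : U2 = TC2⁻¹)
    (Mh1 Mh2 : Matrix (Fin n) (Fin n) ℝ)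
    (hMh1 : Mh1 = (fromBlocks M1 0 0 Mb1).submatrix e.symm e.symm)
    (hMh2 : Mh2 = (fromBlocks M2 0 0 Mb2).submatrix e.symm e.symm)
    (W : Matrix (Fin n ⊕ Fin n) (Fin n ⊕ Fin n) ℝ)
    (hW : W = fromBlocks 1 (U1 * NormedSpace.exp (τ • Mh1) * U1⁻¹)
                         1 (U2 * NormedSpace.exp (τ • Mh2) * U2⁻¹))
    (hWinv : IsUnit W)
    (Dc : Matrix (Fin n) (Fin n ⊕ Fin n) ℝ)
    (hDc : Dc = fromCols (1 : Matrix (Fin n) (Fin n) ℝ) 0 * W⁻¹)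
    (x : ℝ → Fin n → ℝ) (u : ℝ → Fin p → ℝ) (v1 v2 : ℝ → Fin (n - m) → ℝ)
    (y : ℝ → Fin m → ℝ)
    (hy : ∀ t : ℝ, y t = C.mulVec (x t) + D.mulVec (u t))
    (hx : ∀ t : ℝ, 0 ≤ t → HasDerivAt x (A.mulVec (x t) + B.mulVec (u t)) t)
    (hv1 : ∀ t : ℝ, 0 ≤ t → HasDerivAt v1
      (M1.mulVec (v1 t) + H1.mulVec (y t) + (T1 * B - H1 * D).mulVec (u t)) t)
    (hv2 : ∀ t : ℝ, 0 ≤ t → HasDerivAt v2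
      (M2.mulVec (v2 t) + H2.mulVec (y t) + (T2 * B - H2 * D).mulVec (u t)) t)
    (φ : ℝ → (Fin n ⊕ Fin n) → ℝ)
    (hφ : ∀ t : ℝ, φ t =
      Sum.elim (Sum.elim (v1 t) (y t - D.mulVec (u t)) ∘ e.symm)
               (Sum.elim (v2 t) (y t - D.mulVec (u t)) ∘ e.symm))
    (xhat : ℝ → Fin n → ℝ)
    (hxhat : ∀ t : ℝ, xhat t =
      Dc.mulVec ((fromBlocks U1 0 0 U2).mulVec
        (φ t - (NormedSpace.exp (τ • fromBlocks Mh1 0 0 Mh2)).mulVec (φ (t - τ))))) :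
    ∀ t : ℝ, τ ≤ t → xhat t = x t := by
  intro t ht
  have ht0 : (0 : ℝ) ≤ t - τ := by linarith
  have hd1 : IsUnit TC1.det := (Matrix.isUnit_iff_isUnit_det TC1).mp hTC1inv
  have hd2 : IsUnit TC2.det := (Matrix.isUnit_iff_isUnit_det TC2).mp hTC2inv
  have hU1TC1 : U1 * TC1 = 1 := by rw [hU1]; exact Matrix.nonsing_inv_mul TC1 hd1
  have hU2TC2 : U2 * TC2 = 1 := by rw [hU2]; exact Matrix.nonsing_inv_mul TC2 hd2
  have hU1inv : U1⁻¹ = TC1 := by rw [hU1]; exact Matrix.nonsing_inv_nonsing_inv TC1 hd1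
  have hU2inv : U2⁻¹ = TC2 := by rw [hU2]; exact Matrix.nonsing_inv_nonsing_inv TC2 hd2
  -- observer errors
  set w1 : ℝ → Fin (n - m) → ℝ := fun r => v1 r - T1.mulVec (x r) with hw1def
  set w2 : ℝ → Fin (n - m) → ℝ := fun r => v2 r - T2.mulVec (x r) with hw2def
  have hw1 : ∀ r : ℝ, 0 ≤ r → HasDerivAt w1 (M1.mulVec (w1 r)) r := by
    intro r hr
    have h := (hv1 r hr).sub (st16_hasDerivAt_mulVec T1 (hx r hr))
    convert h using 1
    iterate 4 rfl
    have hA1 : T1 * A = H1 * C + M1 * T1 := sub_eq_iff_eq_add.mp hSyl1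
    rw [hy r]
    simp only [hw1def, Matrix.mulVec_add, Matrix.mulVec_sub, Matrix.sub_mulVec,
      Matrix.mulVec_mulVec, hA1, Matrix.add_mulVec]
    abel
  have hw2 : ∀ r : ℝ, 0 ≤ r → HasDerivAt w2 (M2.mulVec (w2 r)) r := by
    intro r hr
    have h := (hv2 r hr).sub (st16_hasDerivAt_mulVec T2 (hx r hr))
    convert h using 1
    iterate 4 rfl
    have hA2 : T2 * A = H2 * C + M2 * T2 := sub_eq_iff_eq_add.mp hSyl2
    rw [hy r]
    simp only [hw2def, Matrix.mulVec_add, Matrix.mulVec_sub, Matrix.sub_mulVec,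
      Matrix.mulVec_mulVec, hA2, Matrix.add_mulVec]
    abel
  -- the full error vector
  set Mfull : Matrix (Fin n ⊕ Fin n) (Fin n ⊕ Fin n) ℝ := fromBlocks Mh1 0 0 Mh2 with hMfull
  set ε : ℝ → (Fin n ⊕ Fin n) → ℝ := fun r =>
    Sum.elim ((Sum.elim (w1 r) (0 : Fin m → ℝ)) ∘ e.symm)
             ((Sum.elim (w2 r) (0 : Fin m → ℝ)) ∘ e.symm) with hεdef
  have hMfullε : ∀ r : ℝ, Mfull.mulVec (ε r) =
      Sum.elim ((Sum.elim (M1.mulVec (w1 r)) (0 : Fin m → ℝ)) ∘ e.symm)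
               ((Sum.elim (M2.mulVec (w2 r)) (0 : Fin m → ℝ)) ∘ e.symm) := by
    intro r
    rw [hMfull, hεdef, Matrix.fromBlocks_mulVec]
    simp only [Sum.elim_comp_inl, Sum.elim_comp_inr, Matrix.zero_mulVec, Matrix.mulVec_zero,
      add_zero, zero_add]
    rw [hMh1, hMh2, st16_block_mulVec, st16_block_mulVec]
  have hε : ∀ r : ℝ, 0 ≤ r → HasDerivAt ε (Mfull.mulVec (ε r)) r := by
    intro r hr
    rw [hMfullε r]
    refine hasDerivAt_pi.mpr fun k => ?_
    obtain k | k := k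
    · rcases hk : e.symm k with i | i <;>
        simp only [hεdef, Sum.elim_inl, Sum.elim_inr, Function.comp_apply, hk]
      · exact hasDerivAt_pi.mp (hw1 r hr) i
      · exact hasDerivAt_const r 0
    · rcases hk : e.symm k with i | i <;>
        simp only [hεdef, Sum.elim_inl, Sum.elim_inr, Function.comp_apply, hk]
      · exact hasDerivAt_pi.mp (hw2 r hr) i
      · exact hasDerivAt_const r 0
  have hεsol : ε t = (NormedSpace.exp (τ • Mfull)).mulVec (ε (t - τ)) := by
    have h := st16_ode_solution Mfull (s := t - τ) (t := t) (by linarith)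
      (fun r hr1 hr2 => hε r (by linarith))
    simpa [show t - (t - τ) = τ by ring] using h
  -- φ in terms of ε
  set TCfull : Matrix (Fin n ⊕ Fin n) (Fin n ⊕ Fin n) ℝ := fromBlocks TC1 0 0 TC2 with hTCfull
  have hφε : ∀ r : ℝ, φ r = ε r + TCfull.mulVec (Sum.elim (x r) (x r)) := by
    intro r
    rw [hφ r]
    have hx1 : TCfull.mulVec (Sum.elim (x r) (x r))
        = Sum.elim (TC1.mulVec (x r)) (TC2.mulVec (x r)) := by
      rw [hTCfull, Matrix.fromBlocks_mulVec]
      simp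
    rw [hx1, hTC1, hTC2, st16_rows_mulVec, st16_rows_mulVec]
    funext k
    obtain k | k := k <;>
    · rcases hk : e.symm k with i | i <;>
        simp [hεdef, hk, hw1def, hw2def, hy r, add_sub_cancel_right, sub_add_cancel]
  -- final computation
  have hexp : NormedSpace.exp (τ • Mfull)
      = fromBlocks (NormedSpace.exp (τ • Mh1)) 0 0 (NormedSpace.exp (τ • Mh2)) := by
    have hsm : τ • Mfull = fromBlocks (τ • Mh1) 0 0 (τ • Mh2) := by
      rw [hMfull, Matrix.fromBlocks_smul]; simp
    rw [hsm, st16_exp_fromBlocks]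
  have key : φ t - (NormedSpace.exp (τ • Mfull)).mulVec (φ (t - τ))
      = TCfull.mulVec (Sum.elim (x t) (x t))
        - (NormedSpace.exp (τ • Mfull)).mulVec
            (TCfull.mulVec (Sum.elim (x (t - τ)) (x (t - τ)))) := by
    rw [hφε t, hφε (t - τ), Matrix.mulVec_add, hεsol]
    abel
  have hUfullTC : (fromBlocks U1 0 0 U2) * TCfull = 1 := by
    rw [hTCfull, Matrix.fromBlocks_multiply]
    simp [hU1TC1, hU2TC2]
  have hP : (fromBlocks U1 0 0 U2) * (NormedSpace.exp (τ • Mfull)) * TCfull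
      = fromBlocks (U1 * NormedSpace.exp (τ • Mh1) * U1⁻¹) 0 0
          (U2 * NormedSpace.exp (τ • Mh2) * U2⁻¹) := by
    rw [hexp, hTCfull, Matrix.fromBlocks_multiply, Matrix.fromBlocks_multiply]
    simp [hU1inv, hU2inv]
  have hUv : (fromBlocks U1 0 0 U2).mulVec
        (φ t - (NormedSpace.exp (τ • Mfull)).mulVec (φ (t - τ)))
      = W.mulVec (Sum.elim (x t) (-(x (t - τ)))) := by
    rw [key, Matrix.mulVec_sub]
    simp only [Matrix.mulVec_mulVec]
    rw [← Matrix.mul_assoc, hUfullTC, hP, Matrix.one_mulVec, hW]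
    funext k
    obtain k | k := k <;>
      simp [Matrix.fromBlocks_mulVec, Matrix.mulVec_neg, sub_eq_add_neg, Matrix.one_mulVec]
  rw [hxhat t, hUv, hDc, Matrix.mulVec_mulVec]
  erw [Matrix.mul_assoc]
  rw [
    Matrix.nonsing_inv_mul W ((Matrix.isUnit_iff_isUnit_det W).mp hWinv),
    Matrix.mul_one, Matrix.fromCols_mulVec_sumElim]
  simp
end

section
/- Assume G Ē = 0. Let x : ℝ → ℝⁿ, u : ℝ → ℝᵖ, w : ℝ → ℝ^q, y : ℝ → ℝᵐ satisfy, for all t: x has derivative A x(t) + B u(t) + E w(t) at t, and y(t) = C x(t) + D u(t) + F w(t). Then η(t) := G x(t) satisfies, for all t: η has derivative G Ā η(t) + H y(t) + B̄ u(t) at t, and C̄ η(t) = Ĉ (y(t) − D u(t)), where Ā = A − E F⁺ C, B̂ = B − E F⁺ D, B̄ = G B̂ − G Ā Ē (C̄Ē)⁺ (I_m − F F⁺) D, H = G E F⁺ + G Ā Ē (C̄Ē)⁺ (I_m − F F⁺), and Ĉ = (I_m − C̄ Ē (C̄Ē)⁺)(I_m − F F⁺). Moreover x(t) = η(t) + Ē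 (C̄Ē)⁺ (I_m − F F⁺)(y(t) − D u(t)) for all t. -/
open Matrix

/-- model reconfiguration. Under `G Ē = 0`, the variable `η(t) = G x(t)`
satisfies `η̇ = G Ā η + H y + B̄ u`, `C̄ η = Ĉ (y − D u)`, and
`x = η + Ē (C̄Ē)⁺ (I_m − F F⁺)(y − D u)`. -/
theorem stmt17 {n m p q : ℕ}
    (A : Matrix (Fin n) (Fin n) ℝ) (B : Matrix (Fin n) (Fin p) ℝ)
    (C : Matrix (Fin m) (Fin n) ℝ) (D : Matrix (Fin m) (Fin p) ℝ)
    (E : Matrix (Fin n) (Fin q) ℝ) (F : Matrix (Fin m) (Fin q) ℝ)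
    (Fp : Matrix (Fin q) (Fin m) ℝ)
    (hFp1 : F * Fp * F = F) (hFp2 : Fp * F * Fp = Fp)
    (Cbar : Matrix (Fin m) (Fin n) ℝ)
    (hCbar : Cbar = ((1 : Matrix (Fin m) (Fin m) ℝ) - F * Fp) * C)
    (Ebar : Matrix (Fin n) (Fin q) ℝ)
    (hEbar : Ebar = E * ((1 : Matrix (Fin q) (Fin q) ℝ) - Fp * F))
    (CEp : Matrix (Fin q) (Fin m) ℝ)
    (hCEp1 : (Cbar * Ebar) * CEp * (Cbar * Ebar) = Cbar * Ebar)
    (hCEp2 : CEp * (Cbar * Ebar) * CEp = CEp)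
    (G : Matrix (Fin n) (Fin n) ℝ)
    (hG : G = (1 : Matrix (Fin n) (Fin n) ℝ) - Ebar * CEp * Cbar)
    (hGE : G * Ebar = 0)
    (Abar : Matrix (Fin n) (Fin n) ℝ) (hAbar : Abar = A - E * Fp * C)
    (Bhat : Matrix (Fin n) (Fin p) ℝ) (hBhat : Bhat = B - E * Fp * D)
    (Bbar : Matrix (Fin n) (Fin p) ℝ)
    (hBbar : Bbar = G * Bhat -
      G * Abar * Ebar * CEp * (((1 : Matrix (Fin m) (Fin m) ℝ) - F * Fp) * D))
    (H : Matrix (Fin n) (Fin m) ℝ)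
    (hH : H = G * E * Fp +
      G * Abar * Ebar * CEp * ((1 : Matrix (Fin m) (Fin m) ℝ) - F * Fp))
    (Chat : Matrix (Fin m) (Fin m) ℝ)
    (hChat : Chat = ((1 : Matrix (Fin m) (Fin m) ℝ) - Cbar * Ebar * CEp) *
      ((1 : Matrix (Fin m) (Fin m) ℝ) - F * Fp))
    (x : ℝ → Fin n → ℝ) (u : ℝ → Fin p → ℝ) (w : ℝ → Fin q → ℝ) (y : ℝ → Fin m → ℝ)
    (hx : ∀ t : ℝ, HasDerivAt x
      (A.mulVec (x t) + B.mulVec (u t) + E.mulVec (w t)) t)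
    (hy : ∀ t : ℝ, y t = C.mulVec (x t) + D.mulVec (u t) + F.mulVec (w t))
    (η : ℝ → Fin n → ℝ) (hη : ∀ t : ℝ, η t = G.mulVec (x t)) :
    (∀ t : ℝ, HasDerivAt η
        ((G * Abar).mulVec (η t) + H.mulVec (y t) + Bbar.mulVec (u t)) t) ∧
    (∀ t : ℝ, Cbar.mulVec (η t) = Chat.mulVec (y t - D.mulVec (u t))) ∧
    (∀ t : ℝ, x t =
      η t + (Ebar * CEp * ((1 : Matrix (Fin m) (Fin m) ℝ) - F * Fp)).mulVec
        (y t - D.mulVec (u t))) := by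
  have hPF : ((1 : Matrix (Fin m) (Fin m) ℝ) - F * Fp) * F = 0 := by
    rw [Matrix.sub_mul, Matrix.one_mul, hFp1, sub_self]
  have kCx : ∀ t : ℝ, Cbar.mulVec (x t) =
      ((1 : Matrix (Fin m) (Fin m) ℝ) - F * Fp).mulVec (y t - D.mulVec (u t)) := by
    intro t
    have h1 : y t - D.mulVec (u t) = C.mulVec (x t) + F.mulVec (w t) := by
      rw [hy t]; abel
    rw [h1, Matrix.mulVec_add, Matrix.mulVec_mulVec, Matrix.mulVec_mulVec, hPF,
      Matrix.zero_mulVec, add_zero, ← hCbar]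
  have kx : ∀ t : ℝ, x t = η t +
      (Ebar * CEp * ((1 : Matrix (Fin m) (Fin m) ℝ) - F * Fp)).mulVec
        (y t - D.mulVec (u t)) := by
    intro t
    have h2 : η t = x t - (Ebar * CEp).mulVec (Cbar.mulVec (x t)) := by
      rw [hη t, hG, Matrix.sub_mulVec, Matrix.one_mulVec, Matrix.mulVec_mulVec,
        Matrix.mul_assoc]
    rw [h2, kCx t, Matrix.mulVec_mulVec]
    abel
  refine ⟨?_, ?_, kx⟩
  · -- matrix identities
    have hE2 : G * E = G * E * (Fp * F) := by
      have h := hGE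
      rw [hEbar, ← Matrix.mul_assoc, Matrix.mul_sub, Matrix.mul_one, sub_eq_zero] at h
      exact h
    have hEF : H * F = G * E := by
      rw [hH, Matrix.add_mul, Matrix.mul_assoc (G * E),
        Matrix.mul_assoc (G * Abar * Ebar * CEp), hPF, Matrix.mul_zero, add_zero, ← hE2]
    have hHD : H * D + Bbar = G * B := by
      rw [hH, hBbar, hBhat, Matrix.add_mul, Matrix.mul_assoc (G * Abar * Ebar * CEp),
        Matrix.mul_sub G B, ← Matrix.mul_assoc G (E * Fp) D, ← Matrix.mul_assoc G E Fp]
      abel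
    have hAA : G * Abar * G + H * C = G * A := by
      have e1 : G * Abar * G = G * Abar -
          G * Abar * Ebar * CEp * Cbar := by
        have e0 : G * Abar * G = G * Abar *
            ((1 : Matrix (Fin n) (Fin n) ℝ) - Ebar * CEp * Cbar) := by rw [← hG]
        rw [e0, Matrix.mul_sub, Matrix.mul_one]
        simp only [Matrix.mul_assoc]
      have e2 : H * C = G * E * Fp * C + G * Abar * Ebar * CEp * Cbar := by
        rw [hH, Matrix.add_mul, Matrix.mul_assoc (G * Abar * Ebar * CEp), ← hCbar]
      rw [e1, e2, hAbar, Matrix.mul_sub G A, ← Matrix.mul_assoc G (E * Fp) C,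
        ← Matrix.mul_assoc G E Fp]
      abel
    intro t
    have hd : HasDerivAt (fun s => G.mulVec (x s))
        (G.mulVec (A.mulVec (x t) + B.mulVec (u t) + E.mulVec (w t))) t := by
      have := ((Matrix.mulVecLin G).toContinuousLinearMap.hasFDerivAt).comp_hasDerivAt
        t (hx t)
      simpa [Function.comp_def] using this
    have heq : (fun s => G.mulVec (x s)) = η := by
      funext s; rw [hη s]
    have veq : (G * Abar).mulVec (η t) + H.mulVec (y t) + Bbar.mulVec (u t) =
        G.mulVec (A.mulVec (x t) + B.mulVec (u t) + E.mulVec (w t)) := by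
      rw [hη t, hy t]
      simp only [Matrix.mulVec_add, Matrix.mulVec_mulVec]
      rw [← hAA, ← hHD, ← hEF]
      simp only [Matrix.add_mulVec, Matrix.mulVec_mulVec]
      abel
    rw [← veq] at hd
    rw [heq] at hd
    exact hd
  · intro t
    have h3 : Cbar.mulVec (η t) =
        ((1 : Matrix (Fin m) (Fin m) ℝ) - Cbar * Ebar * CEp).mulVec
          (Cbar.mulVec (x t)) := by
      rw [hη t, Matrix.mulVec_mulVec, Matrix.mulVec_mulVec]
      congr 1
      rw [hG, Matrix.mul_sub, Matrix.mul_one, Matrix.sub_mul, Matrix.one_mul]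
      congr 1
      simp only [Matrix.mul_assoc]
    rw [h3, kCx t, Matrix.mulVec_mulVec, ← hChat]
end

section
/- Let M₁, M₂ ∈ ℝ^{k×k} and σ < 0 be such that every complex eigenvalue of M₂ has real part < σ and every complex eigenvalue of M₁ has real part in (σ, 0), and let K ∈ ℝ^{k×k} be invertible. Then there exists τ* > 0 such that for every τ ∈ (0, τ*) the matrix K − exp(τ M₂) · K · exp(−τ M₁) is invertible. -/
open scoped Matrix ENNReal NNReal
open NormedSpace Filter Polynomial Topology

set_option maxHeartbeats 1600000

attribute [local instance] Matrix.linftyOpNormedAddCommGroup Matrix.linftyOpNormedSpace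
  Matrix.linftyOpNormedRing Matrix.linftyOpNormedAlgebra

namespace Stmt19Aux

variable {k : ℕ}

lemma scalar_eq_smul_one {R : Type*} [CommRing R] (r : R) :
    Matrix.scalar (Fin k) r = r • (1 : Matrix (Fin k) (Fin k) R) := by
  ext i j
  by_cases h : i = j <;>
    simp [Matrix.scalar_apply, Matrix.diagonal, Matrix.one_apply, h]

lemma eval_charpoly' {R : Type*} [CommRing R] (A : Matrix (Fin k) (Fin k) R) (r : R) :
    A.charpoly.eval r = (r • (1 : Matrix (Fin k) (Fin k) R) - A).det := by
  rw [Matrix.charpoly, eval_det, Matrix.matPolyEquiv_charmatrix, Polynomial.eval_sub,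
    Polynomial.eval_X, Polynomial.eval_C, scalar_eq_smul_one]

/-- reverse spectral mapping for the exponential of a complex matrix -/
lemma exp_spectrum_aux (A : Matrix (Fin k) (Fin k) ℂ) {μ : ℂ}
    (hμ : μ ∈ spectrum ℂ (exp A)) :
    ∃ lam : ℂ, ((lam • (1 : Matrix (Fin k) (Fin k) ℂ) - A).det = 0) ∧ Complex.exp lam = μ := by
  classical
  have h := spectrum.mem_iff.mp hμ
  rw [Algebra.algebraMap_eq_smul_one] at h
  have hdet : ((μ • (1 : Matrix (Fin k) (Fin k) ℂ)) - exp A).det = 0 := by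
    by_contra hne
    exact h ((Matrix.isUnit_iff_isUnit_det _).mpr (isUnit_iff_ne_zero.mpr hne))
  obtain ⟨v, hv0, hv⟩ := Matrix.exists_mulVec_eq_zero_iff.mpr hdet
  have h1 : (μ • (1 : Matrix (Fin k) (Fin k) ℂ)) *ᵥ v = μ • v := by
    rw [Matrix.smul_mulVec, Matrix.one_mulVec]
  have hEv : exp A *ᵥ v = μ • v := by
    rw [Matrix.sub_mulVec, sub_eq_zero] at hv
    exact hv.symm.trans h1
  set W := LinearMap.ker (Matrix.toLin' (exp A - μ • 1)) with hW
  have hvW : v ∈ W := by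
    rw [hW, LinearMap.mem_ker, Matrix.toLin'_apply, Matrix.sub_mulVec, hEv, h1, sub_self]
  haveI : Nontrivial W :=
    nontrivial_of_ne ⟨v, hvW⟩ 0 (fun hEq => hv0 (congrArg Subtype.val hEq))
  have hcomm : (exp A - μ • 1) * A = A * (exp A - μ • 1) := by
    rw [sub_mul, mul_sub, smul_mul_assoc, mul_smul_comm, one_mul, mul_one,
      ((Commute.refl A).exp_left).eq]
  have hinv : ∀ x ∈ W, Matrix.toLin' A x ∈ W := by
    intro x hx
    rw [hW, LinearMap.mem_ker, Matrix.toLin'_apply] at hx ⊢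
    rw [Matrix.toLin'_apply, Matrix.mulVec_mulVec, hcomm, ← Matrix.mulVec_mulVec, hx,
      Matrix.mulVec_zero]
  obtain ⟨c, hc⟩ := Module.End.exists_eigenvalue ((Matrix.toLin' A).restrict hinv)
  obtain ⟨w, hw⟩ := hc.exists_hasEigenvector
  have hw0 : (w : Fin k → ℂ) ≠ 0 := fun hcoe => hw.right (Subtype.ext hcoe)
  have hAw : A *ᵥ (w : Fin k → ℂ) = c • (w : Fin k → ℂ) := by
    have h2 := congrArg Subtype.val hw.apply_eq_smul
    rw [LinearMap.restrict_coe_apply, Matrix.toLin'_apply, SetLike.val_smul] at h2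
    exact h2
  have hpow : ∀ n : ℕ, A ^ n *ᵥ (w : Fin k → ℂ) = c ^ n • (w : Fin k → ℂ) := by
    intro n
    induction n with
    | zero => simp [Matrix.one_mulVec]
    | succ n ih =>
        rw [pow_succ, ← Matrix.mulVec_mulVec, hAw, Matrix.mulVec_smul, ih, smul_smul, pow_succ,
          mul_comm]
  -- `exp A *ᵥ w = exp c • w`
  let L : Matrix (Fin k) (Fin k) ℂ →ₗ[ℂ] (Fin k → ℂ) :=
    { toFun := fun M => M *ᵥ (w : Fin k → ℂ)
      map_add' := fun M N => Matrix.add_mulVec M N _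
      map_smul' := fun r M => Matrix.smul_mulVec r M _ }
  let Lc : Matrix (Fin k) (Fin k) ℂ →L[ℂ] (Fin k → ℂ) := ⟨L, L.continuous_of_finiteDimensional⟩
  have hsum : Summable fun n : ℕ => ((Nat.factorial n : ℂ))⁻¹ • A ^ n := expSeries_summable' (𝕂 := ℂ) A
  have hsum2 : Summable fun n : ℕ => ((Nat.factorial n : ℂ))⁻¹ * c ^ n := by
    simpa [smul_eq_mul] using expSeries_summable' (𝕂 := ℂ) c
  have hexpw : exp A *ᵥ (w : Fin k → ℂ) = exp c • (w : Fin k → ℂ) := by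
    have e0 : exp A *ᵥ (w : Fin k → ℂ) = Lc (exp A) := rfl
    have e1 : exp A = ∑' n : ℕ, ((Nat.factorial n : ℂ))⁻¹ • A ^ n := by
      rw [exp_eq_tsum ℂ]
    rw [e0, e1, Lc.map_tsum hsum]
    have e2 : ∀ n : ℕ, Lc (((Nat.factorial n : ℂ))⁻¹ • A ^ n)
        = (((Nat.factorial n : ℂ))⁻¹ * c ^ n) • (w : Fin k → ℂ) := by
      intro n
      rw [map_smul]
      have : Lc (A ^ n) = A ^ n *ᵥ (w : Fin k → ℂ) := rfl
      rw [this, hpow n, smul_smul]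
    rw [tsum_congr e2, hsum2.tsum_smul_const]
    have e3 : exp c = ∑' n : ℕ, ((Nat.factorial n : ℂ))⁻¹ * c ^ n := by
      rw [exp_eq_tsum ℂ]
      simp only [smul_eq_mul]
    rw [e3]
  have hEw : exp A *ᵥ (w : Fin k → ℂ) = μ • (w : Fin k → ℂ) := by
    have hmem := w.2
    have hmem0 : Matrix.toLin' (exp A - μ • 1) (w : Fin k → ℂ) = 0 :=
      LinearMap.mem_ker.mp hmem
    rw [Matrix.toLin'_apply, Matrix.sub_mulVec, sub_eq_zero] at hmem0
    exact hmem0.trans (by rw [Matrix.smul_mulVec, Matrix.one_mulVec])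
  have hce : Complex.exp c = μ := by
    have : Complex.exp c • (w : Fin k → ℂ) = μ • (w : Fin k → ℂ) := by
      rw [Complex.exp_eq_exp_ℂ, ← hexpw, hEw]
    exact smul_left_injective ℂ hw0 this
  refine ⟨c, ?_, hce⟩
  refine Matrix.exists_mulVec_eq_zero_iff.mp ⟨w, hw0, ?_⟩
  rw [Matrix.sub_mulVec, hAw, Matrix.smul_mulVec, Matrix.one_mulVec, sub_self]

lemma spectralRadius_exp_lt (A : Matrix (Fin k) (Fin k) ℂ) {c : ℝ}
    (h : ∀ lam : ℂ, (lam • (1 : Matrix (Fin k) (Fin k) ℂ) - A).det = 0 → lam.re < c) :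
    spectralRadius ℂ (exp A) < ENNReal.ofReal (Real.exp c) := by
  classical
  have hfin := Matrix.finite_spectrum (exp A)
  have key : ∀ μ ∈ spectrum ℂ (exp A), (‖μ‖₊ : ℝ≥0∞) < ENNReal.ofReal (Real.exp c) := by
    intro μ hμ
    obtain ⟨lam, hdet, rfl⟩ := exp_spectrum_aux A hμ
    have hlt : ‖Complex.exp lam‖ < Real.exp c := by
      rw [Complex.norm_exp]
      exact Real.exp_lt_exp.mpr (h lam hdet)
    calc (‖Complex.exp lam‖₊ : ℝ≥0∞) = ENNReal.ofReal ‖Complex.exp lam‖ :=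
          (ofReal_norm _).symm
      _ < ENNReal.ofReal (Real.exp c) := (ENNReal.ofReal_lt_ofReal_iff (Real.exp_pos c)).mpr hlt
  have hle : spectralRadius ℂ (exp A) ≤
      hfin.toFinset.sup (fun μ : ℂ => (‖μ‖₊ : ℝ≥0∞)) := by
    refine iSup₂_le fun μ hμ => ?_
    exact Finset.le_sup (f := fun μ : ℂ => (‖μ‖₊ : ℝ≥0∞)) (hfin.mem_toFinset.mpr hμ)
  refine lt_of_le_of_lt hle ?_
  rw [Finset.sup_lt_iff (by simp [Real.exp_pos] : (⊥ : ℝ≥0∞) < ENNReal.ofReal (Real.exp c))]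
  intro μ hμ
  exact key μ (hfin.mem_toFinset.mp hμ)

lemma exists_between_ofReal {x : ℝ≥0∞} {y : ℝ} (h : x < ENNReal.ofReal y) :
    ∃ r : ℝ, 0 < r ∧ x < ENNReal.ofReal r ∧ r < y := by
  have hx : x ≠ ⊤ := (h.trans_le le_top).ne
  have hxy : x.toReal < y := by
    rw [← ENNReal.lt_ofReal_iff_toReal_lt hx]; exact h
  have hy : 0 < y := lt_of_le_of_lt x.toReal_nonneg hxy
  refine ⟨(x.toReal + y) / 2, by positivity, ?_, by linarith⟩
  rw [ENNReal.lt_ofReal_iff_toReal_lt hx]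
  linarith [x.toReal_nonneg]

lemma eventually_norm_pow_le {a : Matrix (Fin k) (Fin k) ℂ} {r : ℝ}
    (h : spectralRadius ℂ a < ENNReal.ofReal r) :
    ∀ᶠ n : ℕ in atTop, ‖a ^ n‖ ≤ r ^ n := by
  have hr : 0 < r := ENNReal.ofReal_pos.mp (lt_of_le_of_lt zero_le h)
  have ht := spectrum.pow_nnnorm_pow_one_div_tendsto_nhds_spectralRadius a
  filter_upwards [ht.eventually_lt_const h, eventually_ge_atTop 1] with n hn hn1
  have hne : (n : ℝ) ≠ 0 := by positivity
  have h2 : (‖a ^ n‖₊ : ℝ≥0∞) < ENNReal.ofReal (r ^ n) := by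
    have hlt : ((‖a ^ n‖₊ : ℝ≥0∞) ^ (1 / (n : ℝ))) ^ (n : ℝ)
        < (ENNReal.ofReal r) ^ (n : ℝ) :=
      ENNReal.rpow_lt_rpow hn (by positivity)
    rwa [← ENNReal.rpow_mul, one_div, inv_mul_cancel₀ hne, ENNReal.rpow_one,
      ENNReal.ofReal_rpow_of_pos hr, Real.rpow_natCast] at hlt
  have := (ENNReal.lt_ofReal_iff_toReal_lt (by simp)).mp h2
  simpa using this.le

end Stmt19Aux

open Stmt19Aux

/-- If every complex eigenvalue of `M₂` has real part `< σ`, every complex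
eigenvalue of `M₁` has real part in `(σ, 0)` (with `σ < 0`), and `K` is invertible, then
there is `τ* > 0` such that `K − exp(τM₂) K exp(−τM₁)` is invertible for all `τ ∈ (0, τ*)`. -/
theorem stmt19 {k : ℕ} (M1 M2 K : Matrix (Fin k) (Fin k) ℝ) (σ : ℝ) (hσ : σ < 0)
    (hM2 : ∀ μ ∈ (M2.charpoly.map (algebraMap ℝ ℂ)).roots, μ.re < σ)
    (hM1 : ∀ ν ∈ (M1.charpoly.map (algebraMap ℝ ℂ)).roots, σ < ν.re ∧ ν.re < 0)
    (hK : IsUnit K) :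
    ∃ τs : ℝ, 0 < τs ∧ ∀ τ : ℝ, 0 < τ → τ < τs →
      IsUnit (K - NormedSpace.exp (τ • M2) * K * NormedSpace.exp (-(τ • M1))) := by
  classical
  set M2c : Matrix (Fin k) (Fin k) ℂ := M2.map (algebraMap ℝ ℂ) with hM2c
  set M1c : Matrix (Fin k) (Fin k) ℂ := M1.map (algebraMap ℝ ℂ) with hM1c
  set Kc : Matrix (Fin k) (Fin k) ℂ := K.map (algebraMap ℝ ℂ) with hKcdef
  -- roots membership from vanishing determinants
  have hroot : ∀ (M : Matrix (Fin k) (Fin k) ℝ) (lam : ℂ),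
      (lam • (1 : Matrix (Fin k) (Fin k) ℂ) - M.map (algebraMap ℝ ℂ)).det = 0 →
      lam ∈ (M.charpoly.map (algebraMap ℝ ℂ)).roots := by
    intro M lam hdet
    rw [Polynomial.mem_roots']
    refine ⟨(M.charpoly_monic.map _).ne_zero, ?_⟩
    rw [Polynomial.IsRoot, ← Matrix.charpoly_map, eval_charpoly', hdet]
  -- spectral radius bounds
  have hρ2 : spectralRadius ℂ (exp M2c) < ENNReal.ofReal (Real.exp σ) := by
    refine spectralRadius_exp_lt M2c fun lam hdet => ?_
    exact hM2 lam (hroot M2 lam hdet)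
  have hρ1 : spectralRadius ℂ (exp (-M1c)) < ENNReal.ofReal (Real.exp (-σ)) := by
    refine spectralRadius_exp_lt (-M1c) fun lam hdet => ?_
    have h2 : (lam • (1 : Matrix (Fin k) (Fin k) ℂ) - -M1c)
        = -(((-lam) • (1 : Matrix (Fin k) (Fin k) ℂ)) - M1c) := by
      rw [sub_neg_eq_add, neg_smul, neg_sub, sub_neg_eq_add, add_comm]
    rw [h2, Matrix.det_neg, mul_eq_zero] at hdet
    have hdet2 : (((-lam) • (1 : Matrix (Fin k) (Fin k) ℂ)) - M1c).det = 0 := by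
      rcases hdet with h | h
      · exact absurd h (by simp)
      · exact h
    have := (hM1 (-lam) (hroot M1 (-lam) hdet2)).1
    have hre : (-lam).re = -lam.re := by simp
    rw [hre] at this
    linarith
  obtain ⟨r2, hr2pos, hρ2', hr2⟩ := exists_between_ofReal hρ2
  obtain ⟨r1, hr1pos, hρ1', hr1⟩ := exists_between_ofReal hρ1
  have hr12 : r2 * r1 < 1 := by
    have := mul_lt_mul'' hr2 hr1 hr2pos.le hr1pos.le
    rwa [← Real.exp_add, add_neg_cancel, Real.exp_zero] at this
  -- K is invertible over ℂ
  have hKc : IsUnit Kc := by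
    rw [Matrix.isUnit_iff_isUnit_det] at hK ⊢
    have h := hK.map (algebraMap ℝ ℂ)
    rwa [RingHom.map_det, RingHom.mapMatrix_apply] at h
  set u : (Matrix (Fin k) (Fin k) ℂ)ˣ := hKc.unit with hu
  set E2 : Matrix (Fin k) (Fin k) ℂ := exp M2c with hE2
  set E1 : Matrix (Fin k) (Fin k) ℂ := exp (-M1c) with hE1
  set C : ℝ := ‖(↑u⁻¹ : Matrix (Fin k) (Fin k) ℂ)‖ * ‖Kc‖ with hC
  have htendC : Tendsto (fun n : ℕ => (r2 * r1) ^ n * C) atTop (𝓝 0) := by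
    simpa using
      (tendsto_pow_atTop_nhds_zero_of_lt_one (by positivity) hr12).mul_const C
  have hev : ∀ᶠ n : ℕ in atTop, (r2 * r1) ^ n * C < 1 :=
    htendC.eventually_lt_const one_pos
  obtain ⟨N, hN2, hN1, hNev⟩ :=
    ((eventually_norm_pow_le hρ2').and ((eventually_norm_pow_le hρ1').and hev)).exists
  -- invertibility of `Kc - E2^N * Kc * E1^N`
  have hunit : IsUnit (Kc - E2 ^ N * Kc * E1 ^ N) := by
    set t : Matrix (Fin k) (Fin k) ℂ := (↑u⁻¹ : Matrix (Fin k) (Fin k) ℂ) * (E2 ^ N * Kc * E1 ^ N)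
      with htdef
    have hnt : ‖t‖ < 1 := by
      have hb : ‖E2 ^ N * Kc * E1 ^ N‖ ≤ ‖E2 ^ N‖ * ‖Kc‖ * ‖E1 ^ N‖ := by
        calc ‖E2 ^ N * Kc * E1 ^ N‖ ≤ ‖E2 ^ N * Kc‖ * ‖E1 ^ N‖ := norm_mul_le _ _
          _ ≤ ‖E2 ^ N‖ * ‖Kc‖ * ‖E1 ^ N‖ := by
              have := norm_mul_le (E2 ^ N) Kc
              exact mul_le_mul_of_nonneg_right this (norm_nonneg _)
      calc ‖t‖ ≤ ‖(↑u⁻¹ : Matrix (Fin k) (Fin k) ℂ)‖ * ‖E2 ^ N * Kc * E1 ^ N‖ := norm_mul_le _ _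
        _ ≤ ‖(↑u⁻¹ : Matrix (Fin k) (Fin k) ℂ)‖ * (‖E2 ^ N‖ * ‖Kc‖ * ‖E1 ^ N‖) :=
            mul_le_mul_of_nonneg_left hb (norm_nonneg _)
        _ ≤ ‖(↑u⁻¹ : Matrix (Fin k) (Fin k) ℂ)‖ * (r2 ^ N * ‖Kc‖ * r1 ^ N) := by
            gcongr
        _ = (r2 * r1) ^ N * C := by rw [hC, mul_pow]; ring
        _ < 1 := hNev
    have hsplit : Kc - E2 ^ N * Kc * E1 ^ N
        = (↑u : Matrix (Fin k) (Fin k) ℂ) * (1 - t) := by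
      rw [mul_sub, mul_one, htdef, Units.mul_inv_cancel_left, hu, IsUnit.unit_spec]
    rw [hsplit]
    exact u.isUnit.mul (Units.oneSub t hnt).isUnit
  -- transfer to the real determinant function
  set g : ℝ → ℝ := fun τ => (K - exp (τ • M2) * K * exp (-(τ • M1))).det with hg
  have hφc : Continuous fun M : Matrix (Fin k) (Fin k) ℝ => M.map (algebraMap ℝ ℂ) := by
    have : Continuous (⇑(algebraMap ℝ ℂ)) := Complex.continuous_ofReal
    exact continuous_id.matrix_map this
  set φ : Matrix (Fin k) (Fin k) ℝ →+* Matrix (Fin k) (Fin k) ℂ :=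
    (algebraMap ℝ ℂ).mapMatrix with hφdef
  have hφc' : Continuous φ := by
    exact hφc
  have hφ_apply : ∀ M : Matrix (Fin k) (Fin k) ℝ, φ M = M.map (algebraMap ℝ ℂ) := fun M =>
    RingHom.mapMatrix_apply _ _
  have hkey : φ (K - exp ((N : ℝ) • M2) * K * exp (-((N : ℝ) • M1)))
      = Kc - E2 ^ N * Kc * E1 ^ N := by
    have h2 : φ (exp ((N : ℝ) • M2)) = E2 ^ N := by
      rw [show φ (exp ((N : ℝ) • M2)) = exp (φ ((N : ℝ) • M2)) from map_exp φ hφc' _,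
        Nat.cast_smul_eq_nsmul ℝ N M2, map_nsmul]
      have : φ M2 = M2c := hφ_apply M2
      rw [this, Matrix.exp_nsmul]
    have h1 : φ (exp (-((N : ℝ) • M1))) = E1 ^ N := by
      have hrw : -((N : ℝ) • M1) = (N : ℕ) • (-M1) := by
        rw [Nat.cast_smul_eq_nsmul ℝ N M1, ← smul_neg]
      rw [hrw, show φ (exp ((N : ℕ) • (-M1))) = exp (φ ((N : ℕ) • (-M1))) from map_exp φ hφc' _,
        map_nsmul]
      have : φ (-M1) = -M1c := by rw [map_neg, hφ_apply M1]
      rw [this, Matrix.exp_nsmul]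
    rw [map_sub, map_mul, map_mul, h2, h1, hφ_apply K]
  have hgN : g N ≠ 0 := by
    have h1 : IsUnit (φ (K - exp ((N : ℝ) • M2) * K * exp (-((N : ℝ) • M1)))) := by
      rw [hkey]; exact hunit
    have h2 := (Matrix.isUnit_iff_isUnit_det _).mp h1
    rw [hφdef, ← RingHom.map_det] at h2
    intro h0
    have h0' : (K - exp ((N : ℝ) • M2) * K * exp (-((N : ℝ) • M1))).det = 0 := h0
    rw [h0', map_zero] at h2
    exact not_isUnit_zero h2
  -- analyticity of `g`
  have hexp_aux : ∀ M : Matrix (Fin k) (Fin k) ℝ,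
      AnalyticOnNhd ℝ (fun τ : ℝ => exp (τ • M)) Set.univ := by
    intro M x _
    have hlin : AnalyticAt ℝ (fun τ : ℝ => τ • M) x :=
      (ContinuousLinearMap.toSpanSingleton ℝ M).analyticAt x
    exact AnalyticAt.comp (f := fun τ : ℝ => τ • M) (exp_analytic (𝕂 := ℝ) (x • M)) hlin
  have hl2 : AnalyticOnNhd ℝ (fun τ : ℝ => exp (τ • M2)) Set.univ := hexp_aux M2
  have hl1 : AnalyticOnNhd ℝ (fun τ : ℝ => exp (-(τ • M1))) Set.univ := by
    have hrw : (fun τ : ℝ => exp (-(τ • M1))) = fun τ : ℝ => exp (τ • (-M1)) := by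
      funext τ; rw [smul_neg]
    rw [hrw]
    exact hexp_aux (-M1)
  have hF : AnalyticOnNhd ℝ
      (fun τ : ℝ => K - exp (τ • M2) * K * exp (-(τ • M1))) Set.univ := by
    intro x hx
    exact (analyticAt_const).sub
      (((hl2 x hx).mul analyticAt_const).mul (hl1 x hx))
  have hdetA : AnalyticOnNhd ℝ (fun M : Matrix (Fin k) (Fin k) ℝ => M.det) Set.univ := by
    have hrw : (fun M : Matrix (Fin k) (Fin k) ℝ => M.det)
        = fun M : Matrix (Fin k) (Fin k) ℝ =>
          ∑ p : Equiv.Perm (Fin k), (Equiv.Perm.sign p : ℝ) * ∏ i, M (p i) i := by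
      funext M; rw [Matrix.det_apply']
    rw [hrw]
    apply Finset.analyticOnNhd_fun_sum
    intro p _
    apply AnalyticOnNhd.mul analyticOnNhd_const
    apply Finset.analyticOnNhd_fun_prod
    intro i _
    intro M _
    let L : Matrix (Fin k) (Fin k) ℝ →ₗ[ℝ] ℝ :=
      { toFun := fun M => M (p i) i
        map_add' := fun _ _ => rfl
        map_smul' := fun _ _ => rfl }
    let Lc : Matrix (Fin k) (Fin k) ℝ →L[ℝ] ℝ := ⟨L, L.continuous_of_finiteDimensional⟩
    exact Lc.analyticAt M
  have hgA : AnalyticOnNhd ℝ g Set.univ := hdetA.comp hF (Set.mapsTo_univ _ _)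
  -- isolated zeros
  rcases (hgA 0 trivial).eventually_eq_zero_or_eventually_ne_zero with hz | hnz
  · exfalso
    have := hgA.eqOn_zero_of_preconnected_of_eventuallyEq_zero isPreconnected_univ
      (Set.mem_univ 0) hz
    exact hgN (this (Set.mem_univ (N : ℝ)))
  · rw [eventually_nhdsWithin_iff] at hnz
    obtain ⟨ε, hε, hball⟩ := Metric.eventually_nhds_iff.mp hnz
    refine ⟨ε, hε, fun τ hτ0 hτε => ?_⟩
    have hτd : dist τ 0 < ε := by
      rw [Real.dist_eq, sub_zero, abs_of_pos hτ0]; exact hτε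
    have hne : g τ ≠ 0 := hball hτd (by simpa using hτ0.ne')
    exact (Matrix.isUnit_iff_isUnit_det _).mpr (isUnit_iff_ne_zero.mpr hne)
end
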